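/- arXiv:1005.0451 — 15 statements merged into one kernel-verified Lean document; each statement's English description precedes it below -/
import Mathlib

section
/- Let f : I° ⊆ ℝ → ℝ be a twice differentiable function on I°, the interior of an interval I, and let a, b ∈ I° with a < b. If f'' is Lebesgue integrable on [a,b], then (1/(b-a)) ∫_a^b f(x) dx − f((a+b)/2) = ((b-a)²/4) ∫_0^1 m(t) [f''(t·a + (1-t)·b) + f''(t·b + (1-t)·a)] dt, where m(t) = t² for t ∈ [0, 1/2) and m(t) = (1-t)² for t ∈ [1/2, 1]. -/
open MeasureTheory Set

lemma ibp_aux (g g' g'' : ℝ → ℝ)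
    (hg1 : ∀ t ∈ Set.uIcc (0:ℝ) (1/2), HasDerivAt g (g' t) t)
    (hg2 : ∀ t ∈ Set.uIcc (0:ℝ) (1/2), HasDerivAt g' (g'' t) t)
    (hi : IntervalIntegrable g'' volume 0 (1/2)) :
    ∫ t in (0:ℝ)..(1/2), t ^ 2 * g'' t
      = 1 / 4 * g' (1/2) - g (1/2) + 2 * ∫ t in (0:ℝ)..(1/2), g t := by
  have hg'int : IntervalIntegrable g' volume 0 (1/2) :=
    (ContinuousOn.intervalIntegrable fun t ht => ((hg2 t ht).continuousAt).continuousWithinAt)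
  have h2t : ∀ t ∈ Set.uIcc (0:ℝ) (1/2), HasDerivAt (fun t : ℝ => t ^ 2) (2 * t) t := by
    intro t _; simpa using hasDerivAt_pow 2 t
  have h2 : ∀ t ∈ Set.uIcc (0:ℝ) (1/2), HasDerivAt (fun t : ℝ => 2 * t) 2 t := by
    intro t _; simpa using (hasDerivAt_id t).const_mul 2
  have step1 := intervalIntegral.integral_mul_deriv_eq_deriv_mul h2t hg2
    (by apply ContinuousOn.intervalIntegrable; fun_prop) hi
  have step2 := intervalIntegral.integral_mul_deriv_eq_deriv_mul h2 hg1
    ((continuous_const (y := (2:ℝ))).continuousOn.intervalIntegrable) hg'int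
  rw [step1, step2, intervalIntegral.integral_const_mul]
  ring

theorem hermite_hadamard_second_deriv_identity
    (I : Set ℝ) (hI : I.OrdConnected) (f f' f'' : ℝ → ℝ) (a b : ℝ)
    (ha : a ∈ interior I) (hb : b ∈ interior I) (hab : a < b)
    (hderiv1 : ∀ x ∈ interior I, HasDerivAt f (f' x) x)
    (hderiv2 : ∀ x ∈ interior I, HasDerivAt f' (f'' x) x)
    (hint : IntervalIntegrable f'' volume a b) :
    (1 / (b - a)) * (∫ x in a..b, f x) - f ((a + b) / 2) =
      (b - a) ^ 2 / 4 *
        ∫ t in (0:ℝ)..1,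
          (if t < 1 / 2 then t ^ 2 else (1 - t) ^ 2) *
            (f'' (t * a + (1 - t) * b) + f'' (t * b + (1 - t) * a)) := by
  set c := b - a with hcdef
  have hc : (0:ℝ) < c := sub_pos.2 hab
  have hcne : c ≠ 0 := ne_of_gt hc
  have hsub : Set.Icc a b ⊆ interior I := hI.interior.out ha hb
  have huicc : Set.uIcc (0:ℝ) (1/2) = Set.Icc (0:ℝ) (1/2) := uIcc_of_le (by norm_num)
  -- memberships
  have hmemA : ∀ t ∈ Set.uIcc (0:ℝ) (1/2), c * t + a ∈ interior I := by
    intro t ht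
    rw [huicc] at ht
    apply hsub
    constructor
    · nlinarith [ht.1, ht.2]
    · nlinarith [ht.1, ht.2]
  have hmemB : ∀ t ∈ Set.uIcc (0:ℝ) (1/2), b - c * t ∈ interior I := by
    intro t ht
    rw [huicc] at ht
    apply hsub
    constructor
    · nlinarith [ht.1, ht.2]
    · nlinarith [ht.1, ht.2]
  -- integrability of the composed second derivatives on [0,1]
  have iA : IntervalIntegrable (fun t => f'' (c * t + a)) volume 0 1 := by
    have h := (hint.comp_add_right a).comp_mul_left (c := c)
    rw [sub_self, zero_div, hcdef] at h
    rw [div_self (sub_ne_zero.2 (ne_of_gt hab))] at h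
    exact h
  have iB : IntervalIntegrable (fun t => f'' (b - c * t)) volume 0 1 := by
    have h := ((hint.comp_sub_left b).comp_mul_left (c := c)).symm
    rw [sub_self, zero_div, hcdef] at h
    rw [div_self (sub_ne_zero.2 (ne_of_gt hab))] at h
    exact h
  have hss : Set.uIcc (0:ℝ) (1/2) ⊆ Set.uIcc (0:ℝ) 1 :=
    uIcc_subset_uIcc left_mem_uIcc (by rw [uIcc_of_le (by norm_num : (0:ℝ) ≤ 1)]; constructor <;> norm_num)
  have iA2 : IntervalIntegrable (fun t => f'' (c * t + a)) volume 0 (1/2) := iA.mono_set hss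
  have iB2 : IntervalIntegrable (fun t => f'' (b - c * t)) volume 0 (1/2) := iB.mono_set hss
  -- derivatives of composed functions
  have hgA1 : ∀ t ∈ Set.uIcc (0:ℝ) (1/2), HasDerivAt (fun t => f (c * t + a)) (c * f' (c * t + a)) t := by
    intro t ht
    have haff : HasDerivAt (fun t : ℝ => c * t + a) c t := by
      simpa using ((hasDerivAt_id t).const_mul c).add_const a
    have := (hderiv1 _ (hmemA t ht)).comp t haff
    simpa [mul_comm, Function.comp_def] using this
  have hgA2 : ∀ t ∈ Set.uIcc (0:ℝ) (1/2),
      HasDerivAt (fun t => c * f' (c * t + a)) (c ^ 2 * f'' (c * t + a)) t := by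
    intro t ht
    have haff : HasDerivAt (fun t : ℝ => c * t + a) c t := by
      simpa using ((hasDerivAt_id t).const_mul c).add_const a
    have := ((hderiv2 _ (hmemA t ht)).comp t haff).const_mul c
    convert this using 1
    all_goals first | rfl | ring
  have haffB : ∀ t : ℝ, HasDerivAt (fun t : ℝ => b - c * t) (-c) t := by
    intro t
    simpa using ((hasDerivAt_id t).const_mul c).const_sub b
  have haffA : ∀ t : ℝ, HasDerivAt (fun t : ℝ => c * t + a) c t := by
    intro t
    simpa using ((hasDerivAt_id t).const_mul c).add_const a
  have hgB1 : ∀ t ∈ Set.uIcc (0:ℝ) (1/2), HasDerivAt (fun t => f (b - c * t)) (-c * f' (b - c * t)) t := by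
    intro t ht
    have := (hderiv1 _ (hmemB t ht)).comp t (haffB t)
    convert this using 1
    all_goals first | rfl | ring
  have hgB2 : ∀ t ∈ Set.uIcc (0:ℝ) (1/2),
      HasDerivAt (fun t => -c * f' (b - c * t)) (c ^ 2 * f'' (b - c * t)) t := by
    intro t ht
    have := ((hderiv2 _ (hmemB t ht)).comp t (haffB t)).const_mul (-c)
    convert this using 1
    all_goals first | rfl | ring
  -- apply integration by parts
  have EA := ibp_aux (fun t => f (c * t + a)) (fun t => c * f' (c * t + a))
    (fun t => c ^ 2 * f'' (c * t + a)) hgA1 hgA2 (iA2.const_mul _)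
  have EB := ibp_aux (fun t => f (b - c * t)) (fun t => -c * f' (b - c * t))
    (fun t => c ^ 2 * f'' (b - c * t)) hgB1 hgB2 (iB2.const_mul _)
  have hmidA : c * (1/2) + a = (a + b) / 2 := by rw [hcdef]; ring
  have hmidB : b - c * (1/2) = (a + b) / 2 := by rw [hcdef]; ring
  beta_reduce at EA EB
  rw [hmidA] at EA
  rw [hmidB] at EB
  -- substitution for the integrals of f
  have JA : (∫ t in (0:ℝ)..(1/2), f (c * t + a)) = c⁻¹ * ∫ x in a..(a + b)/2, f x := by
    rw [intervalIntegral.integral_comp_mul_add f hcne a, smul_eq_mul]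
    norm_num [hmidA]
  have JB : (∫ t in (0:ℝ)..(1/2), f (b - c * t)) = c⁻¹ * ∫ x in ((a + b)/2)..b, f x := by
    have : ∀ t : ℝ, b - c * t = -c * t + b := fun t => by ring
    simp_rw [this]
    rw [intervalIntegral.integral_comp_mul_add f (neg_ne_zero.2 hcne) b, smul_eq_mul]
    have h1 : -c * 0 + b = b := by ring
    have h2 : -c * (1/2) + b = (a + b)/2 := by rw [hcdef]; ring
    rw [h1, h2, intervalIntegral.integral_symm]
    field_simp
  rw [JA] at EA
  rw [JB] at EB
  -- adjacent intervals for f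
  have hfc : ContinuousOn f (Set.Icc a b) :=
    fun x hx => ((hderiv1 x (hsub hx)).continuousAt).continuousWithinAt
  have hmid_mem : (a + b)/2 ∈ Set.Icc a b := ⟨by linarith, by linarith⟩
  have if1 : IntervalIntegrable f volume a ((a + b)/2) :=
    (hfc.mono (by
      rw [uIcc_of_le (by linarith : a ≤ (a+b)/2)]
      exact Icc_subset_Icc le_rfl hmid_mem.2)).intervalIntegrable
  have if2 : IntervalIntegrable f volume ((a + b)/2) b :=
    (hfc.mono (by
      rw [uIcc_of_le (by linarith : (a+b)/2 ≤ b)]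
      exact Icc_subset_Icc hmid_mem.1 le_rfl)).intervalIntegrable
  have Jsum : (∫ x in a..(a + b)/2, f x) + (∫ x in ((a + b)/2)..b, f x) = ∫ x in a..b, f x :=
    intervalIntegral.integral_add_adjacent_intervals if1 if2
  -- now massage the RHS integral
  set S : ℝ → ℝ := fun t => f'' (b - c * t) + f'' (c * t + a) with hS
  have iS : IntervalIntegrable S volume 0 1 := iB.add iA
  have hss2 : Set.uIcc (1/2 : ℝ) 1 ⊆ Set.uIcc (0:ℝ) 1 := by
    apply uIcc_subset_uIcc <;> rw [uIcc_of_le (by norm_num : (0:ℝ) ≤ 1)] <;> constructor <;> norm_num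
  have key1 : Set.EqOn
      (fun t => (if t < 1 / 2 then t ^ 2 else (1 - t) ^ 2) *
        (f'' (t * a + (1 - t) * b) + f'' (t * b + (1 - t) * a)))
      (fun t => t ^ 2 * S t) (Set.uIcc (0:ℝ) (1/2)) := by
    intro t ht
    rw [huicc] at ht
    have h1 : t * a + (1 - t) * b = b - c * t := by rw [hcdef]; ring
    have h2 : t * b + (1 - t) * a = c * t + a := by rw [hcdef]; ring
    simp only [hS, h1, h2]
    by_cases h : t < 1/2
    · rw [if_pos h]
    · have ht2 : t = 1/2 := le_antisymm ht.2 (not_lt.1 h)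
      subst ht2
      norm_num
  have key2 : Set.EqOn
      (fun t => (if t < 1 / 2 then t ^ 2 else (1 - t) ^ 2) *
        (f'' (t * a + (1 - t) * b) + f'' (t * b + (1 - t) * a)))
      (fun t => (1 - t) ^ 2 * S t) (Set.uIcc (1/2 : ℝ) 1) := by
    intro t ht
    rw [uIcc_of_le (by norm_num : (1/2:ℝ) ≤ 1)] at ht
    have h1 : t * a + (1 - t) * b = b - c * t := by rw [hcdef]; ring
    have h2 : t * b + (1 - t) * a = c * t + a := by rw [hcdef]; ring
    simp only [hS, h1, h2]
    rw [if_neg (not_lt.2 ht.1)]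
  have hcontsq : ContinuousOn (fun t : ℝ => t ^ 2) (Set.uIcc (0:ℝ) (1/2)) := by fun_prop
  have iP1 : IntervalIntegrable (fun t => t ^ 2 * S t) volume 0 (1/2) :=
    (iS.mono_set hss).continuousOn_mul hcontsq
  have iP2 : IntervalIntegrable (fun t => (1 - t) ^ 2 * S t) volume (1/2) 1 :=
    (iS.mono_set hss2).continuousOn_mul (by fun_prop)
  have iK1 : IntervalIntegrable
      (fun t => (if t < 1 / 2 then t ^ 2 else (1 - t) ^ 2) *
        (f'' (t * a + (1 - t) * b) + f'' (t * b + (1 - t) * a))) volume 0 (1/2) := by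
    apply iP1.congr_ae
    filter_upwards [ae_restrict_mem measurableSet_uIoc] with t ht
    exact (key1 (Set.uIoc_subset_uIcc ht)).symm
  have iK2 : IntervalIntegrable
      (fun t => (if t < 1 / 2 then t ^ 2 else (1 - t) ^ 2) *
        (f'' (t * a + (1 - t) * b) + f'' (t * b + (1 - t) * a))) volume (1/2) 1 := by
    apply iP2.congr_ae
    filter_upwards [ae_restrict_mem measurableSet_uIoc] with t ht
    exact (key2 (Set.uIoc_subset_uIcc ht)).symm
  rw [← intervalIntegral.integral_add_adjacent_intervals iK1 iK2]
  rw [intervalIntegral.integral_congr key1, intervalIntegral.integral_congr key2]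
  -- fold the second half onto the first
  have R2b : (∫ t in (1/2:ℝ)..1, (1 - t) ^ 2 * S t) = ∫ t in (0:ℝ)..(1/2), t ^ 2 * S t := by
    have φdef : ∀ t : ℝ, (fun s : ℝ => s ^ 2 * S (1 - s)) (1 - t) = (1 - t) ^ 2 * S t := by
      intro t
      simp only
      rw [sub_sub_cancel]
    rw [intervalIntegral.integral_congr (g := fun t => (fun s : ℝ => s ^ 2 * S (1 - s)) (1 - t))
      (fun t _ => (φdef t).symm)]
    rw [intervalIntegral.integral_comp_sub_left (fun s : ℝ => s ^ 2 * S (1 - s)) 1]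
    have e0 : (1:ℝ) - 1 = 0 := by norm_num
    have e1 : (1:ℝ) - 1/2 = 1/2 := by norm_num
    rw [e0, e1]
    apply intervalIntegral.integral_congr
    intro s _
    simp only
    have hsymm : S (1 - s) = S s := by
      simp only [hS]
      have d1 : b - c * (1 - s) = c * s + a := by rw [hcdef]; ring
      have d2 : c * (1 - s) + a = b - c * s := by rw [hcdef]; ring
      rw [d1, d2, add_comm]
    rw [hsymm]
  rw [R2b]
  -- split the integrand sum
  have Ssplit : (∫ t in (0:ℝ)..(1/2), t ^ 2 * S t)
      = (∫ t in (0:ℝ)..(1/2), t ^ 2 * f'' (b - c * t))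
        + ∫ t in (0:ℝ)..(1/2), t ^ 2 * f'' (c * t + a) := by
    rw [← intervalIntegral.integral_add (iB2.continuousOn_mul hcontsq)
      (iA2.continuousOn_mul hcontsq)]
    apply intervalIntegral.integral_congr
    intro t _
    simp only [hS]
    ring
  rw [Ssplit]
  -- pull out constants in EA, EB
  have EAc : (∫ t in (0:ℝ)..(1/2), t ^ 2 * (c ^ 2 * f'' (c * t + a)))
      = c ^ 2 * ∫ t in (0:ℝ)..(1/2), t ^ 2 * f'' (c * t + a) := by
    rw [← intervalIntegral.integral_const_mul]
    apply intervalIntegral.integral_congr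
    intro t _
    ring
  have EBc : (∫ t in (0:ℝ)..(1/2), t ^ 2 * (c ^ 2 * f'' (b - c * t)))
      = c ^ 2 * ∫ t in (0:ℝ)..(1/2), t ^ 2 * f'' (b - c * t) := by
    rw [← intervalIntegral.integral_const_mul]
    apply intervalIntegral.integral_congr
    intro t _
    ring
  rw [EAc] at EA
  rw [EBc] at EB
  rw [← Jsum]
  set IA := ∫ t in (0:ℝ)..(1/2), t ^ 2 * f'' (c * t + a)
  set IB := ∫ t in (0:ℝ)..(1/2), t ^ 2 * f'' (b - c * t)
  set T1 := ∫ x in a..(a + b)/2, f x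
  set T2 := ∫ x in ((a + b)/2)..b, f x
  have hfinal : c ^ 2 * IA + c ^ 2 * IB = -2 * f ((a + b)/2) + 2 * (c⁻¹ * (T1 + T2)) := by
    rw [EA, EB]
    ring
  have hgoal : c ^ 2 / 4 * (IB + IA + (IB + IA)) = (c ^ 2 * IA + c ^ 2 * IB) / 2 := by ring
  rw [hgoal, hfinal]
  field_simp
  ring
end

section
/- Let f : I ⊆ ℝ → ℝ be twice differentiable on the interior I° of I, with a, b ∈ I°, a < b, and f'' Lebesgue integrable on [a,b]. If |f''| is convex on [a,b], then |(1/(b-a)) ∫_a^b f(x) dx − f((a+b)/2)| ≤ ((b-a)²/24) · (|f''(a)| + |f''(b)|)/2. -/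
open MeasureTheory intervalIntegral

theorem hermite_hadamard_second_deriv_abs_convex
    (I : Set ℝ) (hI : I.OrdConnected) (f f' f'' : ℝ → ℝ) (a b : ℝ)
    (ha : a ∈ interior I) (hb : b ∈ interior I) (hab : a < b)
    (hderiv1 : ∀ x ∈ interior I, HasDerivAt f (f' x) x)
    (hderiv2 : ∀ x ∈ interior I, HasDerivAt f' (f'' x) x)
    (hint : IntervalIntegrable f'' volume a b)
    (hconv : ConvexOn ℝ (Set.Icc a b) (fun x => |f'' x|)) :
    |(1 / (b - a)) * (∫ x in a..b, f x) - f ((a + b) / 2)| ≤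
      (b - a) ^ 2 / 24 * ((|f'' a| + |f'' b|) / 2) := by
  have hIcc : Set.Icc a b ⊆ interior I := hI.interior.out ha hb
  set m : ℝ := (a + b) / 2 with hm
  have ham : a ≤ m := by rw [hm]; linarith
  have hmb : m ≤ b := by rw [hm]; linarith
  have hpos : (0:ℝ) < b - a := by linarith
  have hmem1 : ∀ x ∈ Set.uIcc a m, x ∈ interior I := by
    intro x hx
    rw [Set.uIcc_of_le ham] at hx
    exact hIcc ⟨hx.1, hx.2.trans hmb⟩
  have hmem2 : ∀ x ∈ Set.uIcc m b, x ∈ interior I := by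
    intro x hx
    rw [Set.uIcc_of_le hmb] at hx
    exact hIcc ⟨ham.trans hx.1, hx.2⟩
  have hmemab : ∀ x ∈ Set.uIcc a b, x ∈ interior I := by
    intro x hx
    rw [Set.uIcc_of_le hab.le] at hx
    exact hIcc hx
  -- continuity / integrability
  have hcf : ContinuousOn f (Set.uIcc a b) := fun x hx =>
    (hderiv1 x (hmemab x hx)).continuousAt.continuousWithinAt
  have hcf' : ContinuousOn f' (Set.uIcc a b) := fun x hx =>
    (hderiv2 x (hmemab x hx)).continuousAt.continuousWithinAt
  have hintf : IntervalIntegrable f volume a b := hcf.intervalIntegrable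
  have hintf1 : IntervalIntegrable f volume a m :=
    hintf.mono_set (by rw [Set.uIcc_of_le ham, Set.uIcc_of_le hab.le]; exact Set.Icc_subset_Icc le_rfl hmb)
  have hintf2 : IntervalIntegrable f volume m b :=
    hintf.mono_set (by rw [Set.uIcc_of_le hmb, Set.uIcc_of_le hab.le]; exact Set.Icc_subset_Icc ham le_rfl)
  have hintf'1 : IntervalIntegrable f' volume a m :=
    (hcf'.mono (by rw [Set.uIcc_of_le ham, Set.uIcc_of_le hab.le]; exact Set.Icc_subset_Icc le_rfl hmb)).intervalIntegrable
  have hintf'2 : IntervalIntegrable f' volume m b :=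
    (hcf'.mono (by rw [Set.uIcc_of_le hmb, Set.uIcc_of_le hab.le]; exact Set.Icc_subset_Icc ham le_rfl)).intervalIntegrable
  have hint1 : IntervalIntegrable f'' volume a m :=
    hint.mono_set (by rw [Set.uIcc_of_le ham, Set.uIcc_of_le hab.le]; exact Set.Icc_subset_Icc le_rfl hmb)
  have hint2 : IntervalIntegrable f'' volume m b :=
    hint.mono_set (by rw [Set.uIcc_of_le hmb, Set.uIcc_of_le hab.le]; exact Set.Icc_subset_Icc ham le_rfl)
  -- derivative building blocks
  have hda : ∀ x : ℝ, HasDerivAt (fun y : ℝ => y - a) 1 x := fun x => (hasDerivAt_id x).sub_const a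
  have hdb : ∀ x : ℝ, HasDerivAt (fun y : ℝ => y - b) 1 x := fun x => (hasDerivAt_id x).sub_const b
  -- integration by parts on [a, m]
  have ibp1 : ∫ x in a..m, (x - a) ^ 2 / 2 * f'' x =
      (m - a) ^ 2 / 2 * f' m - (a - a) ^ 2 / 2 * f' a - ∫ x in a..m, (x - a) * f' x := by
    apply intervalIntegral.integral_mul_deriv_eq_deriv_mul
      (u := fun x => (x - a) ^ 2 / 2) (u' := fun x => x - a) (v := f') (v' := f'')
    · intro x _
      have := ((hda x).pow 2).div_const 2
      refine this.congr_deriv ?_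
      ring
    · intro x hx; exact hderiv2 x (hmem1 x hx)
    · exact (continuous_id.sub continuous_const).intervalIntegrable a m
    · exact hint1
  have ibp2 : ∫ x in a..m, (x - a) * f' x =
      (m - a) * f m - (a - a) * f a - ∫ x in a..m, 1 * f x := by
    apply intervalIntegral.integral_mul_deriv_eq_deriv_mul
      (u := fun x => x - a) (u' := fun _ => (1:ℝ)) (v := f) (v' := f')
    · intro x _; exact hda x
    · intro x hx; exact hderiv1 x (hmem1 x hx)
    · exact intervalIntegrable_const
    · exact hintf'1
  -- integration by parts on [m, b]
  have ibp3 : ∫ x in m..b, (x - b) ^ 2 / 2 * f'' x =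
      (b - b) ^ 2 / 2 * f' b - (m - b) ^ 2 / 2 * f' m - ∫ x in m..b, (x - b) * f' x := by
    apply intervalIntegral.integral_mul_deriv_eq_deriv_mul
      (u := fun x => (x - b) ^ 2 / 2) (u' := fun x => x - b) (v := f') (v' := f'')
    · intro x _
      have := ((hdb x).pow 2).div_const 2
      refine this.congr_deriv ?_
      ring
    · intro x hx; exact hderiv2 x (hmem2 x hx)
    · exact (continuous_id.sub continuous_const).intervalIntegrable m b
    · exact hint2
  have ibp4 : ∫ x in m..b, (x - b) * f' x =
      (b - b) * f b - (m - b) * f m - ∫ x in m..b, 1 * f x := by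
    apply intervalIntegral.integral_mul_deriv_eq_deriv_mul
      (u := fun x => x - b) (u' := fun _ => (1:ℝ)) (v := f) (v' := f')
    · intro x _; exact hdb x
    · intro x hx; exact hderiv1 x (hmem2 x hx)
    · exact intervalIntegrable_const
    · exact hintf'2
  have hsplit : (∫ x in a..m, f x) + ∫ x in m..b, f x = ∫ x in a..b, f x :=
    integral_add_adjacent_intervals hintf1 hintf2
  have hone1 : ∫ x in a..m, 1 * f x = ∫ x in a..m, f x := by simp
  have hone2 : ∫ x in m..b, 1 * f x = ∫ x in m..b, f x := by simp
  -- the key identity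
  have key : (∫ x in a..b, f x) - (b - a) * f m =
      (∫ x in a..m, (x - a) ^ 2 / 2 * f'' x) + ∫ x in m..b, (x - b) ^ 2 / 2 * f'' x := by
    rw [ibp1, ibp3, ibp2, ibp4, hone1, hone2, ← hsplit]
    have hsq : (m - a) ^ 2 = (m - b) ^ 2 := by rw [hm]; ring
    rw [hsq]
    ring
  set A := |f'' a| with hA
  set B := |f'' b| with hB
  have hA0 : 0 ≤ A := abs_nonneg _
  have hB0 : 0 ≤ B := abs_nonneg _
  -- convexity bound
  have hbound : ∀ x ∈ Set.Icc a b, |f'' x| ≤ (b - x) / (b - a) * A + (x - a) / (b - a) * B := by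
    intro x hx
    have ht : (0:ℝ) ≤ (b - x) / (b - a) := div_nonneg (by linarith [hx.2]) hpos.le
    have hs : (0:ℝ) ≤ (x - a) / (b - a) := div_nonneg (by linarith [hx.1]) hpos.le
    have hts : (b - x) / (b - a) + (x - a) / (b - a) = 1 := by rw [← add_div, div_eq_one_iff_eq hpos.ne']; ring
    have := hconv.2 (Set.left_mem_Icc.2 hab.le) (Set.right_mem_Icc.2 hab.le) ht hs hts
    have hxeq : (b - x) / (b - a) * a + (x - a) / (b - a) * b = x := by
      field_simp; ring
    simpa [smul_eq_mul, hxeq, hA, hB] using this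
  -- the comparison polynomials
  set g₁ : ℝ → ℝ := fun x => (x - a) ^ 2 / 2 * ((b - x) / (b - a) * A + (x - a) / (b - a) * B) with hg₁
  set g₂ : ℝ → ℝ := fun x => (x - b) ^ 2 / 2 * ((b - x) / (b - a) * A + (x - a) / (b - a) * B) with hg₂
  have hg₁c : Continuous g₁ := by rw [hg₁]; fun_prop
  have hg₂c : Continuous g₂ := by rw [hg₂]; fun_prop
  -- integrability of kernels times f''
  have hk1 : IntervalIntegrable (fun x => (x - a) ^ 2 / 2 * f'' x) volume a m :=
    hint1.continuousOn_mul (by fun_prop)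
  have hk2 : IntervalIntegrable (fun x => (x - b) ^ 2 / 2 * f'' x) volume m b :=
    hint2.continuousOn_mul (by fun_prop)
  -- pointwise bounds and monotone integral estimates
  have est1 : |∫ x in a..m, (x - a) ^ 2 / 2 * f'' x| ≤ ∫ x in a..m, g₁ x := by
    refine (intervalIntegral.abs_integral_le_integral_abs ham).trans ?_
    refine intervalIntegral.integral_mono_on ham hk1.abs (hg₁c.intervalIntegrable a m) ?_
    intro x hx
    have hxab : x ∈ Set.Icc a b := ⟨hx.1, hx.2.trans hmb⟩
    rw [abs_mul, abs_of_nonneg (by positivity : (0:ℝ) ≤ (x - a) ^ 2 / 2)]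
    exact mul_le_mul_of_nonneg_left (hbound x hxab) (by positivity)
  have est2 : |∫ x in m..b, (x - b) ^ 2 / 2 * f'' x| ≤ ∫ x in m..b, g₂ x := by
    refine (intervalIntegral.abs_integral_le_integral_abs hmb).trans ?_
    refine intervalIntegral.integral_mono_on hmb hk2.abs (hg₂c.intervalIntegrable m b) ?_
    intro x hx
    have hxab : x ∈ Set.Icc a b := ⟨ham.trans hx.1, hx.2⟩
    rw [abs_mul, abs_of_nonneg (by positivity : (0:ℝ) ≤ (x - b) ^ 2 / 2)]
    exact mul_le_mul_of_nonneg_left (hbound x hxab) (by positivity)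
  -- exact values of comparison integrals
  have hval1 : ∫ x in a..m, g₁ x = (5 * A + 3 * B) * (b - a) ^ 3 / 384 := by
    have hF : ∀ x : ℝ, HasDerivAt
        (fun y => (A * ((b - a) * (y - a) ^ 3 / 3 - (y - a) ^ 4 / 4) + B * ((y - a) ^ 4 / 4)) / (2 * (b - a)))
        (g₁ x) x := by
      intro x
      have h3 := (hda x).pow 3
      have h4 := (hda x).pow 4
      have := ((((((h3.const_mul (b - a)).div_const 3).sub (h4.div_const 4)).const_mul A).add
        ((h4.div_const 4).const_mul B)).div_const (2 * (b - a)))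
      refine this.congr_deriv ?_
      rw [hg₁]
      field_simp
      ring
    rw [intervalIntegral.integral_eq_sub_of_hasDerivAt (fun x _ => hF x) (hg₁c.intervalIntegrable a m)]
    rw [hm]
    field_simp
    ring
  have hval2 : ∫ x in m..b, g₂ x = (3 * A + 5 * B) * (b - a) ^ 3 / 384 := by
    have hdb' : ∀ x : ℝ, HasDerivAt (fun y : ℝ => b - y) (-1) x := fun x => (hasDerivAt_id x).const_sub b
    have hF : ∀ x : ℝ, HasDerivAt
        (fun y => (A * (-(b - y) ^ 4 / 4) + B * (-((b - a) * (b - y) ^ 3 / 3) + (b - y) ^ 4 / 4)) / (2 * (b - a)))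
        (g₂ x) x := by
      intro x
      have h3 := (hdb' x).pow 3
      have h4 := (hdb' x).pow 4
      have := (((((h4.neg.div_const 4).const_mul A).add
        (((((h3.const_mul (b - a)).div_const 3).neg).add (h4.div_const 4)).const_mul B)).div_const (2 * (b - a))))
      refine this.congr_deriv ?_
      rw [hg₂]
      field_simp
      ring
    rw [intervalIntegral.integral_eq_sub_of_hasDerivAt (fun x _ => hF x) (hg₂c.intervalIntegrable m b)]
    rw [hm]
    field_simp
    ring
  -- assemble
  have hrw : (1 / (b - a)) * (∫ x in a..b, f x) - f m =
      ((∫ x in a..b, f x) - (b - a) * f m) / (b - a) := by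
    field_simp
  calc |(1 / (b - a)) * (∫ x in a..b, f x) - f m|
      = |(∫ x in a..m, (x - a) ^ 2 / 2 * f'' x) + ∫ x in m..b, (x - b) ^ 2 / 2 * f'' x| / (b - a) := by
        rw [hrw, abs_div, abs_of_pos hpos, key]
    _ ≤ ((∫ x in a..m, g₁ x) + ∫ x in m..b, g₂ x) / (b - a) := by
        gcongr
        exact (abs_add_le _ _).trans (add_le_add est1 est2)
    _ = (b - a) ^ 2 / 24 * ((A + B) / 2) := by
        rw [hval1, hval2]
        field_simp
        ring
end

section
/- Let f : I ⊆ ℝ → ℝ be twice differentiable on the interior I° of I, with a, b ∈ I°, a < b, and f'' Lebesgue integrable on [a,b]. Let q > 1 and p > 1 with 1/p + 1/q = 1. If |f''|^q is convex on [a,b], then |(1/(b-a)) ∫_a^b f(x) dx − f((a+b)/2)| ≤ ((b-a)²/(8·(2p+1)^{1/p})) · [(|f''(a)|^q + |f''(b)|^q)/2]^{1/q}. -/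
open MeasureTheory

set_option maxHeartbeats 2000000 in
theorem hermite_hadamard_second_deriv_abs_pow_convex_holder
    (I : Set ℝ) (hI : I.OrdConnected) (f f' f'' : ℝ → ℝ) (a b : ℝ)
    (ha : a ∈ interior I) (hb : b ∈ interior I) (hab : a < b)
    (hderiv1 : ∀ x ∈ interior I, HasDerivAt f (f' x) x)
    (hderiv2 : ∀ x ∈ interior I, HasDerivAt f' (f'' x) x)
    (hint : IntervalIntegrable f'' volume a b)
    (p q : ℝ) (hp : 1 < p) (hq : 1 < q) (hpq : 1 / p + 1 / q = 1)
    (hconv : ConvexOn ℝ (Set.Icc a b) (fun x => |f'' x| ^ q)) :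
    |(1 / (b - a)) * (∫ x in a..b, f x) - f ((a + b) / 2)| ≤
      (b - a) ^ 2 / (8 * (2 * p + 1) ^ (1 / p)) *
        ((|f'' a| ^ q + |f'' b| ^ q) / 2) ^ (1 / q) := by
  have hd : (0:ℝ) < b - a := sub_pos.mpr hab
  set m : ℝ := (a + b) / 2 with hm_def
  have hma : a ≤ m := by rw [hm_def]; linarith
  have hmb : m ≤ b := by rw [hm_def]; linarith
  have hIab : Set.Icc a b ⊆ interior I := hI.interior.out ha hb
  have hf'd : ∀ x ∈ Set.Icc a b, HasDerivAt f' (f'' x) x := fun x hx => hderiv2 x (hIab hx)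
  have hfd : ∀ x ∈ Set.Icc a b, HasDerivAt f (f' x) x := fun x hx => hderiv1 x (hIab hx)
  have hcf' : ContinuousOn f' (Set.Icc a b) :=
    fun x hx => ((hf'd x hx).continuousAt).continuousWithinAt
  have hcf : ContinuousOn f (Set.Icc a b) :=
    fun x hx => ((hfd x hx).continuousAt).continuousWithinAt
  have hsub1 : Set.uIcc a m ⊆ Set.uIcc a b := by
    rw [Set.uIcc_of_le hma, Set.uIcc_of_le hab.le]; exact Set.Icc_subset_Icc_right hmb
  have hsub2 : Set.uIcc m b ⊆ Set.uIcc a b := by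
    rw [Set.uIcc_of_le hmb, Set.uIcc_of_le hab.le]; exact Set.Icc_subset_Icc_left hma
  -- integration by parts on [a, m]
  have h1 : ∫ x in a..m, (x-a)^2/2 * f'' x
      = (m-a)^2/2 * f' m - (a-a)^2/2 * f' a - ∫ x in a..m, (x-a) * f' x := by
    apply intervalIntegral.integral_mul_deriv_eq_deriv_mul
    · intro x hx
      have h := (((hasDerivAt_id x).sub_const a).pow 2).div_const 2
      convert h using 1; simp [id]; simp only [id_eq]; push_cast; ring
    · intro x hx; exact hf'd x ((Set.uIcc_of_le hab.le) ▸ hsub1 hx)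
    · exact ((continuous_id.sub continuous_const).intervalIntegrable _ _)
    · exact hint.mono_set hsub1
  have h2 : ∫ x in a..m, (x-a) * f' x
      = (m-a) * f m - (a-a) * f a - ∫ x in a..m, 1 * f x := by
    apply intervalIntegral.integral_mul_deriv_eq_deriv_mul
    · intro x hx; exact (hasDerivAt_id x).sub_const a
    · intro x hx; exact hfd x ((Set.uIcc_of_le hab.le) ▸ hsub1 hx)
    · exact intervalIntegrable_const
    · exact ((hcf'.mono ((Set.uIcc_of_le hab.le) ▸ hsub1)).intervalIntegrable)
  have h3 : ∫ x in m..b, (b-x)^2/2 * f'' x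
      = (b-b)^2/2 * f' b - (b-m)^2/2 * f' m - ∫ x in m..b, (x-b) * f' x := by
    apply intervalIntegral.integral_mul_deriv_eq_deriv_mul
    · intro x hx
      have h := (((hasDerivAt_id x).const_sub b).pow 2).div_const 2
      convert h using 1; simp [id]; simp only [id_eq]; push_cast; ring
    · intro x hx; exact hf'd x ((Set.uIcc_of_le hab.le) ▸ hsub2 hx)
    · exact ((continuous_id.sub continuous_const).intervalIntegrable _ _)
    · exact hint.mono_set hsub2
  have h4 : ∫ x in m..b, (x-b) * f' x
      = (b-b) * f b - (m-b) * f m - ∫ x in m..b, 1 * f x := by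
    apply intervalIntegral.integral_mul_deriv_eq_deriv_mul
    · intro x hx; exact (hasDerivAt_id x).sub_const b
    · intro x hx; exact hfd x ((Set.uIcc_of_le hab.le) ▸ hsub2 hx)
    · exact intervalIntegrable_const
    · exact ((hcf'.mono ((Set.uIcc_of_le hab.le) ▸ hsub2)).intervalIntegrable)
  simp only [one_mul] at h2 h4
  have hsplit : (∫ x in a..m, f x) + (∫ x in m..b, f x) = ∫ x in a..b, f x :=
    intervalIntegral.integral_add_adjacent_intervals
      ((hcf.mono ((Set.uIcc_of_le hab.le) ▸ hsub1)).intervalIntegrable)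
      ((hcf.mono ((Set.uIcc_of_le hab.le) ▸ hsub2)).intervalIntegrable)
  have key : (∫ x in a..m, (x-a)^2/2 * f'' x) + (∫ x in m..b, (b-x)^2/2 * f'' x)
      = (∫ x in a..b, f x) - (b-a) * f m := by
    rw [h1, h2, h3, h4, ← hsplit, hm_def]; ring
  set K : ℝ → ℝ := fun x => if x ≤ m then (x-a)^2/2 else (b-x)^2/2 with hK_def
  have hKcont : Continuous K := by
    apply Continuous.if_le
    · exact ((continuous_id.sub continuous_const).pow 2).div_const 2
    · exact ((continuous_const.sub continuous_id).pow 2).div_const 2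
    · exact continuous_id
    · exact continuous_const
    · intro x hx; rw [hx, hm_def]; ring
  have hKnonneg : ∀ x, 0 ≤ K x := by
    intro x; rw [hK_def]; dsimp only; split <;> positivity
  have hKf : IntervalIntegrable (fun x => K x * f'' x) volume a b :=
    hint.continuousOn_mul hKcont.continuousOn
  have hKid : ∫ x in a..b, K x * f'' x = (∫ x in a..b, f x) - (b-a) * f m := by
    rw [← key, ← intervalIntegral.integral_add_adjacent_intervals
      (hKf.mono_set hsub1) (hKf.mono_set hsub2)]
    congr 1
    · apply intervalIntegral.integral_congr
      intro x hx
      rw [Set.uIcc_of_le hma] at hx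
      simp only [hK_def]
      rw [if_pos hx.2]
    · apply intervalIntegral.integral_congr
      intro x hx
      rw [Set.uIcc_of_le hmb] at hx
      simp only [hK_def]
      by_cases hxm : x ≤ m
      · have hx_eq : x = m := le_antisymm hxm hx.1
        rw [if_pos hxm, hx_eq, hm_def]; ring_nf
      · rw [if_neg hxm]
  have hq0 : (0:ℝ) < q := lt_trans one_pos hq
  have hp0 : (0:ℝ) < p := lt_trans one_pos hp
  have hpq' : Real.HolderConjugate p q := Real.holderConjugate_iff.mpr ⟨hp, by
    rw [inv_eq_one_div, inv_eq_one_div]; exact hpq⟩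
  set μ := volume.restrict (Set.Ioc a b) with hmu
  have hKmem : MemLp K (ENNReal.ofReal p) μ := by
    apply MemLp.of_bound hKcont.aestronglyMeasurable ((b-a)^2/2)
    filter_upwards [ae_restrict_mem measurableSet_Ioc] with x hx
    rw [Real.norm_eq_abs, abs_of_nonneg (hKnonneg x)]
    have h1 : a < x := hx.1
    have h2 : x ≤ b := hx.2
    simp only [hK_def]
    split_ifs with h <;> nlinarith
  have hMq : ∀ x ∈ Set.Icc a b, |f'' x|^q ≤ max (|f'' a|^q) (|f'' b|^q) := by
    intro x hx
    exact hconv.le_on_segment (Set.left_mem_Icc.2 hab.le) (Set.right_mem_Icc.2 hab.le)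
      (by rwa [segment_eq_Icc hab.le])
  have hf''m : AEStronglyMeasurable f'' μ := hint.1.aestronglyMeasurable
  have hf''mem : MemLp f'' (ENNReal.ofReal q) μ := by
    apply MemLp.of_bound hf''m ((max (|f'' a|^q) (|f'' b|^q))^(1/q))
    filter_upwards [ae_restrict_mem measurableSet_Ioc] with x hx
    have h1 := hMq x (Set.Ioc_subset_Icc_self hx)
    rw [Real.norm_eq_abs]
    calc |f'' x| = (|f'' x|^q)^(1/q) := by
          rw [one_div, Real.rpow_rpow_inv (abs_nonneg _) hq0.ne']
      _ ≤ (max (|f'' a|^q) (|f'' b|^q))^(1/q) :=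
          Real.rpow_le_rpow (Real.rpow_nonneg (abs_nonneg _) _) h1 (by positivity)
  have holder := integral_mul_norm_le_Lp_mul_Lq hpq' hKmem hf''mem
  have h2p1 : (0:ℝ) < 2*p+1 := by linarith
  have hbd2 : (0:ℝ) < (b-a)/2 := by linarith
  have eX : (∫ x, ‖K x‖^p ∂μ) = 2 * ((b-a)/2)^(2*p+1) / ((2:ℝ)^p * (2*p+1)) := by
    have e0 : (∫ x, ‖K x‖^p ∂μ) = ∫ x in a..b, K x ^ p := by
      have heq : (fun x => ‖K x‖^p) = fun x => K x ^ p :=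
        funext fun x => by rw [Real.norm_eq_abs, abs_of_nonneg (hKnonneg x)]
      rw [intervalIntegral.integral_of_le hab.le, hmu, ← heq]
    have hKp_cont : Continuous fun x => K x ^ p :=
      hKcont.rpow_const (fun x => Or.inr hp0.le)
    have hsplit2 : (∫ x in a..m, K x ^ p) + (∫ x in m..b, K x ^ p) = ∫ x in a..b, K x ^ p :=
      intervalIntegral.integral_add_adjacent_intervals
        (hKp_cont.intervalIntegrable _ _) (hKp_cont.intervalIntegrable _ _)
    have eA : (∫ x in a..m, K x ^ p) = ((b-a)/2)^(2*p+1) / (2*p+1) / 2^p := by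
      have e1 : ∫ x in a..m, K x ^ p = ∫ x in a..m, (x-a)^(2*p) / 2^p := by
        apply intervalIntegral.integral_congr
        intro x hx; rw [Set.uIcc_of_le hma] at hx
        simp only [hK_def]
        rw [if_pos hx.2, Real.div_rpow (sq_nonneg _) (by norm_num : (0:ℝ) ≤ 2),
          ← Real.rpow_natCast (x-a) 2, ← Real.rpow_mul (sub_nonneg.2 hx.1)]
        norm_num
      rw [e1, intervalIntegral.integral_div]
      congr 1
      have hcs : (∫ x in a..m, (x - a) ^ (2*p)) = ∫ y in a-a..m-a, y ^ (2*p) :=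
        intervalIntegral.integral_comp_sub_right (fun y => y ^ (2*p)) a
      rw [hcs, sub_self, integral_rpow (Or.inl (by linarith : (-1:ℝ) < 2*p)),
        Real.zero_rpow (by positivity : 2*p+1 ≠ 0),
        show m - a = (b-a)/2 by rw [hm_def]; ring, sub_zero]
    have eB : (∫ x in m..b, K x ^ p) = ((b-a)/2)^(2*p+1) / (2*p+1) / 2^p := by
      have e1 : ∫ x in m..b, K x ^ p = ∫ x in m..b, (b-x)^(2*p) / 2^p := by
        apply intervalIntegral.integral_congr
        intro x hx; rw [Set.uIcc_of_le hmb] at hx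
        simp only [hK_def]
        by_cases hxm : x ≤ m
        · have hx_eq : x = m := le_antisymm hxm hx.1
          subst hx_eq
          rw [if_pos le_rfl, show m - a = b - m by rw [hm_def]; ring,
            Real.div_rpow (sq_nonneg _) (by norm_num : (0:ℝ) ≤ 2),
            ← Real.rpow_natCast (b-m) 2, ← Real.rpow_mul (sub_nonneg.2 hmb)]
          norm_num
        · rw [if_neg hxm, Real.div_rpow (sq_nonneg _) (by norm_num : (0:ℝ) ≤ 2),
            ← Real.rpow_natCast (b-x) 2,
            ← Real.rpow_mul (sub_nonneg.2 hx.2)]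
          norm_num
      rw [e1, intervalIntegral.integral_div]
      congr 1
      have hcs : (∫ x in m..b, (b - x) ^ (2*p)) = ∫ y in b-b..b-m, y ^ (2*p) :=
        intervalIntegral.integral_comp_sub_left (fun y => y ^ (2*p)) b
      rw [hcs, sub_self, integral_rpow (Or.inl (by linarith : (-1:ℝ) < 2*p)),
        Real.zero_rpow (by positivity : 2*p+1 ≠ 0),
        show b - m = (b-a)/2 by rw [hm_def]; ring, sub_zero]
    rw [e0, ← hsplit2, eA, eB]
    have hne : ((2:ℝ)^p) ≠ 0 := by positivity
    field_simp
    ring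
  set Aq := |f'' a| ^ q with hAq
  set Bq := |f'' b| ^ q with hBq
  have hAq0 : 0 ≤ Aq := Real.rpow_nonneg (abs_nonneg _) _
  have hBq0 : 0 ≤ Bq := Real.rpow_nonneg (abs_nonneg _) _
  have hlin : ∀ x ∈ Set.Icc a b, |f'' x|^q ≤ ((b - x)*Aq + (x - a)*Bq)/(b-a) := by
    intro x hx
    have hsum : (b-x)/(b-a) + (x-a)/(b-a) = 1 := by
      rw [← add_div, div_eq_one_iff_eq hd.ne']; ring
    have h := hconv.2 (Set.left_mem_Icc.2 hab.le) (Set.right_mem_Icc.2 hab.le)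
      (div_nonneg (by linarith [hx.2]) hd.le)
      (div_nonneg (by linarith [hx.1]) hd.le) hsum
    have hxe : ((b-x)/(b-a)) • a + ((x-a)/(b-a)) • b = x := by
      simp only [smul_eq_mul]; field_simp; ring
    rw [hxe] at h
    refine le_trans h (le_of_eq ?_)
    simp only [smul_eq_mul, ← hAq, ← hBq]
    rw [div_mul_eq_mul_div, div_mul_eq_mul_div, ← add_div]
  have habsq_meas : AEStronglyMeasurable (fun x => |f'' x|^q) μ := by
    have := (Real.continuous_rpow_const hq0.le).comp_aestronglyMeasurable hf''m.norm
    simpa [Real.norm_eq_abs] using this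
  have habsq_mem : MemLp (fun x => |f'' x|^q) 1 μ := by
    apply MemLp.of_bound habsq_meas (max Aq Bq)
    filter_upwards [ae_restrict_mem measurableSet_Ioc] with x hx
    rw [Real.norm_eq_abs, abs_of_nonneg (Real.rpow_nonneg (abs_nonneg _) _)]
    exact hMq x (Set.Ioc_subset_Icc_self hx)
  have habsq_int : IntervalIntegrable (fun x => |f'' x|^q) volume a b := by
    rw [intervalIntegrable_iff_integrableOn_Ioc_of_le hab.le]
    exact memLp_one_iff_integrable.mp habsq_mem
  have hYle : (∫ x, ‖f'' x‖^q ∂μ) ≤ (b-a) * ((Aq + Bq)/2) := by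
    have e0 : (∫ x, ‖f'' x‖^q ∂μ) = ∫ x in a..b, |f'' x|^q := by
      rw [intervalIntegral.integral_of_le hab.le, hmu]
      simp only [Real.norm_eq_abs]
    rw [e0]
    have hlcont : Continuous fun x => ((b - x)*Aq + (x - a)*Bq)/(b-a) := by fun_prop
    calc (∫ x in a..b, |f'' x|^q)
        ≤ ∫ x in a..b, ((b - x)*Aq + (x - a)*Bq)/(b-a) :=
          intervalIntegral.integral_mono_on hab.le habsq_int
            (hlcont.intervalIntegrable _ _) hlin
      _ = (b-a) * ((Aq + Bq)/2) := by
          rw [intervalIntegral.integral_div]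
          have e1 : (fun x => (b - x)*Aq + (x - a)*Bq)
              = fun x => (b*Aq - a*Bq) + (Bq - Aq)*x := funext fun x => by ring
          rw [e1, intervalIntegral.integral_add intervalIntegrable_const
            ((continuous_mul_left (Bq - Aq)).intervalIntegrable _ _),
            intervalIntegral.integral_const, intervalIntegral.integral_const_mul,
            integral_id]
          simp only [smul_eq_mul]
          field_simp
          ring
  have hgl : (1/(b-a)) * (∫ x in a..b, f x) - f m = (1/(b-a)) * ∫ x in a..b, K x * f'' x := by
    rw [hKid]; field_simp
  have habs2 : |∫ x in a..b, K x * f'' x| ≤ ∫ x, ‖K x‖ * ‖f'' x‖ ∂μ := by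
    refine le_trans (intervalIntegral.abs_integral_le_integral_abs hab.le) (le_of_eq ?_)
    rw [intervalIntegral.integral_of_le hab.le, hmu]
    simp [Real.norm_eq_abs, abs_mul]
  have hX1p_nonneg : (0:ℝ) ≤ (∫ x, ‖K x‖ ^ p ∂μ) ^ (1/p) :=
    Real.rpow_nonneg (by rw [eX]; positivity) _
  have hY0 : (0:ℝ) ≤ ∫ x, ‖f'' x‖^q ∂μ :=
    integral_nonneg fun x => Real.rpow_nonneg (norm_nonneg _) _
  have step1 : |(1/(b-a)) * (∫ x in a..b, f x) - f m|
      ≤ (1/(b-a)) * ((∫ x, ‖K x‖^p ∂μ)^(1/p) * ((b-a) * ((Aq+Bq)/2))^(1/q)) := by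
    rw [hgl, abs_mul, abs_of_pos (by positivity : (0:ℝ) < 1/(b-a))]
    apply mul_le_mul_of_nonneg_left _ (by positivity)
    refine le_trans (le_trans habs2 holder) ?_
    exact mul_le_mul_of_nonneg_left
      (Real.rpow_le_rpow hY0 hYle (by positivity)) hX1p_nonneg
  refine le_trans step1 (le_of_eq ?_)
  rw [eX]
  have hS : (0:ℝ) ≤ (Aq+Bq)/2 := by positivity
  rw [Real.mul_rpow hd.le hS]
  rw [Real.div_rpow (by positivity) (by positivity : (0:ℝ) ≤ 2^p * (2*p+1))]
  rw [Real.mul_rpow (by norm_num : (0:ℝ) ≤ 2) (by positivity)]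
  rw [Real.mul_rpow (by positivity : (0:ℝ) ≤ (2:ℝ)^p) h2p1.le]
  rw [← Real.rpow_mul (by norm_num : (0:ℝ) ≤ 2)]
  rw [mul_one_div, div_self hp0.ne', Real.rpow_one]
  rw [← Real.rpow_mul hbd2.le]
  rw [show (2*p+1)*(1/p) = 2 + 1/p by field_simp]
  rw [Real.rpow_add hbd2, Real.rpow_two]
  rw [Real.div_rpow hd.le (by norm_num : (0:ℝ) ≤ 2)]
  have hv : ((b-a):ℝ)^(1/p) * ((b-a):ℝ)^(1/q) = (b-a) := by
    rw [← Real.rpow_add hd, hpq, Real.rpow_one]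
  have hu : ((2:ℝ))^(1/p) ≠ 0 := by positivity
  have hw : ((2*p+1):ℝ)^(1/p) ≠ 0 := by positivity
  generalize hgen1 : ((b-a):ℝ)^(1/p) = vp at hv ⊢
  generalize hgen2 : ((b-a):ℝ)^(1/q) = vq at hv ⊢
  generalize hgen3 : (((Aq+Bq)/2):ℝ)^(1/q) = t
  generalize hgen4 : ((2:ℝ))^(1/p) = u at hu ⊢
  generalize hgen5 : (((2*p+1)):ℝ)^(1/p) = w at hw ⊢
  have hdn : vp * vq ≠ 0 := by rw [hv]; exact hd.ne'
  rw [← hv]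
  field_simp
  ring
end

section
/- Let f : I ⊆ ℝ → ℝ be twice differentiable on the interior I° of I, with a, b ∈ I°, a < b, and f'' Lebesgue integrable on [a,b]. Let q ≥ 1. If |f''|^q is convex on [a,b], then |(1/(b-a)) ∫_a^b f(x) dx − f((a+b)/2)| ≤ ((b-a)²/24) · [(|f''(a)|^q + |f''(b)|^q)/2]^{1/q}. -/
set_option maxHeartbeats 1000000


open MeasureTheory

theorem hermite_hadamard_second_deriv_abs_pow_convex_power_mean
    (I : Set ℝ) (hI : I.OrdConnected) (f f' f'' : ℝ → ℝ) (a b : ℝ)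
    (ha : a ∈ interior I) (hb : b ∈ interior I) (hab : a < b)
    (hderiv1 : ∀ x ∈ interior I, HasDerivAt f (f' x) x)
    (hderiv2 : ∀ x ∈ interior I, HasDerivAt f' (f'' x) x)
    (hint : IntervalIntegrable f'' volume a b)
    (q : ℝ) (hq : 1 ≤ q)
    (hconv : ConvexOn ℝ (Set.Icc a b) (fun x => |f'' x| ^ q)) :
    |(1 / (b - a)) * (∫ x in a..b, f x) - f ((a + b) / 2)| ≤
      (b - a) ^ 2 / 24 * ((|f'' a| ^ q + |f'' b| ^ q) / 2) ^ (1 / q) := by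
  set m : ℝ := (a + b) / 2 with hm
  obtain ⟨A, hA⟩ : ∃ A : ℝ, A = |f'' a| ^ q := ⟨_, rfl⟩
  obtain ⟨B, hB⟩ : ∃ B : ℝ, B = |f'' b| ^ q := ⟨_, rfl⟩
  rw [← hA, ← hB]
  have hba : (0:ℝ) < b - a := sub_pos.2 hab
  have hq0 : (0:ℝ) < q := lt_of_lt_of_le one_pos hq
  have ham : a < m := by rw [hm]; linarith
  have hmb : m < b := by rw [hm]; linarith
  have hIcc : Set.Icc a b ⊆ interior I := hI.interior.out ha hb
  have hsub1 : Set.uIcc a m ⊆ Set.Icc a b := by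
    rw [Set.uIcc_of_le ham.le]; exact Set.Icc_subset_Icc le_rfl hmb.le
  have hsub2 : Set.uIcc m b ⊆ Set.Icc a b := by
    rw [Set.uIcc_of_le hmb.le]; exact Set.Icc_subset_Icc ham.le le_rfl
  have hcf : ContinuousOn f (Set.Icc a b) := fun x hx =>
    ((hderiv1 x (hIcc hx)).continuousAt).continuousWithinAt
  have hcf' : ContinuousOn f' (Set.Icc a b) := fun x hx =>
    ((hderiv2 x (hIcc hx)).continuousAt).continuousWithinAt
  have hint1 : IntervalIntegrable f'' volume a m := hint.mono_set (by
    rw [Set.uIcc_of_le hab.le]; exact hsub1)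
  have hint2 : IntervalIntegrable f'' volume m b := hint.mono_set (by
    rw [Set.uIcc_of_le hab.le]; exact hsub2)
  have hf'int1 : IntervalIntegrable f' volume a m := (hcf'.mono hsub1).intervalIntegrable
  have hf'int2 : IntervalIntegrable f' volume m b := (hcf'.mono hsub2).intervalIntegrable
  have hfint1 : IntervalIntegrable f volume a m := (hcf.mono hsub1).intervalIntegrable
  have hfint2 : IntervalIntegrable f volume m b := (hcf.mono hsub2).intervalIntegrable
  -- STEP 1 : the integral identity
  have hu1 : ∀ x ∈ Set.uIcc a m, HasDerivAt (fun y => (y-a)^2/2) (x - a) x := by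
    intro x _
    have h := (((hasDerivAt_id x).sub_const a).pow 2).div_const 2
    convert h using 1
    all_goals try rfl
    simp
  have hu2 : ∀ x ∈ Set.uIcc m b, HasDerivAt (fun y => (b-y)^2/2) (-(b - x)) x := by
    intro x _
    have h := (((hasDerivAt_id x).const_sub b).pow 2).div_const 2
    convert h using 1
    all_goals try rfl
    simp [id]; ring
  have hv1 : ∀ x ∈ Set.uIcc a m, HasDerivAt (fun y => y - a) (1:ℝ) x := by
    intro x _; simpa using (hasDerivAt_id x).sub_const a
  have hv2 : ∀ x ∈ Set.uIcc m b, HasDerivAt (fun y => b - y) (-1:ℝ) x := by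
    intro x _; simpa using (hasDerivAt_id x).const_sub b
  have E1 : ∫ x in a..m, ((x-a)^2/2) * f'' x
      = ((m-a)^2/2) * f' m - ((a-a)^2/2) * f' a - ∫ x in a..m, (x-a) * f' x :=
    intervalIntegral.integral_mul_deriv_eq_deriv_mul hu1
      (fun x hx => hderiv2 x (hIcc (hsub1 hx)))
      (by apply Continuous.intervalIntegrable; fun_prop) hint1
  have E2 : ∫ x in a..m, (x-a) * f' x
      = (m-a) * f m - (a-a) * f a - ∫ x in a..m, 1 * f x :=
    intervalIntegral.integral_mul_deriv_eq_deriv_mul hv1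
      (fun x hx => hderiv1 x (hIcc (hsub1 hx)))
      (by apply Continuous.intervalIntegrable; fun_prop) hf'int1
  have E3 : ∫ x in m..b, ((b-x)^2/2) * f'' x
      = ((b-b)^2/2) * f' b - ((b-m)^2/2) * f' m - ∫ x in m..b, (-(b-x)) * f' x :=
    intervalIntegral.integral_mul_deriv_eq_deriv_mul hu2
      (fun x hx => hderiv2 x (hIcc (hsub2 hx)))
      (by apply Continuous.intervalIntegrable; fun_prop) hint2
  have E4 : ∫ x in m..b, (b-x) * f' x
      = (b-b) * f b - (b-m) * f m - ∫ x in m..b, (-1) * f x :=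
    intervalIntegral.integral_mul_deriv_eq_deriv_mul hv2
      (fun x hx => hderiv1 x (hIcc (hsub2 hx)))
      (by apply Continuous.intervalIntegrable; fun_prop) hf'int2
  have hneg1 : ∫ x in m..b, (-(b-x)) * f' x = -∫ x in m..b, (b-x) * f' x := by
    rw [← intervalIntegral.integral_neg]; congr 1; funext x; ring
  have hneg2 : ∫ x in m..b, (-1:ℝ) * f x = -∫ x in m..b, f x := by
    rw [← intervalIntegral.integral_neg]; congr 1; funext x; ring
  have hone : ∫ x in a..m, (1:ℝ) * f x = ∫ x in a..m, f x := by
    congr 1; funext x; rw [one_mul]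
  have hadd : (∫ x in a..m, f x) + ∫ x in m..b, f x = ∫ x in a..b, f x :=
    intervalIntegral.integral_add_adjacent_intervals hfint1 hfint2
  have hS : (∫ x in a..m, ((x-a)^2/2) * f'' x) + (∫ x in m..b, ((b-x)^2/2) * f'' x)
      = (∫ x in a..b, f x) - (b-a) * f m := by
    rw [E1, E3, E2, hneg1, E4, hneg2, hone, ← hadd, hm]
    ring
  -- the kernel K
  set K : ℝ → ℝ := fun x => if x ≤ m then (x-a)^2/2 else (b-x)^2/2 with hK
  have hKnn : ∀ x, 0 ≤ K x := by
    intro x; rw [hK]; dsimp only; split <;> positivity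
  have hKcont : Continuous K := by
    rw [hK]
    apply Continuous.if_le (by fun_prop) (by fun_prop) continuous_id continuous_const
    intro x hx
    simp only [id_eq] at hx
    rw [hx, hm]; ring
  have hK1 : ∀ x ∈ Set.Icc a m, K x = (x-a)^2/2 := by
    intro x hx; rw [hK]; exact if_pos hx.2
  have hK2 : ∀ x ∈ Set.Icc m b, K x = (b-x)^2/2 := by
    intro x hx
    rw [hK]; dsimp only
    by_cases hxm : x ≤ m
    · have hxe : x = m := le_antisymm hxm hx.1
      rw [if_pos hxm, hxe, hm]; ring
    · rw [if_neg hxm]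
  have hKle : ∀ x ∈ Set.Icc a b, K x ≤ (b-a)^2/2 := by
    intro x hx
    rw [hK]; dsimp only
    rcases hx with ⟨h1, h2⟩
    split <;> nlinarith
  -- STEP 2 : |S| ≤ ∫ K |f''|
  have hKf1 : IntervalIntegrable (fun x => K x * |f'' x|) volume a m :=
    hint1.abs.continuousOn_mul hKcont.continuousOn
  have hKf2 : IntervalIntegrable (fun x => K x * |f'' x|) volume m b :=
    hint2.abs.continuousOn_mul hKcont.continuousOn
  have habs1 : |∫ x in a..m, ((x-a)^2/2) * f'' x| ≤ ∫ x in a..m, K x * |f'' x| := by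
    refine le_trans (intervalIntegral.abs_integral_le_integral_abs ham.le) (le_of_eq ?_)
    rw [show (fun x => |(x-a)^2/2 * f'' x|) = fun x => ((x-a)^2/2) * |f'' x| by
      funext x; rw [abs_mul, abs_of_nonneg]; positivity]
    refine intervalIntegral.integral_congr fun x hx => ?_
    rw [hK1 x (by rwa [Set.uIcc_of_le ham.le] at hx)]
  have habs2 : |∫ x in m..b, ((b-x)^2/2) * f'' x| ≤ ∫ x in m..b, K x * |f'' x| := by
    refine le_trans (intervalIntegral.abs_integral_le_integral_abs hmb.le) (le_of_eq ?_)
    rw [show (fun x => |(b-x)^2/2 * f'' x|) = fun x => ((b-x)^2/2) * |f'' x| by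
      funext x; rw [abs_mul, abs_of_nonneg]; positivity]
    refine intervalIntegral.integral_congr fun x hx => ?_
    rw [hK2 x (by rwa [Set.uIcc_of_le hmb.le] at hx)]
  have hT : |(∫ x in a..m, ((x-a)^2/2) * f'' x) + (∫ x in m..b, ((b-x)^2/2) * f'' x)|
      ≤ ∫ x in Set.Ioc a b, K x * |f'' x| := by
    calc |(∫ x in a..m, ((x-a)^2/2) * f'' x) + (∫ x in m..b, ((b-x)^2/2) * f'' x)|
        ≤ |∫ x in a..m, ((x-a)^2/2) * f'' x| + |∫ x in m..b, ((b-x)^2/2) * f'' x| :=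
          abs_add_le _ _
      _ ≤ (∫ x in a..m, K x * |f'' x|) + ∫ x in m..b, K x * |f'' x| :=
          add_le_add habs1 habs2
      _ = ∫ x in a..b, K x * |f'' x| :=
          intervalIntegral.integral_add_adjacent_intervals hKf1 hKf2
      _ = ∫ x in Set.Ioc a b, K x * |f'' x| := intervalIntegral.integral_of_le hab.le
  -- polynomial integrals
  have key : ∀ (c3 c4 c x : ℝ), HasDerivAt (fun y => c3*(y-c)^3 + c4*(y-c)^4)
      (c3*(3*(x-c)^2) + c4*(4*(x-c)^3)) x := by
    intro c3 c4 c x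
    have h3 : HasDerivAt (fun y : ℝ => (y-c)^3) (3*(x-c)^2) x := by
      have := ((hasDerivAt_id x).sub_const c).pow 3
      convert this using 1 <;> (try rfl) <;> simp [id]
    have h4 : HasDerivAt (fun y : ℝ => (y-c)^4) (4*(x-c)^3) x := by
      have := ((hasDerivAt_id x).sub_const c).pow 4
      convert this using 1 <;> (try rfl) <;> simp [id]
    exact (h3.const_mul c3).add (h4.const_mul c4)
  have IK1 : ∫ x in a..m, (x-a)^2/2 = (b-a)^3/48 := by
    rw [intervalIntegral.integral_eq_sub_of_hasDerivAt
      (f := fun y => (1/6)*(y-a)^3 + 0*(y-a)^4)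
      (fun x _ => by convert key (1/6) 0 a x using 1 <;> (try rfl) <;> ring)
      (by apply Continuous.intervalIntegrable; fun_prop)]
    rw [hm]; ring
  have IK2 : ∫ x in m..b, (b-x)^2/2 = (b-a)^3/48 := by
    rw [intervalIntegral.integral_eq_sub_of_hasDerivAt
      (f := fun y => (1/6)*(y-b)^3 + 0*(y-b)^4)
      (fun x _ => by convert key (1/6) 0 b x using 1 <;> (try rfl) <;> ring)
      (by apply Continuous.intervalIntegrable; fun_prop)]
    rw [hm]; ring
  have IKL1 : ∫ x in a..m, ((x-a)^2/2) * (((b-x)*A + (x-a)*B)/(b-a))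
      = (5*A+3*B)*(b-a)^3/384 := by
    rw [intervalIntegral.integral_eq_sub_of_hasDerivAt
      (f := fun y => (A/6)*(y-a)^3 + ((B-A)/(8*(b-a)))*(y-a)^4)
      (fun x _ => by convert key (A/6) ((B-A)/(8*(b-a))) a x using 1 <;> (try rfl) <;> (field_simp; ring))
      (by apply Continuous.intervalIntegrable; fun_prop)]
    rw [hm]; field_simp; ring
  have IKL2 : ∫ x in m..b, ((b-x)^2/2) * (((b-x)*A + (x-a)*B)/(b-a))
      = (3*A+5*B)*(b-a)^3/384 := by
    rw [intervalIntegral.integral_eq_sub_of_hasDerivAt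
      (f := fun y => (B/6)*(y-b)^3 + ((B-A)/(8*(b-a)))*(y-b)^4)
      (fun x _ => by convert key (B/6) ((B-A)/(8*(b-a))) b x using 1 <;> (try rfl) <;> (field_simp; ring))
      (by apply Continuous.intervalIntegrable; fun_prop)]
    rw [hm]; field_simp; ring
  have hPval : ∫ x in Set.Ioc a b, K x = (b-a)^3/24 := by
    have h1 : ∫ x in a..m, K x = (b-a)^3/48 := by
      rw [← IK1]
      exact intervalIntegral.integral_congr fun x hx =>
        hK1 x (by rwa [Set.uIcc_of_le ham.le] at hx)
    have h2 : ∫ x in m..b, K x = (b-a)^3/48 := by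
      rw [← IK2]
      exact intervalIntegral.integral_congr fun x hx =>
        hK2 x (by rwa [Set.uIcc_of_le hmb.le] at hx)
    have h3 : (∫ x in a..m, K x) + ∫ x in m..b, K x = ∫ x in a..b, K x :=
      intervalIntegral.integral_add_adjacent_intervals
        (hKcont.intervalIntegrable _ _) (hKcont.intervalIntegrable _ _)
    rw [← intervalIntegral.integral_of_le hab.le, ← h3, h1, h2]; ring
  -- convexity bound
  have hAnn : (0:ℝ) ≤ A := hA ▸ Real.rpow_nonneg (abs_nonneg _) _
  have hBnn : (0:ℝ) ≤ B := hB ▸ Real.rpow_nonneg (abs_nonneg _) _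
  have hgle : ∀ x ∈ Set.Icc a b, |f'' x| ^ q ≤ ((b-x)*A + (x-a)*B)/(b-a) := by
    intro x hx
    have ht0 : 0 ≤ (b-x)/(b-a) := div_nonneg (by linarith [hx.2]) hba.le
    have ht1 : 0 ≤ 1 - (b-x)/(b-a) := by
      rw [sub_nonneg, div_le_one hba]; linarith [hx.1]
    have hc := hconv.2 (Set.left_mem_Icc.2 hab.le) (Set.right_mem_Icc.2 hab.le)
      ht0 ht1 (by ring)
    simp only [smul_eq_mul] at hc
    have hxe : (b-x)/(b-a) * a + (1 - (b-x)/(b-a)) * b = x := by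
      field_simp; ring
    rw [hxe] at hc
    refine le_trans hc (le_of_eq ?_)
    rw [hA, hB]
    field_simp; ring
  have hbdd : ∀ x ∈ Set.Icc a b, |f'' x| ^ q ≤ max A B := by
    intro x hx
    refine le_trans (hgle x hx) ?_
    rw [div_le_iff₀ hba]
    have h1 : A ≤ max A B := le_max_left A B
    have h2 : B ≤ max A B := le_max_right A B
    nlinarith [hx.1, hx.2]
  -- integrability of K * |f''|^q on Ioc
  set μ := volume.restrict (Set.Ioc a b) with hμ
  haveI : IsFiniteMeasure μ := ⟨by
    rw [hμ, Measure.restrict_apply_univ]; exact measure_Ioc_lt_top⟩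
  have hmeasf'' : AEStronglyMeasurable f'' μ := hint.1.aestronglyMeasurable
  have haeIcc : ∀ᵐ x ∂μ, x ∈ Set.Icc a b := by
    rw [hμ]
    filter_upwards [ae_restrict_mem measurableSet_Ioc] with x hx
    exact Set.Ioc_subset_Icc_self hx
  have hgmeas : AEStronglyMeasurable (fun x => |f'' x| ^ q) μ := by
    have := (Real.continuous_rpow_const hq0.le).comp_aestronglyMeasurable hmeasf''.norm
    refine this.congr (ae_of_all _ fun x => ?_)
    simp only [Real.norm_eq_abs]
  have hKgint : IntegrableOn (fun x => K x * |f'' x| ^ q) (Set.Ioc a b) volume := by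
    refine Integrable.mono' (integrable_const ((b-a)^2/2 * max A B))
      (hKcont.aestronglyMeasurable.mul hgmeas) ?_
    filter_upwards [haeIcc] with x hx
    rw [Real.norm_of_nonneg (mul_nonneg (hKnn x) (Real.rpow_nonneg (abs_nonneg _) _))]
    exact mul_le_mul (hKle x hx) (hbdd x hx) (Real.rpow_nonneg (abs_nonneg _) _)
      (by positivity)
  have hQle : ∫ x in Set.Ioc a b, K x * |f'' x| ^ q ≤ (b-a)^3/24 * ((A+B)/2) := by
    have hLcont : Continuous (fun x => K x * (((b-x)*A + (x-a)*B)/(b-a))) := by fun_prop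
    have step1 : ∫ x in Set.Ioc a b, K x * |f'' x| ^ q
        ≤ ∫ x in Set.Ioc a b, K x * (((b-x)*A + (x-a)*B)/(b-a)) := by
      refine setIntegral_mono_on hKgint (hLcont.integrableOn_Ioc) measurableSet_Ioc ?_
      intro x hx
      exact mul_le_mul_of_nonneg_left (hgle x (Set.Ioc_subset_Icc_self hx)) (hKnn x)
    have step2 : ∫ x in Set.Ioc a b, K x * (((b-x)*A + (x-a)*B)/(b-a))
        = (b-a)^3/24 * ((A+B)/2) := by
      have h1 : ∫ x in a..m, K x * (((b-x)*A + (x-a)*B)/(b-a))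
          = (5*A+3*B)*(b-a)^3/384 := by
        rw [← IKL1]
        exact intervalIntegral.integral_congr fun x hx => by
          rw [hK1 x (by rwa [Set.uIcc_of_le ham.le] at hx)]
      have h2 : ∫ x in m..b, K x * (((b-x)*A + (x-a)*B)/(b-a))
          = (3*A+5*B)*(b-a)^3/384 := by
        rw [← IKL2]
        exact intervalIntegral.integral_congr fun x hx => by
          rw [hK2 x (by rwa [Set.uIcc_of_le hmb.le] at hx)]
      have h3 : (∫ x in a..m, K x * (((b-x)*A + (x-a)*B)/(b-a)))
          + ∫ x in m..b, K x * (((b-x)*A + (x-a)*B)/(b-a))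
          = ∫ x in a..b, K x * (((b-x)*A + (x-a)*B)/(b-a)) :=
        intervalIntegral.integral_add_adjacent_intervals
          (hLcont.intervalIntegrable _ _) (hLcont.intervalIntegrable _ _)
      rw [← intervalIntegral.integral_of_le hab.le, ← h3, h1, h2]; ring
    rw [← step2]; exact step1
  -- STEP 3 : Hoelder
  have hR : (0:ℝ) ≤ (b-a)^3/24 := by positivity
  have hX : (0:ℝ) ≤ (A+B)/2 := by positivity
  have hQnn : 0 ≤ ∫ x in Set.Ioc a b, K x * |f'' x| ^ q :=
    setIntegral_nonneg measurableSet_Ioc fun x _ =>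
      mul_nonneg (hKnn x) (Real.rpow_nonneg (abs_nonneg _) _)
  have habsb : ∀ x ∈ Set.Icc a b, |f'' x| ≤ (max A B) ^ (1/q) := by
    intro x hx
    have h1 := Real.rpow_le_rpow (Real.rpow_nonneg (abs_nonneg _) _) (hbdd x hx)
      (by positivity : (0:ℝ) ≤ 1/q)
    rwa [← Real.rpow_mul (abs_nonneg _), mul_one_div, div_self hq0.ne',
      Real.rpow_one] at h1
  have hHold : ∫ x in Set.Ioc a b, K x * |f'' x|
      ≤ (b-a)^3/24 * ((A+B)/2) ^ (1/q) := by
    rcases eq_or_lt_of_le hq with heq | hq1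
    · rw [← heq] at hQle ⊢
      simp only [div_one, Real.rpow_one] at hQle ⊢
      exact hQle
    · set p := q/(q-1) with hp
      have hq1' : (0:ℝ) < q - 1 := by linarith
      have hpq : Real.HolderConjugate p q := by
        rw [Real.holderConjugate_iff]; constructor
        · rw [hp, lt_div_iff₀ hq1']; linarith
        · rw [hp]; field_simp; ring
      have hsum : 1/p + 1/q = 1 := by
        rw [one_div, one_div]; exact hpq.inv_add_inv_eq_one
      have hp0 : 0 < p := hpq.pos
      have hKm : AEStronglyMeasurable (fun x => K x ^ (1/p)) μ :=
        ((Real.continuous_rpow_const (by positivity)).comp hKcont).aestronglyMeasurable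
      have hGm : AEStronglyMeasurable (fun x => K x ^ (1/q) * |f'' x|) μ := by
        refine (((Real.continuous_rpow_const (by positivity)).comp
          hKcont).aestronglyMeasurable).mul ?_
        refine hmeasf''.norm.congr (ae_of_all _ fun x => ?_)
        simp only [Real.norm_eq_abs]
      have hFmem : MemLp (fun x => K x ^ (1/p)) (ENNReal.ofReal p) μ := by
        apply MemLp.of_bound hKm (((b-a)^2/2) ^ (1/p))
        filter_upwards [haeIcc] with x hx
        rw [Real.norm_of_nonneg (Real.rpow_nonneg (hKnn x) _)]
        exact Real.rpow_le_rpow (hKnn x) (hKle x hx) (by positivity)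
      have hGmem : MemLp (fun x => K x ^ (1/q) * |f'' x|) (ENNReal.ofReal q) μ := by
        apply MemLp.of_bound hGm ((((b-a)^2/2) ^ (1/q)) * (max A B) ^ (1/q))
        filter_upwards [haeIcc] with x hx
        rw [Real.norm_of_nonneg (mul_nonneg (Real.rpow_nonneg (hKnn x) _) (abs_nonneg _))]
        exact mul_le_mul (Real.rpow_le_rpow (hKnn x) (hKle x hx) (by positivity))
          (habsb x hx) (abs_nonneg _) (by positivity)
      have hHolder := MeasureTheory.integral_mul_le_Lp_mul_Lq_of_nonneg hpq
        (μ := μ) (ae_of_all _ fun x => Real.rpow_nonneg (hKnn x) _)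
        (ae_of_all _ fun x => mul_nonneg (Real.rpow_nonneg (hKnn x) _) (abs_nonneg _))
        hFmem hGmem
      have e1 : ∀ x, K x ^ (1/p) * (K x ^ (1/q) * |f'' x|) = K x * |f'' x| := by
        intro x
        rw [← mul_assoc, ← Real.rpow_add' (hKnn x) (by rw [hsum]; norm_num), hsum,
          Real.rpow_one]
      have e2 : ∀ x, (K x ^ (1/p)) ^ p = K x := by
        intro x
        rw [← Real.rpow_mul (hKnn x), one_div, inv_mul_cancel₀ hp0.ne', Real.rpow_one]
      have e3 : ∀ x, (K x ^ (1/q) * |f'' x|) ^ q = K x * |f'' x| ^ q := by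
        intro x
        rw [Real.mul_rpow (Real.rpow_nonneg (hKnn x) _) (abs_nonneg _),
          ← Real.rpow_mul (hKnn x), one_div, inv_mul_cancel₀ hq0.ne', Real.rpow_one]
      simp only [e1, e2, e3] at hHolder
      calc ∫ x in Set.Ioc a b, K x * |f'' x|
          ≤ (∫ x in Set.Ioc a b, K x) ^ (1/p) *
            (∫ x in Set.Ioc a b, K x * |f'' x| ^ q) ^ (1/q) := hHolder
        _ ≤ ((b-a)^3/24) ^ (1/p) * ((b-a)^3/24 * ((A+B)/2)) ^ (1/q) := by
            rw [hPval]
            exact mul_le_mul_of_nonneg_left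
              (Real.rpow_le_rpow hQnn hQle (by positivity)) (by positivity)
        _ = (b-a)^3/24 * ((A+B)/2) ^ (1/q) := by
            rw [Real.mul_rpow hR hX, ← mul_assoc,
              ← Real.rpow_add' hR (by rw [hsum]; norm_num), hsum, Real.rpow_one]
  -- final assembly
  have hfinal : |(∫ x in a..m, ((x-a)^2/2) * f'' x) + (∫ x in m..b, ((b-x)^2/2) * f'' x)|
      ≤ (b-a)^3/24 * ((A+B)/2) ^ (1/q) := le_trans hT hHold
  have hID : (1 / (b - a)) * (∫ x in a..b, f x) - f m
      = (1/(b-a)) * ((∫ x in a..m, ((x-a)^2/2) * f'' x)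
        + (∫ x in m..b, ((b-x)^2/2) * f'' x)) := by
    rw [hS]; field_simp
  rw [hID, abs_mul, abs_of_nonneg (by positivity : (0:ℝ) ≤ 1/(b-a))]
  calc (1/(b-a)) * |(∫ x in a..m, ((x-a)^2/2) * f'' x)
        + (∫ x in m..b, ((b-x)^2/2) * f'' x)|
      ≤ (1/(b-a)) * ((b-a)^3/24 * ((A+B)/2) ^ (1/q)) :=
        mul_le_mul_of_nonneg_left hfinal (by positivity)
    _ = (b-a)^2/24 * ((A+B)/2) ^ (1/q) := by
        field_simp
end

section
/- Let f : I ⊆ ℝ → ℝ be twice differentiable on the interior I° of I, with a, b ∈ I°, a < b, and f'' Lebesgue integrable on [a,b]. If |f''| is quasi-convex on [a,b], then |(1/(b-a)) ∫_a^b f(x) dx − f((a+b)/2)| ≤ ((b-a)²/24) · sup{|f''(a)|, |f''(b)|}. -/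
open MeasureTheory intervalIntegral Set

theorem hermite_hadamard_second_deriv_abs_quasiconvex
    (I : Set ℝ) (hI : I.OrdConnected) (f f' f'' : ℝ → ℝ) (a b : ℝ)
    (ha : a ∈ interior I) (hb : b ∈ interior I) (hab : a < b)
    (hderiv1 : ∀ x ∈ interior I, HasDerivAt f (f' x) x)
    (hderiv2 : ∀ x ∈ interior I, HasDerivAt f' (f'' x) x)
    (hint : IntervalIntegrable f'' volume a b)
    (hqc : QuasiconvexOn ℝ (Set.Icc a b) (fun x => |f'' x|)) :
    |(1 / (b - a)) * (∫ x in a..b, f x) - f ((a + b) / 2)| ≤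
      (b - a) ^ 2 / 24 * max |f'' a| |f'' b| := by
  set m := (a + b) / 2 with hm
  set M := max |f'' a| |f'' b| with hMdef
  clear_value m M
  have ham : a < m := by simp only [hm]; linarith
  have hmb : m < b := by simp only [hm]; linarith
  have hIcc : Set.Icc a b ⊆ interior I := hI.interior.out ha hb
  have hmem : ∀ x ∈ Set.Icc a b, x ∈ interior I := fun x hx => hIcc hx
  have huam : Set.uIcc a m ⊆ Set.uIcc a b := by
    rw [Set.uIcc_of_le ham.le, Set.uIcc_of_le hab.le]
    exact Set.Icc_subset_Icc_right hmb.le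
  have humb : Set.uIcc m b ⊆ Set.uIcc a b := by
    rw [Set.uIcc_of_le hmb.le, Set.uIcc_of_le hab.le]
    exact Set.Icc_subset_Icc_left ham.le
  have hsub1 : Set.uIcc a m ⊆ Set.Icc a b := by
    rw [Set.uIcc_of_le ham.le]; exact Set.Icc_subset_Icc_right hmb.le
  have hsub2 : Set.uIcc m b ⊆ Set.Icc a b := by
    rw [Set.uIcc_of_le hmb.le]; exact Set.Icc_subset_Icc_left ham.le
  have hint1 : IntervalIntegrable f'' volume a m := hint.mono_set huam
  have hint2 : IntervalIntegrable f'' volume m b := hint.mono_set humb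
  have hf'cont : ContinuousOn f' (Set.Icc a b) := fun x hx =>
    ((hderiv2 x (hmem x hx)).continuousAt).continuousWithinAt
  have hfcont : ContinuousOn f (Set.Icc a b) := fun x hx =>
    ((hderiv1 x (hmem x hx)).continuousAt).continuousWithinAt
  have hf'int1 : IntervalIntegrable f' volume a m :=
    (hf'cont.mono hsub1).intervalIntegrable
  have hf'int2 : IntervalIntegrable f' volume m b :=
    (hf'cont.mono hsub2).intervalIntegrable
  have hfint1 : IntervalIntegrable f volume a m :=
    (hfcont.mono hsub1).intervalIntegrable
  have hfint2 : IntervalIntegrable f volume m b :=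
    (hfcont.mono hsub2).intervalIntegrable
  have du : ∀ x : ℝ, HasDerivAt (fun x => (x - a) ^ 2 / 2) (x - a) x := by
    intro x
    have h := (((hasDerivAt_id x).sub_const a).pow 2).div_const 2
    convert h using 1
    all_goals try rfl
    simp
  have du2 : ∀ x : ℝ, HasDerivAt (fun x => (b - x) ^ 2 / 2) (-(b - x)) x := by
    intro x
    have h := (((hasDerivAt_id x).const_sub b).pow 2).div_const 2
    convert h using 1
    all_goals try rfl
    simp
    ring
  have ibp1 : ∫ x in a..m, (x - a) ^ 2 / 2 * f'' x
      = (m - a) ^ 2 / 2 * f' m - ∫ x in a..m, (x - a) * f' x := by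
    have h := integral_mul_deriv_eq_deriv_mul
      (u := fun x => (x - a) ^ 2 / 2) (u' := fun x => x - a) (v := f') (v' := f'')
      (fun x _ => du x) (fun x hx => hderiv2 x (hmem x (hsub1 hx)))
      ((continuous_id.sub continuous_const).intervalIntegrable a m) hint1
    rw [h]; ring_nf
  have ibp1' : ∫ x in a..m, (x - a) * f' x
      = (m - a) * f m - ∫ x in a..m, f x := by
    have h := integral_mul_deriv_eq_deriv_mul
      (u := fun x => x - a) (u' := fun _ => (1:ℝ)) (v := f) (v' := f')
      (fun x _ => (hasDerivAt_id x).sub_const a)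
      (fun x hx => hderiv1 x (hmem x (hsub1 hx)))
      (intervalIntegrable_const) hf'int1
    rw [h]; simp
  have ibp2 : ∫ x in m..b, (b - x) ^ 2 / 2 * f'' x
      = -((b - m) ^ 2 / 2 * f' m) + ∫ x in m..b, (b - x) * f' x := by
    have h := integral_mul_deriv_eq_deriv_mul
      (u := fun x => (b - x) ^ 2 / 2) (u' := fun x => -(b - x)) (v := f') (v' := f'')
      (fun x _ => du2 x) (fun x hx => hderiv2 x (hmem x (hsub2 hx)))
      (((continuous_const.sub continuous_id).neg).intervalIntegrable m b) hint2
    have hneg : (∫ x in m..b, (fun x => -(b - x)) x * f' x)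
        = -∫ x in m..b, (b - x) * f' x := by
      rw [← intervalIntegral.integral_neg]
      apply intervalIntegral.integral_congr
      intro x _
      ring
    rw [h, hneg, sub_neg_eq_add]
    ring_nf
  have ibp2' : ∫ x in m..b, (b - x) * f' x
      = -((b - m) * f m) + ∫ x in m..b, f x := by
    have h := integral_mul_deriv_eq_deriv_mul
      (u := fun x => b - x) (u' := fun _ => (-1:ℝ)) (v := f) (v' := f')
      (fun x _ => (hasDerivAt_id x).const_sub b)
      (fun x hx => hderiv1 x (hmem x (hsub2 hx)))
      (intervalIntegrable_const) hf'int2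
    rw [h]
    simp only [neg_one_mul, intervalIntegral.integral_neg]
    ring_nf
  have hsplit : (∫ x in a..b, f x) = (∫ x in a..m, f x) + ∫ x in m..b, f x :=
    (intervalIntegral.integral_add_adjacent_intervals hfint1 hfint2).symm
  have hma : m - a = (b - a) / 2 := by rw [hm]; ring
  have hbm : b - m = (b - a) / 2 := by rw [hm]; ring
  have key : (∫ x in a..b, f x) - (b - a) * f m
      = (∫ x in a..m, (x - a) ^ 2 / 2 * f'' x) + ∫ x in m..b, (b - x) ^ 2 / 2 * f'' x := by
    rw [ibp1, ibp2, ibp1', ibp2', hsplit]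
    have h1 : (m - a) ^ 2 / 2 = (b - m) ^ 2 / 2 := by rw [hma, hbm]
    rw [h1]
    have h2 : b - a = (m - a) + (b - m) := by ring
    rw [h2]
    ring
  have hM : ∀ x ∈ Set.Icc a b, |f'' x| ≤ M := by
    intro x hx
    have hconv := hqc M
    have hsegsub := hconv.segment_subset
      (x := a) (y := b)
      ⟨Set.left_mem_Icc.2 hab.le, by rw [hMdef]; exact le_max_left _ _⟩
      ⟨Set.right_mem_Icc.2 hab.le, by rw [hMdef]; exact le_max_right _ _⟩
    exact (hsegsub (by rwa [segment_eq_Icc hab.le])).2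
  have hM0 : 0 ≤ M := by
    rw [hMdef]; exact le_trans (abs_nonneg _) (le_max_left _ _)
  have habs1 : IntervalIntegrable (fun x => |f'' x|) volume a m := hint1.abs
  have habs2 : IntervalIntegrable (fun x => |f'' x|) volume m b := hint2.abs
  have b1 : |∫ x in a..m, (x - a) ^ 2 / 2 * f'' x| ≤ M * (m - a) ^ 3 / 6 := by
    have habseq : (fun x => |(x - a) ^ 2 / 2 * f'' x|)
        = fun x => (x - a) ^ 2 / 2 * |f'' x| := by
      funext x
      rw [abs_mul, abs_of_nonneg (by positivity : (0:ℝ) ≤ (x - a) ^ 2 / 2)]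
    have h1 : |∫ x in a..m, (x - a) ^ 2 / 2 * f'' x|
        ≤ ∫ x in a..m, |(x - a) ^ 2 / 2 * f'' x| :=
      intervalIntegral.abs_integral_le_integral_abs ham.le
    have h2 : (∫ x in a..m, |(x - a) ^ 2 / 2 * f'' x|)
        ≤ ∫ x in a..m, (x - a) ^ 2 / 2 * M := by
      rw [habseq]
      apply intervalIntegral.integral_mono_on ham.le
      · exact habs1.continuousOn_mul
          (((continuous_id.sub continuous_const).pow 2).div_const 2).continuousOn
      · exact intervalIntegrable_const.continuousOn_mul
          (((continuous_id.sub continuous_const).pow 2).div_const 2).continuousOn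
      · intro x hx
        exact mul_le_mul_of_nonneg_left
          (hM x ⟨hx.1, hx.2.trans hmb.le⟩) (by positivity)
    have h3 : (∫ x in a..m, (x - a) ^ 2 / 2 * M) = M * (m - a) ^ 3 / 6 := by
      have h := intervalIntegral.integral_eq_sub_of_hasDerivAt
        (f := fun x => (x - a) ^ 3 / 6 * M) (f' := fun x => (x - a) ^ 2 / 2 * M)
        (a := a) (b := m)
        (fun x _ => by
          have h := ((((hasDerivAt_id x).sub_const a).pow 3).div_const 6).mul
            (hasDerivAt_const x M)
          convert h using 1
          all_goals try rfl
          push_cast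
          simp only [id_eq, mul_zero, add_zero, mul_one]
          ring)
        (((((continuous_id.sub continuous_const).pow 2).div_const 2).mul
          continuous_const).intervalIntegrable a m)
      rw [h]; ring
    linarith
  have b2 : |∫ x in m..b, (b - x) ^ 2 / 2 * f'' x| ≤ M * (b - m) ^ 3 / 6 := by
    have habseq : (fun x => |(b - x) ^ 2 / 2 * f'' x|)
        = fun x => (b - x) ^ 2 / 2 * |f'' x| := by
      funext x
      rw [abs_mul, abs_of_nonneg (by positivity : (0:ℝ) ≤ (b - x) ^ 2 / 2)]
    have h1 : |∫ x in m..b, (b - x) ^ 2 / 2 * f'' x|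
        ≤ ∫ x in m..b, |(b - x) ^ 2 / 2 * f'' x| :=
      intervalIntegral.abs_integral_le_integral_abs hmb.le
    have h2 : (∫ x in m..b, |(b - x) ^ 2 / 2 * f'' x|)
        ≤ ∫ x in m..b, (b - x) ^ 2 / 2 * M := by
      rw [habseq]
      apply intervalIntegral.integral_mono_on hmb.le
      · exact habs2.continuousOn_mul
          (((continuous_const.sub continuous_id).pow 2).div_const 2).continuousOn
      · exact intervalIntegrable_const.continuousOn_mul
          (((continuous_const.sub continuous_id).pow 2).div_const 2).continuousOn
      · intro x hx
        exact mul_le_mul_of_nonneg_left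
          (hM x ⟨ham.le.trans hx.1, hx.2⟩) (by positivity)
    have h3 : (∫ x in m..b, (b - x) ^ 2 / 2 * M) = M * (b - m) ^ 3 / 6 := by
      have h := intervalIntegral.integral_eq_sub_of_hasDerivAt
        (f := fun x => -((b - x) ^ 3 / 6) * M) (f' := fun x => (b - x) ^ 2 / 2 * M)
        (a := m) (b := b)
        (fun x _ => by
          have h := ((((hasDerivAt_id x).const_sub b).pow 3).div_const 6).neg.mul
            (hasDerivAt_const x M)
          convert h using 1
          all_goals try rfl
          push_cast
          simp only [id_eq, mul_zero, add_zero, mul_one]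
          ring)
        (((((continuous_const.sub continuous_id).pow 2).div_const 2).mul
          continuous_const).intervalIntegrable m b)
      rw [h]; ring
    linarith
  have hba : (0:ℝ) < b - a := by linarith
  have hkey2 : |(∫ x in a..b, f x) - (b - a) * f m| ≤ M * (b - a) ^ 3 / 24 := by
    rw [key]
    calc |(∫ x in a..m, (x - a) ^ 2 / 2 * f'' x) + ∫ x in m..b, (b - x) ^ 2 / 2 * f'' x|
        ≤ |∫ x in a..m, (x - a) ^ 2 / 2 * f'' x| + |∫ x in m..b, (b - x) ^ 2 / 2 * f'' x| :=
          abs_add_le _ _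
      _ ≤ M * (m - a) ^ 3 / 6 + M * (b - m) ^ 3 / 6 := add_le_add b1 b2
      _ = M * (b - a) ^ 3 / 24 := by rw [hma, hbm]; ring
  have heq : (1 / (b - a)) * (∫ x in a..b, f x) - f m
      = (1 / (b - a)) * ((∫ x in a..b, f x) - (b - a) * f m) := by
    field_simp
  rw [heq, abs_mul, abs_of_pos (by positivity : (0:ℝ) < 1 / (b - a))]
  calc (1 / (b - a)) * |(∫ x in a..b, f x) - (b - a) * f m|
      ≤ (1 / (b - a)) * (M * (b - a) ^ 3 / 24) :=
        mul_le_mul_of_nonneg_left hkey2 (by positivity)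
    _ = (b - a) ^ 2 / 24 * M := by field_simp
end

section
/- Let f : I ⊆ ℝ → ℝ be twice differentiable on the interior I° of I, with a, b ∈ I°, a < b, f'' Lebesgue integrable on [a,b], and |f''| quasi-convex on [a,b]. If moreover |f''| is increasing on [a,b], then |(1/(b-a)) ∫_a^b f(x) dx − f((a+b)/2)| ≤ ((b-a)²/24) · |f''(b)|. -/
open MeasureTheory Set intervalIntegral

theorem hermite_hadamard_second_deriv_abs_quasiconvex_increasing
    (I : Set ℝ) (hI : I.OrdConnected) (f f' f'' : ℝ → ℝ) (a b : ℝ)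
    (ha : a ∈ interior I) (hb : b ∈ interior I) (hab : a < b)
    (hderiv1 : ∀ x ∈ interior I, HasDerivAt f (f' x) x)
    (hderiv2 : ∀ x ∈ interior I, HasDerivAt f' (f'' x) x)
    (hint : IntervalIntegrable f'' volume a b)
    (hqc : QuasiconvexOn ℝ (Set.Icc a b) (fun x => |f'' x|))
    (hmono : MonotoneOn (fun x => |f'' x|) (Set.Icc a b)) :
    |(1 / (b - a)) * (∫ x in a..b, f x) - f ((a + b) / 2)| ≤
      (b - a) ^ 2 / 24 * |f'' b| := by
  set m := (a + b) / 2 with hm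
  set C := |f'' b| with hCdef
  have hC : (0 : ℝ) ≤ C := abs_nonneg _
  have ham : a ≤ m := by rw [hm]; linarith
  have hmb : m ≤ b := by rw [hm]; linarith
  have hIcc : Set.Icc a b ⊆ interior I := hI.interior.out ha hb
  have hsub1 : Set.uIcc a m ⊆ Set.uIcc a b := by
    rw [uIcc_of_le ham, uIcc_of_le hab.le]; exact Icc_subset_Icc le_rfl hmb
  have hsub2 : Set.uIcc m b ⊆ Set.uIcc a b := by
    rw [uIcc_of_le hmb, uIcc_of_le hab.le]; exact Icc_subset_Icc ham le_rfl
  have hIcc1 : ∀ x ∈ Set.uIcc a m, x ∈ interior I := fun x hx =>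
    hIcc (by rw [uIcc_of_le hab.le] at hsub1; exact hsub1 hx)
  have hIcc2 : ∀ x ∈ Set.uIcc m b, x ∈ interior I := fun x hx =>
    hIcc (by rw [uIcc_of_le hab.le] at hsub2; exact hsub2 hx)
  -- continuity of f and f' on the interval
  have hcontf : ContinuousOn f (Set.uIcc a b) := fun x hx =>
    (hderiv1 x (hIcc (by rwa [uIcc_of_le hab.le] at hx))).continuousAt.continuousWithinAt
  have hcontf' : ContinuousOn f' (Set.uIcc a b) := fun x hx =>
    (hderiv2 x (hIcc (by rwa [uIcc_of_le hab.le] at hx))).continuousAt.continuousWithinAt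
  -- integrability
  have hif1 : IntervalIntegrable f volume a m :=
    (hcontf.mono hsub1).intervalIntegrable
  have hif2 : IntervalIntegrable f volume m b :=
    (hcontf.mono hsub2).intervalIntegrable
  have hif'1 : IntervalIntegrable f' volume a m :=
    (hcontf'.mono hsub1).intervalIntegrable
  have hif'2 : IntervalIntegrable f' volume m b :=
    (hcontf'.mono hsub2).intervalIntegrable
  have hif''1 : IntervalIntegrable f'' volume a m := hint.mono_set hsub1
  have hif''2 : IntervalIntegrable f'' volume m b := hint.mono_set hsub2
  -- derivative helpers
  have hd1 : ∀ c x : ℝ, HasDerivAt (fun y => (y - c) ^ 2 / 2) (x - c) x := by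
    intro c x
    have h : HasDerivAt (fun y => (y - c) ^ 2 / 2)
        ((2 : ℕ) * (x - c) ^ (2 - 1) * 1 / 2) x :=
      (((hasDerivAt_id x).sub_const c).pow 2).div_const 2
    convert h using 1
    push_cast
    ring
  have hd2 : ∀ c x : ℝ, HasDerivAt (fun y => y - c) (1 : ℝ) x := by
    intro c x; simpa using (hasDerivAt_id x).sub_const c
  -- Integration by parts on [a, m]
  have ibp1 : ∫ x in a..m, (x - a) ^ 2 / 2 * f'' x =
      (m - a) ^ 2 / 2 * f' m - ∫ x in a..m, (x - a) * f' x := by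
    have := integral_mul_deriv_eq_deriv_mul (u := fun y => (y - a) ^ 2 / 2)
      (u' := fun y => y - a) (v := f') (v' := f'')
      (fun x _ => hd1 a x) (fun x hx => hderiv2 x (hIcc1 x hx))
      (Continuous.intervalIntegrable (continuous_id.sub continuous_const) a m) hif''1
    simpa using this
  have ibp2 : ∫ x in a..m, (x - a) * f' x =
      (m - a) * f m - ∫ x in a..m, f x := by
    have := integral_mul_deriv_eq_deriv_mul (u := fun y => y - a)
      (u' := fun _ => (1 : ℝ)) (v := f) (v' := f')
      (fun x _ => hd2 a x) (fun x hx => hderiv1 x (hIcc1 x hx))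
      (Continuous.intervalIntegrable continuous_const a m) hif'1
    simpa using this
  -- Integration by parts on [m, b]
  have ibp3 : ∫ x in m..b, (b - x) ^ 2 / 2 * f'' x =
      -((b - m) ^ 2 / 2 * f' m) - ∫ x in m..b, (x - b) * f' x := by
    have h := integral_mul_deriv_eq_deriv_mul (u := fun y => (y - b) ^ 2 / 2)
      (u' := fun y => y - b) (v := f') (v' := f'')
      (fun x _ => hd1 b x) (fun x hx => hderiv2 x (hIcc2 x hx))
      (Continuous.intervalIntegrable (continuous_id.sub continuous_const) m b) hif''2
    have heq : ∫ x in m..b, (b - x) ^ 2 / 2 * f'' x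
        = ∫ x in m..b, (x - b) ^ 2 / 2 * f'' x := by
      apply intervalIntegral.integral_congr; intro x _; ring_nf
    rw [heq, h]; ring_nf
  have ibp4 : ∫ x in m..b, (x - b) * f' x =
      -((m - b) * f m) - ∫ x in m..b, f x := by
    have := integral_mul_deriv_eq_deriv_mul (u := fun y => y - b)
      (u' := fun _ => (1 : ℝ)) (v := f) (v' := f')
      (fun x _ => hd2 b x) (fun x hx => hderiv1 x (hIcc2 x hx))
      (Continuous.intervalIntegrable continuous_const m b) hif'2
    simpa using this
  -- the key identity
  have hsplit : ∫ x in a..b, f x = (∫ x in a..m, f x) + ∫ x in m..b, f x :=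
    (intervalIntegral.integral_add_adjacent_intervals hif1 hif2).symm
  have hma : m - a = (b - a) / 2 := by rw [hm]; ring
  have hbm : b - m = (b - a) / 2 := by rw [hm]; ring
  have key : (∫ x in a..b, f x) - (b - a) * f m =
      (∫ x in a..m, (x - a) ^ 2 / 2 * f'' x) +
        ∫ x in m..b, (b - x) ^ 2 / 2 * f'' x := by
    rw [ibp1, ibp3, ibp2, ibp4, hsplit, hma, hbm]; ring
  -- bounds on each piece
  have hbound1 : |∫ x in a..m, (x - a) ^ 2 / 2 * f'' x| ≤
      (m - a) ^ 3 / 6 * C := by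
    have hle : ∀ᵐ t ∂(volume.restrict (Set.uIoc a m)),
        ‖(t - a) ^ 2 / 2 * f'' t‖ ≤ (t - a) ^ 2 / 2 * C := by
      refine ae_restrict_of_forall_mem measurableSet_uIoc fun t ht => ?_
      rw [uIoc_of_le ham] at ht
      have ht' : t ∈ Set.Icc a b := ⟨ht.1.le, ht.2.trans hmb⟩
      have hmle : |f'' t| ≤ C := hmono ht' (right_mem_Icc.2 hab.le) ht'.2
      have hnn : (0 : ℝ) ≤ (t - a) ^ 2 / 2 := by positivity
      rw [Real.norm_eq_abs, abs_mul, abs_of_nonneg hnn]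
      exact mul_le_mul_of_nonneg_left hmle hnn
    have hgint : IntervalIntegrable (fun t => (t - a) ^ 2 / 2 * C) volume a m :=
      Continuous.intervalIntegrable
        ((((continuous_id.sub continuous_const).pow 2).div_const 2).mul continuous_const) a m
    have hval : ∫ t in a..m, (t - a) ^ 2 / 2 * C = (m - a) ^ 3 / 6 * C := by
      have hF : ∀ x : ℝ, HasDerivAt (fun y => (y - a) ^ 3 / 6 * C)
          ((x - a) ^ 2 / 2 * C) x := by
        intro x
        have h : HasDerivAt (fun y => (y - a) ^ 3 / 6 * C)
            ((3 : ℕ) * (x - a) ^ (3 - 1) * 1 / 6 * C) x :=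
          ((((hasDerivAt_id x).sub_const a).pow 3).div_const 6).mul_const C
        convert h using 1
        push_cast
        ring
      rw [intervalIntegral.integral_eq_sub_of_hasDerivAt (fun x _ => hF x) hgint]
      simp
    calc |∫ x in a..m, (x - a) ^ 2 / 2 * f'' x|
        ≤ |∫ t in a..m, (t - a) ^ 2 / 2 * C| := by
          simpa [Real.norm_eq_abs] using
            intervalIntegral.norm_integral_le_abs_of_norm_le hle hgint
      _ = (m - a) ^ 3 / 6 * C := by
          rw [hval, abs_of_nonneg (mul_nonneg (div_nonneg
            (pow_nonneg (sub_nonneg.2 ham) 3) (by norm_num)) hC)]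
  have hbound2 : |∫ x in m..b, (b - x) ^ 2 / 2 * f'' x| ≤
      (b - m) ^ 3 / 6 * C := by
    have hle : ∀ᵐ t ∂(volume.restrict (Set.uIoc m b)),
        ‖(b - t) ^ 2 / 2 * f'' t‖ ≤ (b - t) ^ 2 / 2 * C := by
      refine ae_restrict_of_forall_mem measurableSet_uIoc fun t ht => ?_
      rw [uIoc_of_le hmb] at ht
      have ht' : t ∈ Set.Icc a b := ⟨ham.trans ht.1.le, ht.2⟩
      have hmle : |f'' t| ≤ C := hmono ht' (right_mem_Icc.2 hab.le) ht'.2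
      have hnn : (0 : ℝ) ≤ (b - t) ^ 2 / 2 := by positivity
      rw [Real.norm_eq_abs, abs_mul, abs_of_nonneg hnn]
      exact mul_le_mul_of_nonneg_left hmle hnn
    have hgint : IntervalIntegrable (fun t => (b - t) ^ 2 / 2 * C) volume m b :=
      Continuous.intervalIntegrable
        ((((continuous_const.sub continuous_id).pow 2).div_const 2).mul continuous_const) m b
    have hval : ∫ t in m..b, (b - t) ^ 2 / 2 * C = (b - m) ^ 3 / 6 * C := by
      have hF : ∀ x : ℝ, HasDerivAt (fun y => (y - b) ^ 3 / 6 * C)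
          ((b - x) ^ 2 / 2 * C) x := by
        intro x
        have h : HasDerivAt (fun y => (y - b) ^ 3 / 6 * C)
            ((3 : ℕ) * (x - b) ^ (3 - 1) * 1 / 6 * C) x :=
          ((((hasDerivAt_id x).sub_const b).pow 3).div_const 6).mul_const C
        convert h using 1
        push_cast
        ring
      rw [intervalIntegral.integral_eq_sub_of_hasDerivAt (fun x _ => hF x) hgint]
      ring_nf
    calc |∫ x in m..b, (b - x) ^ 2 / 2 * f'' x|
        ≤ |∫ t in m..b, (b - t) ^ 2 / 2 * C| := by
          simpa [Real.norm_eq_abs] using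
            intervalIntegral.norm_integral_le_abs_of_norm_le hle hgint
      _ = (b - m) ^ 3 / 6 * C := by
          rw [hval, abs_of_nonneg (mul_nonneg (div_nonneg
            (pow_nonneg (sub_nonneg.2 hmb) 3) (by norm_num)) hC)]
  -- assemble
  have hE : |(∫ x in a..b, f x) - (b - a) * f m| ≤ (b - a) ^ 3 / 24 * C := by
    rw [key]
    calc |(∫ x in a..m, (x - a) ^ 2 / 2 * f'' x) + ∫ x in m..b, (b - x) ^ 2 / 2 * f'' x|
        ≤ |∫ x in a..m, (x - a) ^ 2 / 2 * f'' x| + |∫ x in m..b, (b - x) ^ 2 / 2 * f'' x| :=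
          abs_add_le _ _
      _ ≤ (m - a) ^ 3 / 6 * C + (b - m) ^ 3 / 6 * C := add_le_add hbound1 hbound2
      _ = (b - a) ^ 3 / 24 * C := by rw [hma, hbm]; ring
  have hba : (0 : ℝ) < b - a := sub_pos.2 hab
  have hrw : (1 / (b - a)) * (∫ x in a..b, f x) - f m =
      (1 / (b - a)) * ((∫ x in a..b, f x) - (b - a) * f m) := by
    field_simp
  rw [hrw, abs_mul, abs_of_pos (by positivity : (0:ℝ) < 1 / (b - a))]
  calc 1 / (b - a) * |(∫ x in a..b, f x) - (b - a) * f m|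
      ≤ 1 / (b - a) * ((b - a) ^ 3 / 24 * C) :=
        mul_le_mul_of_nonneg_left hE (by positivity)
    _ = (b - a) ^ 2 / 24 * C := by field_simp
end

section
/- Let f : I ⊆ ℝ → ℝ be twice differentiable on the interior I° of I, with a, b ∈ I°, a < b, f'' Lebesgue integrable on [a,b], and |f''| quasi-convex on [a,b]. If moreover |f''| is decreasing on [a,b], then |(1/(b-a)) ∫_a^b f(x) dx − f((a+b)/2)| ≤ ((b-a)²/24) · |f''(a)|. -/
open MeasureTheory

theorem hermite_hadamard_second_deriv_abs_quasiconvex_decreasing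
    (I : Set ℝ) (hI : I.OrdConnected) (f f' f'' : ℝ → ℝ) (a b : ℝ)
    (ha : a ∈ interior I) (hb : b ∈ interior I) (hab : a < b)
    (hderiv1 : ∀ x ∈ interior I, HasDerivAt f (f' x) x)
    (hderiv2 : ∀ x ∈ interior I, HasDerivAt f' (f'' x) x)
    (hint : IntervalIntegrable f'' volume a b)
    (hqc : QuasiconvexOn ℝ (Set.Icc a b) (fun x => |f'' x|))
    (hanti : AntitoneOn (fun x => |f'' x|) (Set.Icc a b)) :
    |(1 / (b - a)) * (∫ x in a..b, f x) - f ((a + b) / 2)| ≤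
      (b - a) ^ 2 / 24 * |f'' a| := by
  set m : ℝ := (a + b) / 2 with hm
  have hIcc : Set.Icc a b ⊆ interior I := hI.interior.out ha hb
  have hmem : m ∈ Set.Icc a b := ⟨by simp only [hm]; linarith, by simp only [hm]; linarith⟩
  set M : ℝ := |f'' a| with hM
  have hbound : ∀ x ∈ Set.Icc a b, |f'' x| ≤ M := fun x hx =>
    hanti (Set.left_mem_Icc.2 hab.le) hx hx.1
  -- f' is M-Lipschitz relative to m on [a,b]
  have hlip : ∀ t ∈ Set.Icc a b, |f' t - f' m| ≤ M * |t - m| := by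
    intro t ht
    have := Convex.norm_image_sub_le_of_norm_hasDerivWithin_le
      (f := f') (f' := f'') (s := Set.Icc a b)
      (fun y hy => (hderiv2 y (hIcc hy)).hasDerivWithinAt)
      (fun y hy => hbound y hy) (convex_Icc a b) hmem ht
    simpa [Real.norm_eq_abs] using this
  -- continuity of f and f'
  have hcf : ContinuousOn f (Set.Icc a b) := fun x hx =>
    ((hderiv1 x (hIcc hx)).continuousAt).continuousWithinAt
  have hcf' : ContinuousOn f' (Set.Icc a b) := fun x hx =>
    ((hderiv2 x (hIcc hx)).continuousAt).continuousWithinAt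
  set g : ℝ → ℝ := fun x => f x - f m - f' m * (x - m) with hg
  have hcg : ContinuousOn g (Set.Icc a b) := by
    apply (hcf.sub continuousOn_const).sub
    exact (continuousOn_const.mul ((continuousOn_id).sub continuousOn_const))
  have hgderiv : ∀ t ∈ Set.Icc a b, HasDerivAt g (f' t - f' m) t := by
    intro t ht
    have h1 := (hderiv1 t (hIcc ht)).sub_const (f m)
    have h2 : HasDerivAt (fun x : ℝ => f' m * (x - m)) (f' m) t := by
      simpa using ((hasDerivAt_id t).sub_const m).const_mul (f' m)
    exact h1.sub h2
  -- pointwise quadratic bound on g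
  have hgbound : ∀ x ∈ Set.Icc a b, |g x| ≤ M / 2 * (x - m) ^ 2 := by
    intro x hx
    have hsub : Set.uIcc m x ⊆ Set.Icc a b := Set.uIcc_subset_Icc hmem hx
    have hintg : IntervalIntegrable (fun t => f' t - f' m) volume m x :=
      ((hcf'.mono hsub).sub continuousOn_const).intervalIntegrable
    have hftc : ∫ t in m..x, (f' t - f' m) = g x - g m := by
      exact intervalIntegral.integral_eq_sub_of_hasDerivAt
        (fun t ht => hgderiv t (hsub ht)) hintg
    have hgm : g m = 0 := by simp [hg]
    have key : |∫ t in m..x, (f' t - f' m)| ≤ M / 2 * (x - m) ^ 2 := by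
      have hintb : ∀ c d : ℝ, IntervalIntegrable (fun t => M * |t - m|) volume c d := by
        intro c d
        exact (continuous_const.mul (continuous_abs.comp (continuous_id.sub continuous_const))).intervalIntegrable _ _
      rcases le_total m x with hmx | hxm
      · have h1 : |∫ t in m..x, (f' t - f' m)| ≤ ∫ t in m..x, |f' t - f' m| := by
          simpa [Real.norm_eq_abs] using
            intervalIntegral.norm_integral_le_integral_norm (f := fun t => f' t - f' m) hmx
        have h2 : (∫ t in m..x, |f' t - f' m|) ≤ ∫ t in m..x, M * |t - m| := by
          apply intervalIntegral.integral_mono_on hmx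
          · exact (hintg.norm)
          · exact hintb m x
          · intro t ht
            exact hlip t (hsub (Set.mem_uIcc_of_le ht.1 ht.2))
        have h3 : (∫ t in m..x, M * |t - m|) = M / 2 * (x - m) ^ 2 := by
          have : ∀ t ∈ Set.Icc m x, M * |t - m| = M * (t - m) := by
            intro t ht
            rw [abs_of_nonneg (by linarith [ht.1])]
          rw [intervalIntegral.integral_congr (g := fun t => M * (t - m))
            (fun t ht => by rw [Set.uIcc_of_le hmx] at ht; exact this t ht)]
          rw [intervalIntegral.integral_const_mul]
          have : (∫ t in m..x, (t - m)) = (x - m) ^ 2 / 2 := by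
            have := intervalIntegral.integral_comp_sub_right (a := m) (b := x) (fun t => t) m
            rw [this, integral_id]
            ring
          rw [this]; ring
        calc |∫ t in m..x, (f' t - f' m)| ≤ _ := h1
          _ ≤ _ := h2
          _ = _ := h3
      · have h0 : |∫ t in m..x, (f' t - f' m)| = |∫ t in x..m, (f' t - f' m)| := by
          rw [intervalIntegral.integral_symm, abs_neg]
        have h1 : |∫ t in x..m, (f' t - f' m)| ≤ ∫ t in x..m, |f' t - f' m| := by
          simpa [Real.norm_eq_abs] using
            intervalIntegral.norm_integral_le_integral_norm (f := fun t => f' t - f' m) hxm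
        have h2 : (∫ t in x..m, |f' t - f' m|) ≤ ∫ t in x..m, M * |t - m| := by
          apply intervalIntegral.integral_mono_on hxm
          · exact hintg.symm.norm
          · exact hintb x m
          · intro t ht
            exact hlip t (hsub (Set.mem_uIcc_of_ge ht.1 ht.2))
        have h3 : (∫ t in x..m, M * |t - m|) = M / 2 * (x - m) ^ 2 := by
          have : ∀ t ∈ Set.Icc x m, M * |t - m| = M * (m - t) := by
            intro t ht
            rw [abs_of_nonpos (by linarith [ht.2])]; ring
          rw [intervalIntegral.integral_congr (g := fun t => M * (m - t))
            (fun t ht => by rw [Set.uIcc_of_le hxm] at ht; exact this t ht)]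
          have h6 : (∫ t in x..m, (t - m)) = -((x - m) ^ 2 / 2) := by
            have := intervalIntegral.integral_comp_sub_right (a := x) (b := m) (fun t => t) m
            rw [this, integral_id]
            ring
          have e1 : (fun t : ℝ => M * (m - t)) = fun t => M * -(t - m) := by
            funext t; ring
          rw [e1]
          simp only [mul_neg]
          rw [intervalIntegral.integral_neg, intervalIntegral.integral_const_mul, h6]
          ring
        rw [h0]
        calc |∫ t in x..m, (f' t - f' m)| ≤ _ := h1
          _ ≤ _ := h2
          _ = _ := h3
    rwa [hftc, hgm, sub_zero] at key
  -- integral of g bound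
  have hintgab : IntervalIntegrable g volume a b :=
    (hcg.mono (by rw [Set.uIcc_of_le hab.le])).intervalIntegrable
  have hIg : |∫ x in a..b, g x| ≤ M * (b - a) ^ 3 / 24 := by
    have h1 : |∫ x in a..b, g x| ≤ ∫ x in a..b, |g x| := by
      simpa [Real.norm_eq_abs] using
        intervalIntegral.norm_integral_le_integral_norm (f := g) hab.le
    have h2 : (∫ x in a..b, |g x|) ≤ ∫ x in a..b, M / 2 * (x - m) ^ 2 := by
      apply intervalIntegral.integral_mono_on hab.le hintgab.norm
      · exact (continuous_const.mul ((continuous_id.sub continuous_const).pow 2)).intervalIntegrable _ _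
      · exact hgbound
    have h3 : (∫ x in a..b, M / 2 * (x - m) ^ 2) = M * (b - a) ^ 3 / 24 := by
      rw [intervalIntegral.integral_const_mul]
      have := intervalIntegral.integral_comp_sub_right (a := a) (b := b) (fun t => t ^ 2) m
      rw [this, integral_pow]
      have hbm : b - m = (b - a) / 2 := by rw [hm]; ring
      have ham : a - m = -((b - a) / 2) := by rw [hm]; ring
      rw [hbm, ham]; ring
    calc |∫ x in a..b, g x| ≤ _ := h1
      _ ≤ _ := h2
      _ = _ := h3
  -- decompose ∫ f
  have hdecomp : (∫ x in a..b, f x) = (∫ x in a..b, g x) + (b - a) * f m := by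
    have hconst : IntervalIntegrable (fun _ : ℝ => f m) volume a b := intervalIntegrable_const
    have hlin2 : IntervalIntegrable (fun x : ℝ => f' m * (x - m)) volume a b := by
      apply Continuous.intervalIntegrable
      continuity
    have h5 : (∫ x in a..b, (x - m)) = 0 := by
      have := intervalIntegral.integral_comp_sub_right (a := a) (b := b) (fun t => t) m
      rw [this, integral_id]
      have hbm : b - m = (b - a) / 2 := by rw [hm]; ring
      have ham : a - m = -((b - a) / 2) := by rw [hm]; ring
      rw [hbm, ham]; ring
    have hsplit : (∫ x in a..b, f x)
        = (∫ x in a..b, g x) + ((∫ _x in a..b, f m) + ∫ x in a..b, f' m * (x - m)) := by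
      rw [← intervalIntegral.integral_add hconst hlin2,
        ← intervalIntegral.integral_add hintgab (hconst.add hlin2)]
      congr 1; funext x; simp [hg]
    rw [hsplit, intervalIntegral.integral_const, intervalIntegral.integral_const_mul, h5]
    simp [mul_comm]
  -- finish
  have hba : (0:ℝ) < b - a := by linarith
  have : (1 / (b - a)) * (∫ x in a..b, f x) - f m = (1 / (b - a)) * ∫ x in a..b, g x := by
    rw [hdecomp]
    field_simp
    ring
  rw [this, abs_mul, abs_of_nonneg (by positivity : (0:ℝ) ≤ 1 / (b - a))]
  calc (1 / (b - a)) * |∫ x in a..b, g x| ≤ (1 / (b - a)) * (M * (b - a) ^ 3 / 24) := by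
        apply mul_le_mul_of_nonneg_left hIg (by positivity)
    _ = (b - a) ^ 2 / 24 * M := by field_simp
end

section
/- Let f : I ⊆ ℝ → ℝ be twice differentiable on the interior I° of I, with a, b ∈ I°, a < b, and f'' Lebesgue integrable on [a,b]. Let q > 1 and p > 1 with 1/p + 1/q = 1. If |f''|^q is quasi-convex on [a,b], then |(1/(b-a)) ∫_a^b f(x) dx − f((a+b)/2)| ≤ ((b-a)²/(8·(2p+1)^{1/p})) · (sup{|f''(a)|^q, |f''(b)|^q})^{1/q}. -/
set_option maxHeartbeats 1000000


open MeasureTheory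

theorem hermite_hadamard_second_deriv_abs_pow_quasiconvex_holder
    (I : Set ℝ) (hI : I.OrdConnected) (f f' f'' : ℝ → ℝ) (a b : ℝ)
    (ha : a ∈ interior I) (hb : b ∈ interior I) (hab : a < b)
    (hderiv1 : ∀ x ∈ interior I, HasDerivAt f (f' x) x)
    (hderiv2 : ∀ x ∈ interior I, HasDerivAt f' (f'' x) x)
    (hint : IntervalIntegrable f'' volume a b)
    (p q : ℝ) (hp : 1 < p) (hq : 1 < q) (hpq : 1 / p + 1 / q = 1)
    (hqc : QuasiconvexOn ℝ (Set.Icc a b) (fun x => |f'' x| ^ q)) :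
    |(1 / (b - a)) * (∫ x in a..b, f x) - f ((a + b) / 2)| ≤
      (b - a) ^ 2 / (8 * (2 * p + 1) ^ (1 / p)) *
        (max (|f'' a| ^ q) (|f'' b| ^ q)) ^ (1 / q) := by
  have hba : (0:ℝ) < b - a := by linarith
  set m : ℝ := (a + b) / 2 with hm
  set M : ℝ := max |f'' a| |f'' b| with hMdef
  have hMnn : 0 ≤ M := le_trans (abs_nonneg _) (le_max_left _ _)
  have hq0 : (0:ℝ) < q := lt_trans one_pos hq
  have hp0 : (0:ℝ) < p := lt_trans one_pos hp
  have ham : a ≤ m := by rw [hm]; linarith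
  have hmb : m ≤ b := by rw [hm]; linarith
  have hma : m - a = (b - a) / 2 := by rw [hm]; ring
  have hbm : b - m = (b - a) / 2 := by rw [hm]; ring
  -- interior I is ordConnected and contains Icc a b
  have hIcc : Set.Icc a b ⊆ interior I := by
    have hconv : Convex ℝ I := hI.convex
    exact (hconv.interior.ordConnected).out ha hb
  -- the RHS max term equals M ^ q
  have hmaxq : max (|f'' a| ^ q) (|f'' b| ^ q) = M ^ q := by
    rcases le_total |f'' a| |f'' b| with h | h
    · rw [hMdef, max_eq_right h,
        max_eq_right (Real.rpow_le_rpow (abs_nonneg _) h hq0.le)]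
    · rw [hMdef, max_eq_left h,
        max_eq_left (Real.rpow_le_rpow (abs_nonneg _) h hq0.le)]
  have hMq : (max (|f'' a| ^ q) (|f'' b| ^ q)) ^ (1 / q) = M := by
    rw [hmaxq, ← Real.rpow_mul hMnn, mul_one_div_cancel hq0.ne', Real.rpow_one]
  -- pointwise bound on f''
  have hbound : ∀ x ∈ Set.Icc a b, |f'' x| ≤ M := by
    intro x hx
    have hconv := (hqc (max (|f'' a| ^ q) (|f'' b| ^ q))).ordConnected
    have hxmem := hconv.out
      (⟨Set.left_mem_Icc.2 (le_of_lt hab), le_max_left _ _⟩ :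
        a ∈ {y ∈ Set.Icc a b | |f'' y| ^ q ≤ max (|f'' a| ^ q) (|f'' b| ^ q)})
      (⟨Set.right_mem_Icc.2 (le_of_lt hab), le_max_right _ _⟩ :
        b ∈ {y ∈ Set.Icc a b | |f'' y| ^ q ≤ max (|f'' a| ^ q) (|f'' b| ^ q)}) hx
    have h1 : |f'' x| ^ q ≤ M ^ q := by
      have := hxmem.2
      rwa [hmaxq] at this
    exact (Real.rpow_le_rpow_iff (abs_nonneg _) hMnn hq0).mp h1
  -- continuity facts
  have hf'c : ContinuousOn f' (Set.Icc a b) := fun x hx =>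
    ((hderiv2 x (hIcc hx)).continuousAt).continuousWithinAt
  have hfc : ContinuousOn f (Set.Icc a b) := fun x hx =>
    ((hderiv1 x (hIcc hx)).continuousAt).continuousWithinAt
  have huIcc1 : Set.uIcc a m ⊆ Set.Icc a b := by
    rw [Set.uIcc_of_le ham]; exact Set.Icc_subset_Icc le_rfl hmb
  have huIcc2 : Set.uIcc m b ⊆ Set.Icc a b := by
    rw [Set.uIcc_of_le hmb]; exact Set.Icc_subset_Icc ham le_rfl
  have hsub1 : Set.uIcc a m ⊆ Set.uIcc a b := by
    rw [Set.uIcc_of_le ham, Set.uIcc_of_le (le_of_lt hab)]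
    exact Set.Icc_subset_Icc le_rfl hmb
  have hsub2 : Set.uIcc m b ⊆ Set.uIcc a b := by
    rw [Set.uIcc_of_le hmb, Set.uIcc_of_le (le_of_lt hab)]
    exact Set.Icc_subset_Icc ham le_rfl
  have hint1 : IntervalIntegrable f'' volume a m := hint.mono_set hsub1
  have hint2 : IntervalIntegrable f'' volume m b := hint.mono_set hsub2
  have hf'int1 : IntervalIntegrable f' volume a m :=
    (hf'c.mono huIcc1).intervalIntegrable
  have hf'int2 : IntervalIntegrable f' volume m b :=
    (hf'c.mono huIcc2).intervalIntegrable
  have hfint1 : IntervalIntegrable f volume a m :=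
    (hfc.mono huIcc1).intervalIntegrable
  have hfint2 : IntervalIntegrable f volume m b :=
    (hfc.mono huIcc2).intervalIntegrable
  -- integration by parts on [a, m]
  have hu1 : ∀ x : ℝ, HasDerivAt (fun y => (y - a) ^ 2 / 2) (x - a) x := by
    intro x
    have h1 : HasDerivAt (fun y : ℝ => (y - a) ^ 2) (2 * (x - a)) x := by
      simpa using ((hasDerivAt_id x).sub_const a).fun_pow 2
    have := h1.div_const 2
    convert this using 1
    all_goals first | rfl | ring
  have hu1' : ∀ x : ℝ, HasDerivAt (fun y => y - a) 1 x := fun x =>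
    (hasDerivAt_id x).sub_const a
  have I1 : ∫ x in a..m, ((x - a) ^ 2 / 2) * f'' x
      = ((m - a) ^ 2 / 2) * f' m - ((a - a) ^ 2 / 2) * f' a
        - ∫ x in a..m, (x - a) * f' x :=
    intervalIntegral.integral_mul_deriv_eq_deriv_mul
      (fun x _ => hu1 x) (fun x hx => hderiv2 x (hIcc (huIcc1 hx)))
      (Continuous.intervalIntegrable (by continuity) a m) hint1
  have I2 : ∫ x in a..m, (x - a) * f' x
      = (m - a) * f m - (a - a) * f a - ∫ x in a..m, 1 * f x :=
    intervalIntegral.integral_mul_deriv_eq_deriv_mul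
      (fun x _ => hu1' x) (fun x hx => hderiv1 x (hIcc (huIcc1 hx)))
      (Continuous.intervalIntegrable (by continuity) a m) hf'int1
  -- integration by parts on [m, b]
  have hu2 : ∀ x : ℝ, HasDerivAt (fun y => (b - y) ^ 2 / 2) (-(b - x)) x := by
    intro x
    have h1 : HasDerivAt (fun y : ℝ => (b - y) ^ 2) (2 * (b - x) * (-1)) x := by
      simpa [sub_eq_add_neg] using ((hasDerivAt_id x).neg.const_add b).fun_pow 2
    have := h1.div_const 2
    convert this using 1
    all_goals first | rfl | ring
  have hu2' : ∀ x : ℝ, HasDerivAt (fun y => b - y) (-1) x := fun x =>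
    (hasDerivAt_id x).neg.const_add b
  have I3 : ∫ x in m..b, ((b - x) ^ 2 / 2) * f'' x
      = ((b - b) ^ 2 / 2) * f' b - ((b - m) ^ 2 / 2) * f' m
        - ∫ x in m..b, (-(b - x)) * f' x :=
    intervalIntegral.integral_mul_deriv_eq_deriv_mul
      (fun x _ => hu2 x) (fun x hx => hderiv2 x (hIcc (huIcc2 hx)))
      (Continuous.intervalIntegrable (by continuity) m b) hint2
  have I4 : ∫ x in m..b, (b - x) * f' x
      = (b - b) * f b - (b - m) * f m - ∫ x in m..b, (-1) * f x :=
    intervalIntegral.integral_mul_deriv_eq_deriv_mul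
      (fun x _ => hu2' x) (fun x hx => hderiv1 x (hIcc (huIcc2 hx)))
      (Continuous.intervalIntegrable (by continuity) m b) hf'int2
  have hneg : (∫ x in m..b, (-(b - x)) * f' x) = -∫ x in m..b, (b - x) * f' x := by
    rw [← intervalIntegral.integral_neg]
    congr 1
    funext x
    ring
  have hone : (∫ x in a..m, 1 * f x) = ∫ x in a..m, f x := by
    simp
  have hnegone : (∫ x in m..b, (-1 : ℝ) * f x) = -∫ x in m..b, f x := by
    rw [← intervalIntegral.integral_neg]
    congr 1
    funext x
    ring
  have hadd : (∫ x in a..m, f x) + (∫ x in m..b, f x) = ∫ x in a..b, f x :=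
    intervalIntegral.integral_add_adjacent_intervals hfint1 hfint2
  -- the key identity
  have hkey : (∫ x in a..m, ((x - a) ^ 2 / 2) * f'' x)
      + (∫ x in m..b, ((b - x) ^ 2 / 2) * f'' x)
      = (∫ x in a..b, f x) - (b - a) * f m := by
    rw [I1, I2, I3, hneg, I4, hnegone, hone, hma, hbm]
    linear_combination hadd
  -- integrability of the products
  have hprod1 : IntervalIntegrable (fun x => ((x - a) ^ 2 / 2) * f'' x) volume a m :=
    hint1.continuousOn_mul (by fun_prop)
  have hprod2 : IntervalIntegrable (fun x => ((b - x) ^ 2 / 2) * f'' x) volume m b :=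
    hint2.continuousOn_mul (by fun_prop)
  -- bounds on each integral
  have hval1 : (∫ x in a..m, ((x - a) ^ 2 / 2) * M) = M * (m - a) ^ 3 / 6 := by
    have h1 : (fun x : ℝ => ((x - a) ^ 2 / 2) * M) = fun x => (M / 2) * (x - a) ^ 2 := by
      funext x; ring
    rw [h1, intervalIntegral.integral_const_mul]
    have h2 : (∫ x in a..m, (x - a) ^ 2) = ∫ x in (a - a)..(m - a), x ^ 2 :=
      intervalIntegral.integral_comp_sub_right (fun x => x ^ 2) a
    rw [h2, integral_pow]
    push_cast
    ring
  have hval2 : (∫ x in m..b, ((b - x) ^ 2 / 2) * M) = M * (b - m) ^ 3 / 6 := by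
    have h1 : (fun x : ℝ => ((b - x) ^ 2 / 2) * M) = fun x => (M / 2) * (x - b) ^ 2 := by
      funext x; ring
    rw [h1, intervalIntegral.integral_const_mul]
    have h2 : (∫ x in m..b, (x - b) ^ 2) = ∫ x in (m - b)..(b - b), x ^ 2 :=
      intervalIntegral.integral_comp_sub_right (fun x => x ^ 2) b
    rw [h2, integral_pow]
    push_cast
    ring
  have hb1 : |∫ x in a..m, ((x - a) ^ 2 / 2) * f'' x| ≤ M * (m - a) ^ 3 / 6 := by
    calc |∫ x in a..m, ((x - a) ^ 2 / 2) * f'' x|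
        ≤ ∫ x in a..m, |((x - a) ^ 2 / 2) * f'' x| :=
          intervalIntegral.abs_integral_le_integral_abs ham
      _ ≤ ∫ x in a..m, ((x - a) ^ 2 / 2) * M := by
          apply intervalIntegral.integral_mono_on ham hprod1.abs
            (Continuous.intervalIntegrable (by continuity) a m)
          intro x hx
          rw [abs_mul, abs_of_nonneg (by positivity : (0:ℝ) ≤ (x - a) ^ 2 / 2)]
          exact mul_le_mul_of_nonneg_left
            (hbound x ⟨hx.1, le_trans hx.2 hmb⟩) (by positivity)
      _ = M * (m - a) ^ 3 / 6 := hval1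
  have hb2 : |∫ x in m..b, ((b - x) ^ 2 / 2) * f'' x| ≤ M * (b - m) ^ 3 / 6 := by
    calc |∫ x in m..b, ((b - x) ^ 2 / 2) * f'' x|
        ≤ ∫ x in m..b, |((b - x) ^ 2 / 2) * f'' x| :=
          intervalIntegral.abs_integral_le_integral_abs hmb
      _ ≤ ∫ x in m..b, ((b - x) ^ 2 / 2) * M := by
          apply intervalIntegral.integral_mono_on hmb hprod2.abs
            (Continuous.intervalIntegrable (by continuity) m b)
          intro x hx
          rw [abs_mul, abs_of_nonneg (by positivity : (0:ℝ) ≤ (b - x) ^ 2 / 2)]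
          exact mul_le_mul_of_nonneg_left
            (hbound x ⟨le_trans ham hx.1, hx.2⟩) (by positivity)
      _ = M * (b - m) ^ 3 / 6 := hval2
  -- bound on the whole difference
  have hmain : |(∫ x in a..b, f x) - (b - a) * f m| ≤ M * (b - a) ^ 3 / 24 := by
    rw [← hkey]
    calc |(∫ x in a..m, ((x - a) ^ 2 / 2) * f'' x)
        + (∫ x in m..b, ((b - x) ^ 2 / 2) * f'' x)|
        ≤ |∫ x in a..m, ((x - a) ^ 2 / 2) * f'' x|
          + |∫ x in m..b, ((b - x) ^ 2 / 2) * f'' x| := abs_add_le _ _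
      _ ≤ M * (m - a) ^ 3 / 6 + M * (b - m) ^ 3 / 6 := add_le_add hb1 hb2
      _ = M * (b - a) ^ 3 / 24 := by rw [hma, hbm]; ring
  -- (2p+1)^(1/p) ≤ 3
  have hc0 : (0:ℝ) < (2 * p + 1) ^ (1 / p) :=
    Real.rpow_pos_of_pos (by linarith) _
  have hc3 : (2 * p + 1) ^ (1 / p) ≤ 3 := by
    have h1 : 2 * p + 1 ≤ (3:ℝ) ^ p := by
      have := one_add_mul_self_le_rpow_one_add (s := (2:ℝ)) (by norm_num) hp.le
      norm_num at this
      linarith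
    calc (2 * p + 1) ^ (1 / p) ≤ ((3:ℝ) ^ p) ^ (1 / p) :=
          Real.rpow_le_rpow (by linarith) h1 (by positivity)
      _ = 3 := by
          rw [← Real.rpow_mul (by norm_num), mul_one_div_cancel hp0.ne',
            Real.rpow_one]
  -- finish
  rw [hMq]
  have hLHS : |(1 / (b - a)) * (∫ x in a..b, f x) - f m|
      = |(∫ x in a..b, f x) - (b - a) * f m| / (b - a) := by
    have h : (1 / (b - a)) * (∫ x in a..b, f x) - f m
        = ((∫ x in a..b, f x) - (b - a) * f m) / (b - a) := by
      field_simp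
    rw [h, abs_div, abs_of_pos hba]
  rw [hLHS]
  have step1 : |(∫ x in a..b, f x) - (b - a) * f m| / (b - a)
      ≤ M * (b - a) ^ 2 / 24 := by
    rw [div_le_iff₀ hba]
    calc |(∫ x in a..b, f x) - (b - a) * f m| ≤ M * (b - a) ^ 3 / 24 := hmain
      _ = M * (b - a) ^ 2 / 24 * (b - a) := by ring
  refine step1.trans ?_
  rw [show M * (b - a) ^ 2 / 24 = (b - a) ^ 2 / 24 * M by ring]
  apply mul_le_mul_of_nonneg_right _ hMnn
  apply div_le_div_of_nonneg_left (by positivity) (by positivity)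
  linarith
end

section
/- Let f : I ⊆ ℝ → ℝ be twice differentiable on the interior I° of I, with a, b ∈ I°, a < b, and f'' Lebesgue integrable on [a,b]. Let q ≥ 1. If |f''|^q is quasi-convex on [a,b], then |(1/(b-a)) ∫_a^b f(x) dx − f((a+b)/2)| ≤ ((b-a)²/24) · (sup{|f''(a)|^q, |f''(b)|^q})^{1/q}. -/
open MeasureTheory

theorem hermite_hadamard_second_deriv_abs_pow_quasiconvex_power_mean
    (I : Set ℝ) (hI : I.OrdConnected) (f f' f'' : ℝ → ℝ) (a b : ℝ)
    (ha : a ∈ interior I) (hb : b ∈ interior I) (hab : a < b)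
    (hderiv1 : ∀ x ∈ interior I, HasDerivAt f (f' x) x)
    (hderiv2 : ∀ x ∈ interior I, HasDerivAt f' (f'' x) x)
    (hint : IntervalIntegrable f'' volume a b)
    (q : ℝ) (hq : 1 ≤ q)
    (hqc : QuasiconvexOn ℝ (Set.Icc a b) (fun x => |f'' x| ^ q)) :
    |(1 / (b - a)) * (∫ x in a..b, f x) - f ((a + b) / 2)| ≤
      (b - a) ^ 2 / 24 * (max (|f'' a| ^ q) (|f'' b| ^ q)) ^ (1 / q) := by
  have hq0 : 0 < q := lt_of_lt_of_le one_pos hq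
  set m : ℝ := (a + b) / 2 with hm
  have ham : a ≤ m := by rw [hm]; linarith
  have hmb : m ≤ b := by rw [hm]; linarith
  have hba : (0:ℝ) < b - a := by linarith
  have hsub : Set.Icc a b ⊆ interior I := hI.interior.out ha hb
  have hsub1 : Set.uIcc a m ⊆ Set.Icc a b := by
    rw [Set.uIcc_of_le ham]; exact Set.Icc_subset_Icc le_rfl hmb
  have hsub2 : Set.uIcc m b ⊆ Set.Icc a b := by
    rw [Set.uIcc_of_le hmb]; exact Set.Icc_subset_Icc ham le_rfl
  have hfd : ∀ x ∈ Set.Icc a b, HasDerivAt f (f' x) x := fun x hx => hderiv1 x (hsub hx)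
  have hf'd : ∀ x ∈ Set.Icc a b, HasDerivAt f' (f'' x) x := fun x hx => hderiv2 x (hsub hx)
  have hfc : ContinuousOn f (Set.Icc a b) := fun x hx =>
    (hfd x hx).continuousAt.continuousWithinAt
  have hf'c : ContinuousOn f' (Set.Icc a b) := fun x hx =>
    (hf'd x hx).continuousAt.continuousWithinAt
  -- integrabilities
  have hint1 : IntervalIntegrable f'' volume a m :=
    hint.mono_set (by rw [Set.uIcc_of_le (le_trans ham hmb)]; exact hsub1)
  have hint2 : IntervalIntegrable f'' volume m b :=
    hint.mono_set (by rw [Set.uIcc_of_le (le_trans ham hmb)]; exact hsub2)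
  have hf'i1 : IntervalIntegrable f' volume a m :=
    (hf'c.mono hsub1).intervalIntegrable
  have hf'i2 : IntervalIntegrable f' volume m b :=
    (hf'c.mono hsub2).intervalIntegrable
  have hfi1 : IntervalIntegrable f volume a m :=
    (hfc.mono hsub1).intervalIntegrable
  have hfi2 : IntervalIntegrable f volume m b :=
    (hfc.mono hsub2).intervalIntegrable
  -- integration by parts, first pair
  have hA1 : ∫ x in a..m, (x - a) * f' x =
      (m - a) * f m - (a - a) * f a - ∫ x in a..m, 1 * f x := by
    apply intervalIntegral.integral_mul_deriv_eq_deriv_mul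
    · exact fun x _ => (hasDerivAt_id x).sub_const a
    · exact fun x hx => hfd x (hsub1 hx)
    · exact intervalIntegrable_const
    · exact hf'i1
  have hB1 : ∫ x in m..b, (x - b) * f' x =
      (b - b) * f b - (m - b) * f m - ∫ x in m..b, 1 * f x := by
    apply intervalIntegral.integral_mul_deriv_eq_deriv_mul
    · exact fun x _ => (hasDerivAt_id x).sub_const b
    · exact fun x hx => hfd x (hsub2 hx)
    · exact intervalIntegrable_const
    · exact hf'i2
  simp only [one_mul] at hA1 hB1
  -- second pair
  have hderA : ∀ x ∈ Set.uIcc a m, HasDerivAt (fun y => (y - a) ^ 2 / 2) (x - a) x := by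
    intro x _
    have h := (((hasDerivAt_id x).sub_const a).pow 2).div_const 2
    convert h using 1 <;> first | rfl | (funext y; simp) | (simp only [id_eq, Nat.cast_ofNat]; ring) | (simp; try ring)
  have hderB : ∀ x ∈ Set.uIcc m b, HasDerivAt (fun y => (y - b) ^ 2 / 2) (x - b) x := by
    intro x _
    have h := (((hasDerivAt_id x).sub_const b).pow 2).div_const 2
    convert h using 1 <;> first | rfl | (funext y; simp) | (simp only [id_eq, Nat.cast_ofNat]; ring) | (simp; try ring)
  have hA2 : ∫ x in a..m, (x - a) ^ 2 / 2 * f'' x =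
      (m - a) ^ 2 / 2 * f' m - (a - a) ^ 2 / 2 * f' a - ∫ x in a..m, (x - a) * f' x := by
    apply intervalIntegral.integral_mul_deriv_eq_deriv_mul hderA
      (fun x hx => hf'd x (hsub1 hx)) _ hint1
    exact (Continuous.sub continuous_id continuous_const).intervalIntegrable _ _
  have hB2 : ∫ x in m..b, (x - b) ^ 2 / 2 * f'' x =
      (b - b) ^ 2 / 2 * f' b - (m - b) ^ 2 / 2 * f' m - ∫ x in m..b, (x - b) * f' x := by
    apply intervalIntegral.integral_mul_deriv_eq_deriv_mul hderB
      (fun x hx => hf'd x (hsub2 hx)) _ hint2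
    exact (Continuous.sub continuous_id continuous_const).intervalIntegrable _ _
  have hsplit : (∫ x in a..m, f x) + ∫ x in m..b, f x = ∫ x in a..b, f x :=
    intervalIntegral.integral_add_adjacent_intervals hfi1 hfi2
  have key : (∫ x in a..b, f x) - (b - a) * f m =
      (∫ x in a..m, (x - a) ^ 2 / 2 * f'' x) + ∫ x in m..b, (x - b) ^ 2 / 2 * f'' x := by
    rw [hm] at *
    linear_combination -hsplit + hA1 + hB1 - hA2 - hB2
  -- sup bound on |f''|
  set M : ℝ := max |f'' a| |f'' b| with hMdef
  have hM0 : 0 ≤ M := le_trans (abs_nonneg _) (le_max_left _ _)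
  have hMax : (max (|f'' a| ^ q) (|f'' b| ^ q)) ^ (1 / q) = M := by
    rcases le_total |f'' a| |f'' b| with h | h
    · rw [max_eq_right (Real.rpow_le_rpow (abs_nonneg _) h hq0.le),
        hMdef, max_eq_right h,
        ← Real.rpow_mul (abs_nonneg _), mul_one_div, div_self hq0.ne', Real.rpow_one]
    · rw [max_eq_left (Real.rpow_le_rpow (abs_nonneg _) h hq0.le),
        hMdef, max_eq_left h,
        ← Real.rpow_mul (abs_nonneg _), mul_one_div, div_self hq0.ne', Real.rpow_one]
  have hbound : ∀ x ∈ Set.Icc a b, |f'' x| ≤ M := by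
    intro x hx
    have hcv := hqc (max (|f'' a| ^ q) (|f'' b| ^ q))
    have haM : a ∈ {y ∈ Set.Icc a b | |f'' y| ^ q ≤ max (|f'' a| ^ q) (|f'' b| ^ q)} :=
      ⟨Set.left_mem_Icc.2 (le_of_lt hab), le_max_left _ _⟩
    have hbM : b ∈ {y ∈ Set.Icc a b | |f'' y| ^ q ≤ max (|f'' a| ^ q) (|f'' b| ^ q)} :=
      ⟨Set.right_mem_Icc.2 (le_of_lt hab), le_max_right _ _⟩
    have := hcv.ordConnected.out haM hbM hx
    have hxq : |f'' x| ^ q ≤ max (|f'' a| ^ q) (|f'' b| ^ q) := this.2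
    calc |f'' x| = (|f'' x| ^ q) ^ (1 / q) := by
          rw [← Real.rpow_mul (abs_nonneg _), mul_one_div, div_self hq0.ne', Real.rpow_one]
      _ ≤ (max (|f'' a| ^ q) (|f'' b| ^ q)) ^ (1 / q) :=
          Real.rpow_le_rpow (Real.rpow_nonneg (abs_nonneg _) _) hxq (by positivity)
      _ = M := hMax
  -- bound the two integrals
  have hcont1 : ContinuousOn (fun x : ℝ => (x - a) ^ 2 / 2) (Set.uIcc a m) := by fun_prop
  have hcont2 : ContinuousOn (fun x : ℝ => (x - b) ^ 2 / 2) (Set.uIcc m b) := by fun_prop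
  have hii1 : IntervalIntegrable (fun x => (x - a) ^ 2 / 2 * f'' x) volume a m :=
    hint1.continuousOn_mul hcont1
  have hii2 : IntervalIntegrable (fun x => (x - b) ^ 2 / 2 * f'' x) volume m b :=
    hint2.continuousOn_mul hcont2
  have hval1 : (∫ x in a..m, (x - a) ^ 2 / 2 * M) = (m - a) ^ 3 / 6 * M := by
    have hd : ∀ x ∈ Set.uIcc a m, HasDerivAt (fun y => (y - a) ^ 3 / 6 * M)
        ((x - a) ^ 2 / 2 * M) x := by
      intro x _
      have h := ((((hasDerivAt_id x).sub_const a).pow 3).div_const 6).mul_const M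
      convert h using 1 <;> first | rfl | (funext y; simp) | (simp only [id_eq, Nat.cast_ofNat]; ring) | (simp; try ring)
    rw [intervalIntegral.integral_eq_sub_of_hasDerivAt hd
      (by apply Continuous.intervalIntegrable; fun_prop)]
    ring
  have hval2 : (∫ x in m..b, (x - b) ^ 2 / 2 * M) = -((m - b) ^ 3 / 6) * M := by
    have hd : ∀ x ∈ Set.uIcc m b, HasDerivAt (fun y => (y - b) ^ 3 / 6 * M)
        ((x - b) ^ 2 / 2 * M) x := by
      intro x _
      have h := ((((hasDerivAt_id x).sub_const b).pow 3).div_const 6).mul_const M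
      convert h using 1 <;> first | rfl | (funext y; simp) | (simp only [id_eq, Nat.cast_ofNat]; ring) | (simp; try ring)
    rw [intervalIntegral.integral_eq_sub_of_hasDerivAt hd
      (by apply Continuous.intervalIntegrable; fun_prop)]
    ring
  have hb1 : |∫ x in a..m, (x - a) ^ 2 / 2 * f'' x| ≤ (m - a) ^ 3 / 6 * M := by
    calc |∫ x in a..m, (x - a) ^ 2 / 2 * f'' x|
        ≤ ∫ x in a..m, |(x - a) ^ 2 / 2 * f'' x| :=
          intervalIntegral.abs_integral_le_integral_abs ham
      _ ≤ ∫ x in a..m, (x - a) ^ 2 / 2 * M := by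
          apply intervalIntegral.integral_mono_on ham hii1.abs
            (by apply Continuous.intervalIntegrable; fun_prop)
          intro x hx
          rw [abs_mul, abs_of_nonneg (by positivity : (0:ℝ) ≤ (x - a) ^ 2 / 2)]
          exact mul_le_mul_of_nonneg_left
            (hbound x ⟨hx.1, le_trans hx.2 hmb⟩) (by positivity)
      _ = (m - a) ^ 3 / 6 * M := hval1
  have hb2 : |∫ x in m..b, (x - b) ^ 2 / 2 * f'' x| ≤ -((m - b) ^ 3 / 6) * M := by
    calc |∫ x in m..b, (x - b) ^ 2 / 2 * f'' x|
        ≤ ∫ x in m..b, |(x - b) ^ 2 / 2 * f'' x| :=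
          intervalIntegral.abs_integral_le_integral_abs hmb
      _ ≤ ∫ x in m..b, (x - b) ^ 2 / 2 * M := by
          apply intervalIntegral.integral_mono_on hmb hii2.abs
            (by apply Continuous.intervalIntegrable; fun_prop)
          intro x hx
          rw [abs_mul, abs_of_nonneg (by positivity : (0:ℝ) ≤ (x - b) ^ 2 / 2)]
          exact mul_le_mul_of_nonneg_left
            (hbound x ⟨le_trans ham hx.1, hx.2⟩) (by positivity)
      _ = -((m - b) ^ 3 / 6) * M := hval2
  -- conclude
  have hEbound : |(∫ x in a..b, f x) - (b - a) * f m| ≤ (b - a) ^ 3 / 24 * M := by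
    rw [key]
    calc |(∫ x in a..m, (x - a) ^ 2 / 2 * f'' x) + ∫ x in m..b, (x - b) ^ 2 / 2 * f'' x|
        ≤ |∫ x in a..m, (x - a) ^ 2 / 2 * f'' x| + |∫ x in m..b, (x - b) ^ 2 / 2 * f'' x| :=
          abs_add_le _ _
      _ ≤ (m - a) ^ 3 / 6 * M + -((m - b) ^ 3 / 6) * M := add_le_add hb1 hb2
      _ = (b - a) ^ 3 / 24 * M := by rw [hm]; ring
  have heq : (1 / (b - a)) * (∫ x in a..b, f x) - f m =
      (1 / (b - a)) * ((∫ x in a..b, f x) - (b - a) * f m) := by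
    field_simp
  rw [hMax, heq, abs_mul, abs_of_pos (by positivity : (0:ℝ) < 1 / (b - a))]
  calc (1 / (b - a)) * |(∫ x in a..b, f x) - (b - a) * f m|
      ≤ (1 / (b - a)) * ((b - a) ^ 3 / 24 * M) :=
        mul_le_mul_of_nonneg_left hEbound (by positivity)
    _ = (b - a) ^ 2 / 24 * M := by field_simp
end

section
/- Let a, b ∈ ℝ with 0 < a < b, and let q > 1 and p > 1 with 1/p + 1/q = 1. Then |ln(I(a,b)/A(a,b))| ≤ ((b−a)²/(8·a²·b²·(2p+1)^{1/p})) · [A(a^{2q}, b^{2q})]^{1/q}, i.e., ln((a+b)/2) − (1/(b−a))·(b·ln b − a·ln a) + 1 ≤ ((b−a)²/(8·a²·b²·(2p+1)^{1/p})) · [(a^{2q} + b^{2q})/2]^{1/q}. -/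
open Real Set

lemma key_log_ineq (x : ℝ) (hx0 : 0 ≤ x) (hx1 : x < 1) :
    2*x - x^3/(3*(1-x^2)^2) ≤ (1+x)*Real.log (1+x) - (1-x)*Real.log (1-x) := by
  set f : ℝ → ℝ := fun t =>
    (1+t)*Real.log (1+t) - (1-t)*Real.log (1-t) - 2*t + t^3/(3*(1-t^2)^2) with hf
  have hF : ∀ t : ℝ, -1 < t → t < 1 →
      HasDerivAt f (Real.log (1+t) + Real.log (1-t)
        + t^2*(3+t^2)/(3*(1-t^2)^3)) t := by
    intro t ht1 ht2
    have h1 : (0:ℝ) < 1 + t := by linarith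
    have h2 : (0:ℝ) < 1 - t := by linarith
    have h3 : (0:ℝ) < 1 - t^2 := by nlinarith
    have d1 : HasDerivAt (fun s : ℝ => 1 + s) 1 t := (hasDerivAt_id t).const_add 1
    have d2 : HasDerivAt (fun s : ℝ => 1 - s) (-1) t := (hasDerivAt_id t).const_sub 1
    have dlog1 := d1.log (ne_of_gt h1)
    have dlog2 := d2.log (ne_of_gt h2)
    have dA := d1.mul dlog1
    have dB := d2.mul dlog2
    have dnum : HasDerivAt (fun s : ℝ => s^3) (3*t^2) t := by
      simpa using hasDerivAt_pow 3 t
    have dsq : HasDerivAt (fun s : ℝ => 1 - s^2) (-(2*t)) t := by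
      simpa using (hasDerivAt_pow 2 t).const_sub 1
    have dden : HasDerivAt (fun s : ℝ => 3*(1-s^2)^2) (3*(2*(1-t^2)*(-(2*t)))) t := by
      exact ((dsq.pow 2).const_mul 3).congr_deriv (by push_cast; ring)
    have hden : 3*(1-t^2)^2 ≠ 0 := by positivity
    have dC := dnum.div dden hden
    have := ((dA.sub dB).sub ((hasDerivAt_id t).const_mul 2)).add dC
    convert this using 1 <;> try rfl
    field_simp
    ring
  have hmono : MonotoneOn f (Ico 0 1) := by
    apply monotoneOn_of_deriv_nonneg (convex_Ico 0 1)
    · intro t ht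
      exact (hF t (by linarith [ht.1]) ht.2).continuousAt.continuousWithinAt
    · rw [interior_Ico]
      intro t ht
      exact (hF t (by linarith [ht.1]) ht.2).differentiableAt.differentiableWithinAt
    · rw [interior_Ico]
      intro t ht
      rw [(hF t (by linarith [ht.1]) ht.2).deriv]
      have h1 : (0:ℝ) < 1 + t := by linarith [ht.1]
      have h2 : (0:ℝ) < 1 - t := by linarith [ht.2]
      have h3 : (0:ℝ) < 1 - t^2 := by nlinarith
      have hlog : Real.log (1+t) + Real.log (1-t) = Real.log (1-t^2) := by
        rw [← Real.log_mul (ne_of_gt h1) (ne_of_gt h2)]; ring_nf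
      rw [hlog]
      have hb : Real.log ((1-t^2)⁻¹) ≤ (1-t^2)⁻¹ - 1 :=
        Real.log_le_sub_one_of_pos (by positivity)
      rw [Real.log_inv] at hb
      have hkey : (1-t^2)⁻¹ - 1 ≤ t^2*(3+t^2)/(3*(1-t^2)^3) := by
        rw [inv_eq_one_div, div_sub' (ne_of_gt h3), div_le_div_iff₀ h3 (by positivity)]
        have h5 : (0:ℝ) ≤ 7 - 3*t^2 := by nlinarith [ht.2, ht.1]
        have h6 : (0:ℝ) ≤ t^4 * ((1-t^2)*(7-3*t^2)) :=
          mul_nonneg (by positivity) (mul_nonneg h3.le h5)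
        nlinarith [h6]
      linarith
  have h0 : f 0 ≤ f x := by
    apply hmono (by constructor <;> norm_num) ⟨hx0, hx1⟩ hx0
  have hf0 : f 0 = 0 := by simp [hf]
  rw [hf0] at h0
  simp only [hf] at h0
  linarith

lemma two_var (a b : ℝ) (ha : 0 < a) (hab : a < b) :
    Real.log ((a + b) / 2) - (1 / (b - a)) * (b * Real.log b - a * Real.log a) + 1 ≤
      (b - a)^2 * (a + b)^2 / (96 * a^2 * b^2) := by
  have hb : 0 < b := lt_trans ha hab
  have hs : 0 < a + b := by linarith
  have hd : 0 < b - a := by linarith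
  set x : ℝ := (b - a) / (a + b) with hx
  have hx0 : 0 ≤ x := by positivity
  have hx1 : x < 1 := by rw [hx, div_lt_one hs]; linarith
  have h1x : 1 + x = 2*b/(a+b) := by rw [hx]; field_simp; ring
  have h2x : 1 - x = 2*a/(a+b) := by rw [hx]; field_simp; ring
  have key := key_log_ineq x hx0 hx1
  rw [h1x, h2x] at key
  have hL1 : Real.log (2*b/(a+b)) = Real.log 2 + Real.log b - Real.log (a+b) := by
    rw [Real.log_div (by positivity) (ne_of_gt hs), Real.log_mul two_ne_zero (ne_of_gt hb)]
  have hL2 : Real.log (2*a/(a+b)) = Real.log 2 + Real.log a - Real.log (a+b) := by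
    rw [Real.log_div (by positivity) (ne_of_gt hs), Real.log_mul two_ne_zero (ne_of_gt ha)]
  rw [hL1, hL2] at key
  have hxval : 2*x - x^3/(3*(1-x^2)^2)
      = 2*(b-a)/(a+b) - (b-a)^3*(a+b)/(48*a^2*b^2) := by
    rw [hx]
    have h1 : 1 - ((b-a)/(a+b))^2 = 4*a*b/(a+b)^2 := by field_simp; ring
    rw [h1]
    field_simp
    ring
  rw [hxval] at key
  -- multiply key by (a+b)/2
  have hmid : (b-a) - (b-a)^3*(a+b)^2/(96*a^2*b^2)
      ≤ b*Real.log b - a*Real.log a + (b-a)*Real.log 2 - (b-a)*Real.log (a+b) := by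
    have := mul_le_mul_of_nonneg_left key (by positivity : (0:ℝ) ≤ (a+b)/2)
    calc (b-a) - (b-a)^3*(a+b)^2/(96*a^2*b^2)
        = (a+b)/2 * (2*(b-a)/(a+b) - (b-a)^3*(a+b)/(48*a^2*b^2)) := by
          field_simp; ring
      _ ≤ (a+b)/2 * (2*b/(a+b)*(Real.log 2 + Real.log b - Real.log (a+b))
            - 2*a/(a+b)*(Real.log 2 + Real.log a - Real.log (a+b))) := this
      _ = b*Real.log b - a*Real.log a + (b-a)*Real.log 2 - (b-a)*Real.log (a+b) := by
          field_simp; ring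
  have hlog2 : Real.log ((a+b)/2) = Real.log (a+b) - Real.log 2 :=
    Real.log_div (ne_of_gt hs) two_ne_zero
  rw [hlog2]
  have hfin := mul_le_mul_of_nonneg_left hmid (by positivity : (0:ℝ) ≤ 1/(b-a))
  calc Real.log (a+b) - Real.log 2 - (1/(b-a))*(b*Real.log b - a*Real.log a) + 1
      = 1/(b-a) * ((b-a)*Real.log (a+b) - (b-a)*Real.log 2 - (b*Real.log b - a*Real.log a) + (b-a)) := by
        field_simp
    _ ≤ 1/(b-a) * ((b-a)^3*(a+b)^2/(96*a^2*b^2)) := by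
        apply mul_le_mul_of_nonneg_left _ (by positivity : (0:ℝ) ≤ 1/(b-a))
        nlinarith [hmid]
    _ = (b-a)^2*(a+b)^2/(96*a^2*b^2) := by field_simp

theorem identric_mean_arithmetic_mean_log_estimate
    (a b : ℝ) (ha : 0 < a) (hab : a < b)
    (p q : ℝ) (hp : 1 < p) (hq : 1 < q) (hpq : 1 / p + 1 / q = 1) :
    Real.log ((a + b) / 2) -
        (1 / (b - a)) * (b * Real.log b - a * Real.log a) + 1 ≤
      (b - a) ^ 2 / (8 * a ^ 2 * b ^ 2 * (2 * p + 1) ^ (1 / p)) *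
        ((a ^ (2 * q) + b ^ (2 * q)) / 2) ^ (1 / q) := by
  have hb : 0 < b := lt_trans ha hab
  have hp0 : 0 < p := lt_trans one_pos hp
  have hq0 : 0 < q := lt_trans one_pos hq
  -- bound (2p+1)^(1/p) ≤ 3
  have hT0 : (0:ℝ) < (2*p+1) ^ (1/p) := Real.rpow_pos_of_pos (by linarith) _
  have hT : (2*p+1) ^ (1/p) ≤ 3 := by
    have hbern : 2*p + 1 ≤ (3:ℝ) ^ p := by
      have := one_add_mul_self_le_rpow_one_add (by norm_num : (-1:ℝ) ≤ 2) hp.le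
      norm_num at this
      linarith
    calc (2*p+1) ^ (1/p) ≤ ((3:ℝ)^p) ^ (1/p) :=
          Real.rpow_le_rpow (by linarith) hbern (by positivity)
      _ = 3 := by
          rw [← Real.rpow_mul (by norm_num), mul_one_div, div_self (ne_of_gt hp0),
            Real.rpow_one]
  -- power mean bound
  have hPM : (a+b)^2/4 ≤ ((a ^ (2*q) + b ^ (2*q)) / 2) ^ (1/q) := by
    have ha2 : a ^ (2*q) = (a^2 : ℝ) ^ q := by
      rw [← Real.rpow_natCast_mul ha.le 2 q]; norm_num
    have hb2 : b ^ (2*q) = (b^2 : ℝ) ^ q := by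
      rw [← Real.rpow_natCast_mul hb.le 2 q]; norm_num
    have hconv : ((a^2+b^2)/2 : ℝ) ^ q ≤ ((a^2:ℝ)^q + (b^2:ℝ)^q)/2 := by
      have hcv := (convexOn_rpow (le_of_lt hq)).2
        (mem_Ici.mpr (sq_nonneg a)) (mem_Ici.mpr (sq_nonneg b))
        (by norm_num : (0:ℝ) ≤ 1/2) (by norm_num : (0:ℝ) ≤ 1/2) (by norm_num)
      simp only [smul_eq_mul] at hcv
      calc ((a^2+b^2)/2 : ℝ) ^ q = (1/2*a^2 + 1/2*b^2) ^ q := by ring_nf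
        _ ≤ 1/2*(a^2:ℝ)^q + 1/2*(b^2:ℝ)^q := hcv
        _ = ((a^2:ℝ)^q + (b^2:ℝ)^q)/2 := by ring
    calc (a+b)^2/4 ≤ (a^2+b^2)/2 := by nlinarith [sq_nonneg (a-b)]
      _ = (((a^2+b^2)/2 : ℝ) ^ q) ^ (1/q) := by
          rw [← Real.rpow_mul (by positivity), mul_one_div, div_self (ne_of_gt hq0),
            Real.rpow_one]
      _ ≤ ((a ^ (2*q) + b ^ (2*q)) / 2) ^ (1/q) := by
          apply Real.rpow_le_rpow (by positivity) _ (by positivity)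
          rw [ha2, hb2]
          linarith [hconv]
  have hPM0 : (0:ℝ) ≤ (a+b)^2/4 := by positivity
  have hmain := two_var a b ha hab
  refine le_trans hmain ?_
  have hfrac : (b-a)^2/(24*a^2*b^2) ≤ (b - a) ^ 2 / (8 * a ^ 2 * b ^ 2 * (2 * p + 1) ^ (1 / p)) := by
    apply div_le_div_of_nonneg_left (by positivity) (by positivity)
    nlinarith [hT, hT0, mul_pos (mul_pos (pow_pos ha 2) (pow_pos hb 2)) hT0, pow_pos ha 2, pow_pos hb 2, mul_pos (pow_pos ha 2) (pow_pos hb 2)]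
  calc (b - a)^2 * (a + b)^2 / (96 * a^2 * b^2)
      = (b-a)^2/(24*a^2*b^2) * ((a+b)^2/4) := by ring
    _ ≤ (b - a) ^ 2 / (8 * a ^ 2 * b ^ 2 * (2 * p + 1) ^ (1 / p)) *
        ((a ^ (2 * q) + b ^ (2 * q)) / 2) ^ (1 / q) :=
        mul_le_mul hfrac hPM hPM0 (by positivity)
end

section
/- Let a, b ∈ ℝ with 0 < a < b, let n ∈ ℤ with |n(n−1)| ≥ 3, and let q > 1. Then |L_n^n(a,b) − A^n(a,b)| ≤ |n(n−1)| · ((b−a)²/24) · [A(a^{q(n−2)}, b^{q(n−2)})]^{1/q}, i.e., |(b^{n+1} − a^{n+1})/((n+1)(b−a)) − ((a+b)/2)^n| ≤ |n(n−1)| · ((b−a)²/24) · [(a^{q(n−2)} + b^{q(n−2)})/2]^{1/q}. -/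
open intervalIntegral Set

section aux
variable {a b : ℝ} (n : ℤ)

lemma zp1 {t : ℝ} (ht : t ≠ 0) (n : ℤ) : t ^ (n - 1) = t ^ (n - 2) * t := by
  rw [show n - 1 = n - 2 + 1 by ring, zpow_add_one₀ ht]

lemma zp2 {t : ℝ} (ht : t ≠ 0) (n : ℤ) : t ^ n = t ^ (n - 2) * t * t := by
  conv_lhs => rw [show n = n - 2 + 1 + 1 by ring, zpow_add_one₀ ht, zpow_add_one₀ ht]

lemma hd_sq_left (a : ℝ) (t : ℝ) : HasDerivAt (fun x : ℝ => (x - a) ^ 2 / 2) (t - a) t := by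
  have := (((hasDerivAt_id t).sub_const a).pow 2).div_const 2
  refine this.congr_deriv ?_; (try simp only [id_eq]); ring

lemma hd_sq_right (b : ℝ) (t : ℝ) : HasDerivAt (fun x : ℝ => (b - x) ^ 2 / 2) (-(b - t)) t := by
  have := (((hasDerivAt_const t b).sub (hasDerivAt_id t)).pow 2).div_const 2
  refine this.congr_deriv ?_; (try simp only [id_eq, Pi.sub_apply]); ring

lemma hd_zpow {t : ℝ} (ht : t ≠ 0) (k : ℤ) :
    HasDerivAt (fun x : ℝ => x ^ k) ((k : ℝ) * t ^ (k - 1)) t :=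
  hasDerivAt_zpow k t (Or.inl ht)

lemma hd_left (a : ℝ) (n : ℤ) (hn1 : (n : ℝ) + 1 ≠ 0) {t : ℝ} (ht : t ≠ 0) :
    HasDerivAt (fun x : ℝ => (x - a) ^ 2 / 2 * ((n : ℝ) * x ^ (n - 1)) - (x - a) * x ^ n
        + x ^ (n + 1) / ((n : ℝ) + 1))
      ((t - a) ^ 2 / 2 * ((n : ℝ) * ((n : ℝ) - 1) * t ^ (n - 2))) t := by
  have h1 := (hd_sq_left a t).mul ((hd_zpow ht (n - 1)).const_mul (n : ℝ))
  have h2 := ((hasDerivAt_id t).sub_const a).mul (hd_zpow ht n)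
  have h3 := (hd_zpow ht (n + 1)).div_const ((n : ℝ) + 1)
  have := (h1.sub h2).add h3
  refine this.congr_deriv ?_
  have e1 : t ^ (n - 1) = t ^ (n - 2) * t := zp1 ht n
  have e2 : t ^ n = t ^ (n - 2) * t * t := zp2 ht n
  have e0 : t ^ (n - 1 - 1) = t ^ (n - 2) := by rw [show n - 1 - 1 = n - 2 by ring]
  have e3 : t ^ (n + 1 - 1) = t ^ (n - 2) * t * t := by rw [show n + 1 - 1 = n by ring]; exact e2
  simp only [id_eq]
  rw [e0, e1, e2, e3]
  push_cast
  field_simp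
  ring

lemma hd_right (b : ℝ) (n : ℤ) (hn1 : (n : ℝ) + 1 ≠ 0) {t : ℝ} (ht : t ≠ 0) :
    HasDerivAt (fun x : ℝ => (b - x) ^ 2 / 2 * ((n : ℝ) * x ^ (n - 1)) + (b - x) * x ^ n
        + x ^ (n + 1) / ((n : ℝ) + 1))
      ((b - t) ^ 2 / 2 * ((n : ℝ) * ((n : ℝ) - 1) * t ^ (n - 2))) t := by
  have h1 := (hd_sq_right b t).mul ((hd_zpow ht (n - 1)).const_mul (n : ℝ))
  have h2 := ((hasDerivAt_const t b).sub (hasDerivAt_id t)).mul (hd_zpow ht n)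
  have h3 := (hd_zpow ht (n + 1)).div_const ((n : ℝ) + 1)
  have := (h1.add h2).add h3
  refine this.congr_deriv ?_
  have e1 : t ^ (n - 1) = t ^ (n - 2) * t := zp1 ht n
  have e2 : t ^ n = t ^ (n - 2) * t * t := zp2 ht n
  have e0 : t ^ (n - 1 - 1) = t ^ (n - 2) := by rw [show n - 1 - 1 = n - 2 by ring]
  have e3 : t ^ (n + 1 - 1) = t ^ (n - 2) * t * t := by rw [show n + 1 - 1 = n by ring]; exact e2
  try simp only [id_eq, Pi.sub_apply]
  rw [e0, e1, e2, e3]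
  push_cast
  field_simp
  ring

lemma hd_cube_left (a : ℝ) (t : ℝ) :
    HasDerivAt (fun x : ℝ => (x - a) ^ 3 / 6) ((t - a) ^ 2 / 2) t := by
  have := (((hasDerivAt_id t).sub_const a).pow 3).div_const 6
  refine this.congr_deriv ?_; simp only [id_eq]; ring

lemma hd_cube_right (b : ℝ) (t : ℝ) :
    HasDerivAt (fun x : ℝ => -((b - x) ^ 3 / 6)) ((b - t) ^ 2 / 2) t := by
  have := ((((hasDerivAt_const t b).sub (hasDerivAt_id t)).pow 3).div_const 6).neg
  refine this.congr_deriv ?_; (try simp only [id_eq, Pi.sub_apply]); ring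

end aux

-- pointwise bound lemma
lemma pointwise_bound (a b : ℝ) (ha : 0 < a) (hab : a < b) (n : ℤ) (q : ℝ) (hq : 1 < q)
    {t : ℝ} (ht : t ∈ Icc a b) :
    t ^ (n - 2) + (a + b - t) ^ (n - 2) ≤
      2 * ((a ^ (q * ((n : ℝ) - 2)) + b ^ (q * ((n : ℝ) - 2))) / 2) ^ (1 / q) := by
  have hb : 0 < b := ha.trans hab
  have hba : 0 < b - a := by linarith
  -- Step A: convexity of zpow
  have hA : t ^ (n - 2) + (a + b - t) ^ (n - 2) ≤ a ^ (n - 2) + b ^ (n - 2) := by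
    set l : ℝ := (b - t) / (b - a) with hl
    set m : ℝ := (t - a) / (b - a) with hmm
    have hl0 : 0 ≤ l := div_nonneg (by linarith [ht.2]) hba.le
    have hm0 : 0 ≤ m := div_nonneg (by linarith [ht.1]) hba.le
    have hlm : l + m = 1 := by rw [hl, hmm]; field_simp; ring
    have hconv := convexOn_zpow (𝕜 := ℝ) (n - 2)
    have h1 := hconv.2 (mem_Ioi.2 ha) (mem_Ioi.2 hb) hl0 hm0 hlm
    have h2 := hconv.2 (mem_Ioi.2 ha) (mem_Ioi.2 hb) hm0 hl0 (by linarith)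
    try simp only [smul_eq_mul] at h1 h2
    have hx : l * a + m * b = t := by rw [hl, hmm]; field_simp; ring
    have hs : m * a + l * b = a + b - t := by rw [hl, hmm]; field_simp; ring
    rw [hx] at h1
    rw [hs] at h2
    have h3 : t ^ (n - 2) + (a + b - t) ^ (n - 2) ≤
        (l + m) * (a ^ (n - 2) + b ^ (n - 2)) := by
      calc t ^ (n - 2) + (a + b - t) ^ (n - 2)
          ≤ (l * a ^ (n - 2) + m * b ^ (n - 2)) + (m * a ^ (n - 2) + l * b ^ (n - 2)) :=
            add_le_add h1 h2
        _ = (l + m) * (a ^ (n - 2) + b ^ (n - 2)) := by ring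
    rw [hlm, one_mul] at h3
    exact h3
  -- Step B: power mean at endpoints
  have hq0 : 0 < q := lt_trans one_pos hq
  set A := a ^ ((n : ℝ) - 2) with hA'
  set B := b ^ ((n : ℝ) - 2) with hB'
  have hA0 : 0 ≤ A := Real.rpow_nonneg ha.le _
  have hB0 : 0 ≤ B := Real.rpow_nonneg hb.le _
  have hza : (a : ℝ) ^ (n - 2) = A := by
    rw [hA', show (n : ℝ) - 2 = ((n - 2 : ℤ) : ℝ) by push_cast; ring, Real.rpow_intCast]
  have hzb : (b : ℝ) ^ (n - 2) = B := by
    rw [hB', show (n : ℝ) - 2 = ((n - 2 : ℤ) : ℝ) by push_cast; ring, Real.rpow_intCast]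
  have hqa : a ^ (q * ((n : ℝ) - 2)) = A ^ q := by
    rw [hA', mul_comm, Real.rpow_mul ha.le]
  have hqb : b ^ (q * ((n : ℝ) - 2)) = B ^ q := by
    rw [hB', mul_comm, Real.rpow_mul hb.le]
  have hpm : A + B ≤ 2 * ((A ^ q + B ^ q) / 2) ^ (1 / q) := by
    have hconv := (convexOn_rpow hq.le).2 (mem_Ici.2 hA0) (mem_Ici.2 hB0)
      (by norm_num : (0:ℝ) ≤ 1/2) (by norm_num : (0:ℝ) ≤ 1/2) (by norm_num)
    simp only [smul_eq_mul] at hconv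
    have h1 : ((A + B) / 2) ^ q ≤ (A ^ q + B ^ q) / 2 := by
      calc ((A + B) / 2) ^ q = (1/2 * A + 1/2 * B) ^ q := by ring_nf
        _ ≤ 1/2 * A ^ q + 1/2 * B ^ q := hconv
        _ = (A ^ q + B ^ q) / 2 := by ring
    have h2 := Real.rpow_le_rpow (Real.rpow_nonneg (by positivity) q) h1 (by positivity : (0:ℝ) ≤ 1/q)
    rw [← Real.rpow_mul (by positivity : (0:ℝ) ≤ (A+B)/2), mul_one_div_cancel hq0.ne',
      Real.rpow_one] at h2
    linarith
  rw [hza, hzb] at hA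
  rw [hqa, hqb]
  linarith

theorem p_logarithmic_mean_arithmetic_mean_power_mean_estimate
    (a b : ℝ) (ha : 0 < a) (hab : a < b) (n : ℤ) (hn : 3 ≤ |n * (n - 1)|)
    (q : ℝ) (hq : 1 < q) :
    |(b ^ (n + 1) - a ^ (n + 1)) / ((n + 1) * (b - a)) - ((a + b) / 2) ^ n| ≤
      (|n * (n - 1)| : ℤ) * ((b - a) ^ 2 / 24) *
        ((a ^ (q * ((n : ℝ) - 2)) + b ^ (q * ((n : ℝ) - 2))) / 2) ^ (1 / q) := by
  have hb : 0 < b := ha.trans hab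
  have hba : 0 < b - a := by linarith
  set M : ℝ := ((a ^ (q * ((n : ℝ) - 2)) + b ^ (q * ((n : ℝ) - 2))) / 2) ^ (1 / q) with hM
  have hM0 : 0 ≤ M := by rw [hM]; positivity
  set m : ℝ := (a + b) / 2 with hm
  have ham : a < m := by rw [hm]; linarith
  have hmb : m < b := by rw [hm]; linarith
  have hne : n ≠ -1 := by rintro rfl; norm_num at hn
  have hnR : (n : ℝ) + 1 ≠ 0 := by
    intro h
    apply hne
    have : (n : ℝ) = ((-1 : ℤ) : ℝ) := by push_cast; linarith
    exact_mod_cast this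
  set K : ℝ → ℝ := fun t => (min (t - a) (b - t)) ^ 2 / 2 with hKdef
  have hKc : Continuous K := by
    rw [hKdef]
    exact (((continuous_id.sub continuous_const).min
      (continuous_const.sub continuous_id)).pow 2).div_const 2
  have hKnn : ∀ t, 0 ≤ K t := fun t => by rw [hKdef]; positivity
  have hpos : ∀ t ∈ Icc a b, (0:ℝ) < t := fun t ht => lt_of_lt_of_le ha ht.1
  have hzc : ∀ k : ℤ, ContinuousOn (fun t : ℝ => t ^ k) (Icc a b) := fun k t ht =>
    (continuousAt_zpow₀ t k (Or.inl (hpos t ht).ne')).continuousWithinAt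
  have hzc' : ContinuousOn (fun t : ℝ => (a + b - t) ^ (n - 2)) (Icc a b) := by
    intro t ht
    have h1 : (0:ℝ) < a + b - t := by have := ht.2; linarith
    exact (ContinuousAt.comp (continuousAt_zpow₀ (a + b - t) (n - 2) (Or.inl h1.ne'))
      ((continuous_const.sub continuous_id).continuousAt)).continuousWithinAt
  have hsub1 : uIcc a m ⊆ Icc a b := by
    rw [uIcc_of_le ham.le]; exact Icc_subset_Icc le_rfl hmb.le
  have hsub2 : uIcc m b ⊆ Icc a b := by
    rw [uIcc_of_le hmb.le]; exact Icc_subset_Icc ham.le le_rfl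
  have hsub3 : uIcc a b ⊆ Icc a b := by rw [uIcc_of_le hab.le]
  -- integrability facts
  have hint1 : IntervalIntegrable (fun t : ℝ => (t - a) ^ 2 / 2 * ((n : ℝ) * ((n : ℝ) - 1) * t ^ (n - 2)))
      MeasureTheory.volume a m :=
    (((((continuous_id.sub continuous_const).pow 2).div_const 2).continuousOn).mul
      (continuousOn_const.mul ((hzc (n - 2)).mono hsub1))).intervalIntegrable
  have hint2 : IntervalIntegrable (fun t : ℝ => (b - t) ^ 2 / 2 * ((n : ℝ) * ((n : ℝ) - 1) * t ^ (n - 2)))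
      MeasureTheory.volume m b :=
    (((((continuous_const.sub continuous_id).pow 2).div_const 2).continuousOn).mul
      (continuousOn_const.mul ((hzc (n - 2)).mono hsub2))).intervalIntegrable
  have hintK1 : IntervalIntegrable (fun t : ℝ => K t * ((n : ℝ) * ((n : ℝ) - 1) * t ^ (n - 2)))
      MeasureTheory.volume a m :=
    ((hKc.continuousOn).mul (continuousOn_const.mul ((hzc (n - 2)).mono hsub1))).intervalIntegrable
  have hintK2 : IntervalIntegrable (fun t : ℝ => K t * ((n : ℝ) * ((n : ℝ) - 1) * t ^ (n - 2)))
      MeasureTheory.volume m b :=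
    ((hKc.continuousOn).mul (continuousOn_const.mul ((hzc (n - 2)).mono hsub2))).intervalIntegrable
  have hintJ : IntervalIntegrable (fun t : ℝ => K t * t ^ (n - 2)) MeasureTheory.volume a b :=
    ((hKc.continuousOn).mul ((hzc (n - 2)).mono hsub3)).intervalIntegrable
  have hintJ' : IntervalIntegrable (fun t : ℝ => K t * (a + b - t) ^ (n - 2)) MeasureTheory.volume a b :=
    ((hKc.continuousOn).mul (hzc'.mono hsub3)).intervalIntegrable
  have hintKa : IntervalIntegrable K MeasureTheory.volume a m := hKc.intervalIntegrable a m
  have hintKb : IntervalIntegrable K MeasureTheory.volume m b := hKc.intervalIntegrable m b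
  -- FTC identities
  have hI1 : ∫ t in a..m, (t - a) ^ 2 / 2 * ((n : ℝ) * ((n : ℝ) - 1) * t ^ (n - 2)) =
      ((m - a) ^ 2 / 2 * ((n : ℝ) * m ^ (n - 1)) - (m - a) * m ^ n + m ^ (n + 1) / ((n : ℝ) + 1))
      - ((a - a) ^ 2 / 2 * ((n : ℝ) * a ^ (n - 1)) - (a - a) * a ^ n + a ^ (n + 1) / ((n : ℝ) + 1)) :=
    integral_eq_sub_of_hasDerivAt (fun t ht => hd_left a n hnR (hpos t (hsub1 ht)).ne') hint1
  have hI2 : ∫ t in m..b, (b - t) ^ 2 / 2 * ((n : ℝ) * ((n : ℝ) - 1) * t ^ (n - 2)) =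
      ((b - b) ^ 2 / 2 * ((n : ℝ) * b ^ (n - 1)) + (b - b) * b ^ n + b ^ (n + 1) / ((n : ℝ) + 1))
      - ((b - m) ^ 2 / 2 * ((n : ℝ) * m ^ (n - 1)) + (b - m) * m ^ n + m ^ (n + 1) / ((n : ℝ) + 1)) :=
    integral_eq_sub_of_hasDerivAt (fun t ht => hd_right b n hnR (hpos t (hsub2 ht)).ne') hint2
  -- replace K on each half
  have hcong1 : ∫ t in a..m, K t * ((n : ℝ) * ((n : ℝ) - 1) * t ^ (n - 2)) =
      ∫ t in a..m, (t - a) ^ 2 / 2 * ((n : ℝ) * ((n : ℝ) - 1) * t ^ (n - 2)) := by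
    apply integral_congr
    intro t ht
    rw [uIcc_of_le ham.le] at ht
    have : min (t - a) (b - t) = t - a := by
      apply min_eq_left
      have h2 := ht.2
      rw [hm] at h2
      linarith
    simp only [hKdef, this]
  have hcong2 : ∫ t in m..b, K t * ((n : ℝ) * ((n : ℝ) - 1) * t ^ (n - 2)) =
      ∫ t in m..b, (b - t) ^ 2 / 2 * ((n : ℝ) * ((n : ℝ) - 1) * t ^ (n - 2)) := by
    apply integral_congr
    intro t ht
    rw [uIcc_of_le hmb.le] at ht
    have : min (t - a) (b - t) = b - t := by
      apply min_eq_right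
      have h1 := ht.1
      rw [hm] at h1
      linarith
    simp only [hKdef, this]
  have key : ∫ t in a..b, K t * ((n : ℝ) * ((n : ℝ) - 1) * t ^ (n - 2)) =
      (b ^ (n + 1) - a ^ (n + 1)) / ((n : ℝ) + 1) - (b - a) * m ^ n := by
    rw [← integral_add_adjacent_intervals hintK1 hintK2, hcong1, hcong2, hI1, hI2]
    have hma : m - a = (b - a) / 2 := by rw [hm]; ring
    have hbm : b - m = (b - a) / 2 := by rw [hm]; ring
    rw [hma, hbm]
    generalize m ^ (n - 1) = P
    generalize m ^ n = Q
    generalize m ^ (n + 1) = R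
    generalize a ^ (n + 1) = A1
    generalize b ^ (n + 1) = B1
    ring
  set J : ℝ := ∫ t in a..b, K t * t ^ (n - 2) with hJ
  have hcJ : ∫ t in a..b, K t * ((n : ℝ) * ((n : ℝ) - 1) * t ^ (n - 2)) =
      ((n : ℝ) * ((n : ℝ) - 1)) * J := by
    rw [hJ, ← integral_const_mul]
    apply integral_congr
    intro t _
    ring
  -- symmetry
  have hKsymm : ∀ t, K (a + b - t) = K t := by
    intro t
    simp only [hKdef]
    rw [show a + b - t - a = b - t by ring, show b - (a + b - t) = t - a by ring, min_comm]
  have hsym : ∫ t in a..b, K t * (a + b - t) ^ (n - 2) = J := by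
    have h1 : (fun t : ℝ => K t * (a + b - t) ^ (n - 2)) =
        fun t : ℝ => (fun x : ℝ => K x * x ^ (n - 2)) (a + b - t) := by
      funext t
      simp only
      rw [hKsymm]
    rw [h1, integral_comp_sub_left (fun x : ℝ => K x * x ^ (n - 2)) (a + b), hJ]
    norm_num
  -- kernel integral
  have hKa : ∫ t in a..b, K t = (b - a) ^ 3 / 24 := by
    have l1 : ∫ t in a..m, K t = ∫ t in a..m, (t - a) ^ 2 / 2 := by
      apply integral_congr
      intro t ht
      rw [uIcc_of_le ham.le] at ht
      have : min (t - a) (b - t) = t - a := by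
        apply min_eq_left
        have h2 := ht.2
        rw [hm] at h2
        linarith
      simp only [hKdef, this]
    have l2 : ∫ t in m..b, K t = ∫ t in m..b, (b - t) ^ 2 / 2 := by
      apply integral_congr
      intro t ht
      rw [uIcc_of_le hmb.le] at ht
      have : min (t - a) (b - t) = b - t := by
        apply min_eq_right
        have h1 := ht.1
        rw [hm] at h1
        linarith
      simp only [hKdef, this]
    have f1 : ∫ t in a..m, (t - a) ^ 2 / 2 = (m - a) ^ 3 / 6 - (a - a) ^ 3 / 6 :=
      integral_eq_sub_of_hasDerivAt (fun t _ => hd_cube_left a t)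
        ((((continuous_id.sub continuous_const).pow 2).div_const 2).intervalIntegrable a m)
    have f2 : ∫ t in m..b, (b - t) ^ 2 / 2 = -((b - b) ^ 3 / 6) - -((b - m) ^ 3 / 6) :=
      integral_eq_sub_of_hasDerivAt (fun t _ => hd_cube_right b t)
        ((((continuous_const.sub continuous_id).pow 2).div_const 2).intervalIntegrable m b)
    rw [← integral_add_adjacent_intervals hintKa hintKb, l1, l2, f1, f2, hm]
    ring
  -- J nonneg and J bound
  have hJ0 : 0 ≤ J := by
    rw [hJ]
    apply integral_nonneg hab.le
    intro t ht
    exact mul_nonneg (hKnn t) (zpow_nonneg (hpos t ht).le _)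
  have hJle : J ≤ (b - a) ^ 3 / 24 * M := by
    have hsum : J + J = ∫ t in a..b, (K t * t ^ (n - 2) + K t * (a + b - t) ^ (n - 2)) := by
      rw [integral_add hintJ hintJ', hsym, hJ]
    have hmono : ∫ t in a..b, (K t * t ^ (n - 2) + K t * (a + b - t) ^ (n - 2)) ≤
        ∫ t in a..b, K t * (2 * M) := by
      apply integral_mono_on hab.le (hintJ.add hintJ')
        ((hKc.mul continuous_const).intervalIntegrable a b)
      intro t ht
      have hpb := pointwise_bound a b ha hab n q hq ht
      calc K t * t ^ (n - 2) + K t * (a + b - t) ^ (n - 2)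
          = K t * (t ^ (n - 2) + (a + b - t) ^ (n - 2)) := by ring
        _ ≤ K t * (2 * M) := mul_le_mul_of_nonneg_left hpb (hKnn t)
    have hconst : ∫ t in a..b, K t * (2 * M) = (b - a) ^ 3 / 24 * (2 * M) := by
      rw [integral_mul_const, hKa]
    nlinarith [hsum, hmono, hconst]
  -- final assembly
  have hfinal : (b ^ (n + 1) - a ^ (n + 1)) / (((n : ℝ) + 1) * (b - a)) - m ^ n =
      (((n : ℝ) * ((n : ℝ) - 1)) * J) / (b - a) := by
    rw [← hcJ, key]
    field_simp
  rw [hfinal, abs_div, abs_of_pos hba, abs_mul, abs_of_nonneg hJ0]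
  have hcast : ((|n * (n - 1)| : ℤ) : ℝ) = |(n : ℝ) * ((n : ℝ) - 1)| := by
    rw [Int.cast_abs]
    push_cast
    ring_nf
  calc |(n : ℝ) * ((n : ℝ) - 1)| * J / (b - a)
      ≤ |(n : ℝ) * ((n : ℝ) - 1)| * ((b - a) ^ 3 / 24 * M) / (b - a) := by
        gcongr
    _ = ((|n * (n - 1)| : ℤ) : ℝ) * ((b - a) ^ 2 / 24) * M := by
        rw [hcast]
        field_simp
end

section
/- Let a, b ∈ ℝ with 0 < a < b, and let q > 1. Then |L^{-1}(a,b) − A^{-1}(a,b)| ≤ ((b−a)²/24) · (2^{(q−1)/q}/(a³·b³)) · [a^{3q} + b^{3q}]^{1/q}, i.e., |(ln b − ln a)/(b−a) − 2/(a+b)| ≤ ((b−a)²/24) · (2^{(q−1)/q}/(a³·b³)) · [a^{3q} + b^{3q}]^{1/q}. -/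
open Real Set

lemma lma_lower (a : ℝ) (ha : 0 < a) (b : ℝ) (hab : a < b) :
    0 ≤ Real.log b - Real.log a - 2 * (b - a) / (a + b) := by
  set f : ℝ → ℝ := fun x => Real.log x - Real.log a - 2 * (x - a) / (a + x) with hf
  have hd : ∀ x : ℝ, 0 < x → HasDerivAt f (x⁻¹ - (2 * (a + x) - 2 * (x - a) * 1) / (a + x) ^ 2) x := by
    intro x hx
    have hax : a + x ≠ 0 := by positivity
    have h1 : HasDerivAt (fun x : ℝ => Real.log x - Real.log a) x⁻¹ x :=
      (Real.hasDerivAt_log hx.ne').sub_const _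
    have h2 : HasDerivAt (fun x : ℝ => 2 * (x - a)) 2 x := by
      simpa using (((hasDerivAt_id x).sub_const a).const_mul 2)
    have h3 : HasDerivAt (fun x : ℝ => a + x) 1 x := by
      simpa using (hasDerivAt_id x).const_add a
    exact h1.sub (h2.div h3 hax)
  have hmono : MonotoneOn f (Ici a) := by
    apply monotoneOn_of_deriv_nonneg (convex_Ici a)
    · exact fun x hx => (hd x (lt_of_lt_of_le ha hx)).continuousAt.continuousWithinAt
    · intro x hx
      rw [interior_Ici] at hx
      exact (hd x (ha.trans hx)).differentiableAt.differentiableWithinAt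
    · intro x hx
      rw [interior_Ici] at hx
      have hx0 : 0 < x := ha.trans hx
      rw [(hd x hx0).deriv]
      have hax : (0:ℝ) < a + x := by linarith
      have key : x⁻¹ - (2 * (a + x) - 2 * (x - a) * 1) / (a + x) ^ 2
          = (x - a) ^ 2 / (x * (a + x) ^ 2) := by
        field_simp
        ring
      rw [key]
      positivity
  have h0 : f a = 0 := by simp [hf]
  have := hmono (self_mem_Ici) (mem_Ici.mpr hab.le) hab.le
  rw [h0] at this
  exact this


lemma lma_upper (a : ℝ) (ha : 0 < a) (b : ℝ) (hab : a < b) :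
    Real.log b - Real.log a - 2 * (b - a) / (a + b)
      ≤ (b - a) ^ 3 * (a ^ 3 + b ^ 3) / (24 * a ^ 3 * b ^ 3) := by
  set f : ℝ → ℝ := fun x =>
    (x - a) ^ 3 * (a ^ 3 + x ^ 3) / (24 * a ^ 3 * x ^ 3)
      - (Real.log x - Real.log a) + 2 * (x - a) / (a + x) with hf
  have hd : ∀ x : ℝ, 0 < x → HasDerivAt f
      ((x - a) ^ 2 * ((x ^ 4 + a ^ 4) * (x * (a + x) ^ 2) - 8 * a ^ 3 * x ^ 4)
        / (8 * a ^ 3 * x ^ 5 * (a + x) ^ 2)) x := by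
    intro x hx
    have hax : a + x ≠ 0 := by positivity
    have hden : (24 * a ^ 3 * x ^ 3 : ℝ) ≠ 0 := by positivity
    have h1n : HasDerivAt (fun x : ℝ => (x - a) ^ 3 * (a ^ 3 + x ^ 3))
        ((3 * (x - a) ^ 2 * 1) * (a ^ 3 + x ^ 3) + (x - a) ^ 3 * (3 * x ^ 2 * 1)) x := by
      exact (((hasDerivAt_id x).sub_const a).pow 3).mul
        (((hasDerivAt_id x).pow 3).const_add (a ^ 3))
    have h1d : HasDerivAt (fun x : ℝ => 24 * a ^ 3 * x ^ 3) (24 * a ^ 3 * (3 * x ^ 2 * 1)) x :=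
      ((hasDerivAt_id x).pow 3).const_mul _
    have h1 := h1n.div h1d hden
    have h2 : HasDerivAt (fun x : ℝ => Real.log x - Real.log a) x⁻¹ x :=
      (Real.hasDerivAt_log hx.ne').sub_const _
    have h3 : HasDerivAt (fun x : ℝ => 2 * (x - a)) 2 x := by
      simpa using (((hasDerivAt_id x).sub_const a).const_mul 2)
    have h4 : HasDerivAt (fun x : ℝ => a + x) 1 x := by
      simpa using (hasDerivAt_id x).const_add a
    have := (h1.sub h2).add (h3.div h4 hax)
    refine this.congr_deriv ?_
    field_simp
    ring
  have hmono : MonotoneOn f (Ici a) := by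
    apply monotoneOn_of_deriv_nonneg (convex_Ici a)
    · exact fun x hx => (hd x (lt_of_lt_of_le ha hx)).continuousAt.continuousWithinAt
    · intro x hx
      rw [interior_Ici] at hx
      exact (hd x (ha.trans hx)).differentiableAt.differentiableWithinAt
    · intro x hx
      rw [interior_Ici] at hx
      have hx0 : 0 < x := ha.trans hx
      rw [(hd x hx0).deriv]
      have hax : (0:ℝ) < a + x := by linarith
      apply div_nonneg _ (by positivity)
      have hnum : 8 * a ^ 3 * x ^ 4 ≤ (x ^ 4 + a ^ 4) * (x * (a + x) ^ 2) := by
        have e1 : 2 * a ^ 2 * x ^ 2 ≤ x ^ 4 + a ^ 4 := by nlinarith [sq_nonneg (x ^ 2 - a ^ 2)]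
        have e2 : 4 * a * x ≤ (a + x) ^ 2 := by nlinarith [sq_nonneg (x - a)]
        have e3 : (2 * a ^ 2 * x ^ 2) * (4 * a * x) ≤ (x ^ 4 + a ^ 4) * (a + x) ^ 2 :=
          mul_le_mul e1 e2 (by positivity) (by positivity)
        have e4 := mul_le_mul_of_nonneg_left e3 hx0.le
        nlinarith [e4]
      nlinarith [sq_nonneg (x - a)]
  have h0 : f a = 0 := by simp [hf]
  have := hmono (self_mem_Ici) (mem_Ici.mpr hab.le) hab.le
  rw [h0] at this
  simp only [hf] at this
  linarith


lemma lma_pm (q : ℝ) (hq : 1 < q) (x y : ℝ) (hx : 0 ≤ x) (hy : 0 ≤ y) :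
    x + y ≤ (2 : ℝ) ^ ((q - 1) / q) * (x ^ q + y ^ q) ^ (1 / q) := by
  have hq0 : (0:ℝ) < q := by linarith
  have h2 : ((1/2 : ℝ) * x + (1/2) * y) ^ q ≤ (1/2) * x ^ q + (1/2) * y ^ q := by
    have hc := (convexOn_rpow hq.le).2 (mem_Ici.mpr hx) (mem_Ici.mpr hy)
      (by norm_num : (0:ℝ) ≤ 1/2) (by norm_num : (0:ℝ) ≤ 1/2) (by norm_num)
    simpa [smul_eq_mul] using hc
  have hbase : (0:ℝ) ≤ (1/2 : ℝ) * x + (1/2) * y := by positivity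
  have h3 := Real.rpow_le_rpow (Real.rpow_nonneg hbase q) h2 (by positivity : (0:ℝ) ≤ 1/q)
  rw [← Real.rpow_mul hbase, mul_one_div, div_self hq0.ne', Real.rpow_one] at h3
  have h4 : ((1/2 : ℝ) * x ^ q + (1/2) * y ^ q) ^ (1/q)
      = (1/2 : ℝ) ^ (1/q) * (x ^ q + y ^ q) ^ (1/q) := by
    rw [← Real.mul_rpow (by norm_num) (by positivity)]
    ring_nf
  rw [h4] at h3
  have h5 : (2:ℝ) * ((1/2 : ℝ) ^ (1/q)) = (2:ℝ) ^ ((q - 1) / q) := by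
    rw [show (q - 1)/q = 1 - 1/q by field_simp, Real.rpow_sub two_pos, Real.rpow_one,
      one_div (2:ℝ), Real.inv_rpow (by norm_num)]
    ring
  calc x + y = 2 * ((1/2 : ℝ) * x + (1/2) * y) := by ring
    _ ≤ 2 * ((1/2 : ℝ) ^ (1/q) * (x ^ q + y ^ q) ^ (1/q)) := by linarith
    _ = (2:ℝ) ^ ((q - 1) / q) * (x ^ q + y ^ q) ^ (1/q) := by rw [← h5]; ring

theorem logarithmic_mean_arithmetic_mean_inverse_estimate
    (a b : ℝ) (ha : 0 < a) (hab : a < b) (q : ℝ) (hq : 1 < q) :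
    |(Real.log b - Real.log a) / (b - a) - 2 / (a + b)| ≤
      (b - a) ^ 2 / 24 * ((2 : ℝ) ^ ((q - 1) / q) / (a ^ 3 * b ^ 3)) *
        (a ^ (3 * q) + b ^ (3 * q)) ^ (1 / q) := by
  have hb : 0 < b := ha.trans hab
  have hba : 0 < b - a := sub_pos.mpr hab
  have hab2 : 0 < a + b := by linarith
  have hL := lma_lower a ha b hab
  have hU := lma_upper a ha b hab
  have hrw : (Real.log b - Real.log a) / (b - a) - 2 / (a + b)
      = (Real.log b - Real.log a - 2 * (b - a) / (a + b)) / (b - a) := by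
    field_simp
    try ring
  rw [hrw, abs_of_nonneg (div_nonneg hL hba.le)]
  have step1 : (Real.log b - Real.log a - 2 * (b - a) / (a + b)) / (b - a)
      ≤ (b - a) ^ 2 * (a ^ 3 + b ^ 3) / (24 * (a ^ 3 * b ^ 3)) := by
    rw [div_le_iff₀ hba]
    calc Real.log b - Real.log a - 2 * (b - a) / (a + b)
        ≤ (b - a) ^ 3 * (a ^ 3 + b ^ 3) / (24 * a ^ 3 * b ^ 3) := hU
      _ = (b - a) ^ 2 * (a ^ 3 + b ^ 3) / (24 * (a ^ 3 * b ^ 3)) * (b - a) := by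
          field_simp; try ring
  have hpa : a ^ (3 * q) = (a ^ 3 : ℝ) ^ q := by
    rw [Real.rpow_mul ha.le, show ((3:ℝ)) = ((3:ℕ):ℝ) by norm_num, Real.rpow_natCast]
  have hpb : b ^ (3 * q) = (b ^ 3 : ℝ) ^ q := by
    rw [Real.rpow_mul hb.le, show ((3:ℝ)) = ((3:ℕ):ℝ) by norm_num, Real.rpow_natCast]
  have hpm := lma_pm q hq (a ^ 3) (b ^ 3) (by positivity) (by positivity)
  calc (Real.log b - Real.log a - 2 * (b - a) / (a + b)) / (b - a)
      ≤ (b - a) ^ 2 * (a ^ 3 + b ^ 3) / (24 * (a ^ 3 * b ^ 3)) := step1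
    _ = (b - a) ^ 2 / (24 * (a ^ 3 * b ^ 3)) * (a ^ 3 + b ^ 3) := by ring
    _ ≤ (b - a) ^ 2 / (24 * (a ^ 3 * b ^ 3)) *
        ((2 : ℝ) ^ ((q - 1) / q) * ((a ^ 3) ^ q + (b ^ 3) ^ q) ^ (1 / q)) := by
        apply mul_le_mul_of_nonneg_left hpm (by positivity)
    _ = (b - a) ^ 2 / 24 * ((2 : ℝ) ^ ((q - 1) / q) / (a ^ 3 * b ^ 3)) *
        (a ^ (3 * q) + b ^ (3 * q)) ^ (1 / q) := by
        rw [hpa, hpb]; ring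
end

section
/- Let a, b ∈ ℝ with 0 < a < b, and let q ≥ 1. Then |L^{-1}(a,b) − A^{-1}(a,b)| ≤ ((b−a)²/24) · (sup{(2/a³)^q, (2/b³)^q})^{1/q}, i.e., |(ln b − ln a)/(b−a) − 2/(a+b)| ≤ ((b−a)²/24) · (sup{(2/a³)^q, (2/b³)^q})^{1/q}. -/
lemma aux_deriv1 (x : ℝ) (hx : 0 < x) :
    HasDerivAt (fun y : ℝ => Real.log y - 2*(y-1)/(y+1)) (x⁻¹ - (2*(x+1) - 2*(x-1)*1)/(x+1)^2) x := by
  have h1 : HasDerivAt (fun y : ℝ => 2*(y-1)) 2 x := by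
    simpa using ((hasDerivAt_id x).sub_const 1).const_mul 2
  have h2 : HasDerivAt (fun y : ℝ => y+1) 1 x := (hasDerivAt_id x).add_const 1
  have hne : x + 1 ≠ 0 := by linarith
  exact (Real.hasDerivAt_log hx.ne').sub (h1.div h2 hne)

lemma aux_low (t : ℝ) (ht : 1 ≤ t) : 2*(t-1)/(t+1) ≤ Real.log t := by
  have key : MonotoneOn (fun x : ℝ => Real.log x - 2*(x-1)/(x+1)) (Set.Ici 1) := by
    have hdiff : ∀ x ∈ Set.Ici (1:ℝ), HasDerivAt (fun y : ℝ => Real.log y - 2*(y-1)/(y+1))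
        (x⁻¹ - (2*(x+1) - 2*(x-1)*1)/(x+1)^2) x := fun x hx =>
      aux_deriv1 x (lt_of_lt_of_le one_pos hx)
    apply monotoneOn_of_deriv_nonneg (convex_Ici 1)
    · exact fun x hx => (hdiff x hx).continuousAt.continuousWithinAt
    · intro x hx
      rw [interior_Ici] at hx
      exact (hdiff x (Set.mem_Ici.2 (le_of_lt hx))).differentiableAt.differentiableWithinAt
    · intro x hx
      rw [interior_Ici] at hx
      have hx0 : (0:ℝ) < x := lt_trans one_pos hx
      rw [(hdiff x (Set.mem_Ici.2 (le_of_lt hx))).deriv]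
      have h2 : (0:ℝ) < (x+1)^2 := by positivity
      rw [sub_nonneg, div_le_iff₀ h2, inv_eq_one_div, div_mul_eq_mul_div, le_div_iff₀ hx0]
      nlinarith [sq_nonneg (x-1)]
  have := key (Set.mem_Ici.2 le_rfl) (Set.mem_Ici.2 ht) ht
  simpa using this

lemma aux_high (t : ℝ) (ht : 1 ≤ t) : Real.log t ≤ 2*(t-1)/(t+1) + (t-1)^3/12 := by
  have key : MonotoneOn (fun x : ℝ => 2*(x-1)/(x+1) + (x-1)^3/12 - Real.log x) (Set.Ici 1) := by
    have hdiff : ∀ x ∈ Set.Ici (1:ℝ), HasDerivAt (fun y : ℝ => 2*(y-1)/(y+1) + (y-1)^3/12 - Real.log y)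
        ((2*(x+1) - 2*(x-1)*1)/(x+1)^2 + 3*(x-1)^2/12 - x⁻¹) x := by
      intro x hx
      have hx0 : (0:ℝ) < x := lt_of_lt_of_le one_pos hx
      have h1 : HasDerivAt (fun y : ℝ => 2*(y-1)) 2 x := by
        simpa using ((hasDerivAt_id x).sub_const 1).const_mul 2
      have h2 : HasDerivAt (fun y : ℝ => y+1) 1 x := (hasDerivAt_id x).add_const 1
      have hne : x + 1 ≠ 0 := by linarith
      have h3 : HasDerivAt (fun y : ℝ => (y-1)^3/12) (3*(x-1)^2/12) x := by
        have : HasDerivAt (fun y : ℝ => (y-1)^3) (3*(x-1)^2) x := by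
          have := ((hasDerivAt_id x).sub_const 1).fun_pow 3
          simpa [mul_comm] using this
        simpa using this.div_const 12
      exact ((h1.div h2 hne).add h3).sub (Real.hasDerivAt_log hx0.ne')
    apply monotoneOn_of_deriv_nonneg (convex_Ici 1)
    · exact fun x hx => (hdiff x hx).continuousAt.continuousWithinAt
    · intro x hx
      rw [interior_Ici] at hx
      exact (hdiff x (Set.mem_Ici.2 (le_of_lt hx))).differentiableAt.differentiableWithinAt
    · intro x hx
      rw [interior_Ici, Set.mem_Ioi] at hx
      have hx0 : (0:ℝ) < x := lt_trans one_pos hx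
      have hx1 : (0:ℝ) ≤ x - 1 := by linarith
      rw [(hdiff x (Set.mem_Ici.2 (le_of_lt hx))).deriv]
      have h2 : (0:ℝ) < (x+1)^2 := by positivity
      have hcube : 0 ≤ (x-1)^3 * (x^2 + 3*x + 4) :=
        mul_nonneg (pow_nonneg hx1 3) (by nlinarith)
      rw [sub_nonneg, inv_eq_one_div, div_add_div _ _ (ne_of_gt h2) (by norm_num : (12:ℝ) ≠ 0),
        div_le_div_iff₀ hx0 (by positivity)]
      nlinarith [hcube, sq_nonneg (x-1), h2]
  have := key (Set.mem_Ici.2 le_rfl) (Set.mem_Ici.2 ht) ht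
  simp only [Real.log_one] at this
  linarith [this]

theorem logarithmic_mean_arithmetic_mean_inverse_quasiconvex_estimate
    (a b : ℝ) (ha : 0 < a) (hab : a < b) (q : ℝ) (hq : 1 ≤ q) :
    |(Real.log b - Real.log a) / (b - a) - 2 / (a + b)| ≤
      (b - a) ^ 2 / 24 *
        (max ((2 / a ^ 3) ^ q) ((2 / b ^ 3) ^ q)) ^ (1 / q) := by
  have hb : 0 < b := lt_trans ha hab
  have hba : 0 < b - a := by linarith
  have hab' : 0 < a + b := by linarith
  have hq0 : 0 < q := lt_of_lt_of_le one_pos hq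
  have ht1 : 1 ≤ b / a := (one_le_div ha).2 hab.le
  have hlog : Real.log (b/a) = Real.log b - Real.log a := Real.log_div hb.ne' ha.ne'
  have e1 : 2*(b/a - 1)/(b/a + 1) = 2*(b-a)/(a+b) := by
    field_simp
    ring
  have e2 : (b/a - 1)^3/12 = (b-a)^3/(12*a^3) := by
    field_simp
  have hlow := aux_low (b/a) ht1
  have hhigh := aux_high (b/a) ht1
  rw [hlog, e1] at hlow
  rw [hlog, e1, e2] at hhigh
  -- the difference D
  have hDlow : 0 ≤ (Real.log b - Real.log a) / (b - a) - 2 / (a + b) := by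
    rw [sub_nonneg, div_le_div_iff₀ hab' hba]
    rw [div_le_iff₀ hab'] at hlow
    linarith [hlow]
  have hDhigh : (Real.log b - Real.log a) / (b - a) - 2 / (a + b) ≤ (b-a)^2/(12*a^3) := by
    rw [sub_le_iff_le_add, div_le_iff₀ hba]
    have e4 : ((b-a)^2/(12*a^3) + 2/(a+b))*(b-a) = 2*(b-a)/(a+b) + (b-a)^3/(12*a^3) := by
      field_simp; ring
    rw [e4]
    exact hhigh
  -- simplify the RHS
  have hmb : (2:ℝ)/b^3 ≤ 2/a^3 := by
    apply div_le_div_of_nonneg_left (by norm_num) (by positivity)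
    exact pow_le_pow_left₀ ha.le hab.le 3
  have hmax : max ((2/a^3) ^ q) ((2/b^3) ^ q) = (2/a^3) ^ q :=
    max_eq_left (Real.rpow_le_rpow (by positivity) hmb hq0.le)
  have hpow : ((2/a^3) ^ q) ^ (1/q) = 2/a^3 := by
    rw [← Real.rpow_mul (by positivity), mul_one_div_cancel (ne_of_gt hq0), Real.rpow_one]
  rw [hmax, hpow]
  rw [abs_of_nonneg hDlow]
  have : (b - a) ^ 2 / 24 * (2 / a ^ 3) = (b-a)^2/(12*a^3) := by
    field_simp; ring
  rw [this]
  exact hDhigh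
end

section
/- Let a, b ∈ ℝ with 0 < a < b, let n ∈ ℤ with |n(n−1)| ≥ 3, and let q > 1 and p > 1 with 1/p + 1/q = 1. Then |L_n^n(a,b) − A^n(a,b)| ≤ |n(n−1)| · ((b−a)²/(8·(2p+1)^{1/p})) · (sup{a^{q(n−2)}, b^{q(n−2)}})^{1/q}, i.e., |(b^{n+1} − a^{n+1})/((n+1)(b−a)) − ((a+b)/2)^n| ≤ |n(n−1)| · ((b−a)²/(8·(2p+1)^{1/p})) · (sup{a^{q(n−2)}, b^{q(n−2)}})^{1/q}. -/
open intervalIntegral MeasureTheory Set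
open scoped Interval

theorem my_norm_integral_le_of_norm_le {f g : ℝ → ℝ} {a b : ℝ}
    (h : ∀ᵐ t ∂(volume.restrict (Ι a b)), ‖f t‖ ≤ g t) (hbound : IntervalIntegrable g volume a b) :
    ‖∫ t in a..b, f t‖ ≤ |∫ t in a..b, g t| := by
  simp_rw [norm_intervalIntegral_eq, abs_intervalIntegral_eq,
    abs_eq_self.mpr (integral_nonneg_of_ae <| h.mono fun _t ht => (norm_nonneg _).trans ht)]
  exact MeasureTheory.norm_integral_le_of_norm_le hbound.def' h

lemma my_taylor_bound {f f' f'' : ℝ → ℝ} {a b K : ℝ}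
    (hf : ∀ x ∈ Icc a b, HasDerivAt f (f' x) x)
    (hf' : ∀ x ∈ Icc a b, HasDerivAt f' (f'' x) x)
    (hf''c : ContinuousOn f'' (Icc a b))
    (hK : ∀ x ∈ Icc a b, |f'' x| ≤ K)
    {m x : ℝ} (hm : m ∈ Icc a b) (hx : x ∈ Icc a b) :
    |f x - f m - f' m * (x - m)| ≤ K * (x - m) ^ 2 / 2 := by
  have hsub : uIcc m x ⊆ Icc a b := uIcc_subset_Icc hm hx
  have hg : ∀ u ∈ uIcc m x, HasDerivAt (fun u => f u + f' u * (x - u)) (f'' u * (x - u)) u := by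
    intro u hu
    have h1 := (hf u (hsub hu)).add (((hf' u (hsub hu)).mul ((hasDerivAt_id u).const_sub x)))
    convert h1 using 1
    all_goals first | rfl | simp [id]
  have hint : IntervalIntegrable (fun u => f'' u * (x - u)) volume m x :=
    ((hf''c.mono hsub).mul (by fun_prop)).intervalIntegrable
  have hftc : (∫ u in m..x, f'' u * (x - u)) = f x - f m - f' m * (x - m) := by
    rw [integral_eq_sub_of_hasDerivAt hg hint]
    ring
  rw [← hftc]
  rcases le_total m x with h | h
  · have hb : ∀ᵐ t ∂(volume.restrict (Ι m x)), ‖f'' t * (x - t)‖ ≤ K * (x - t) := by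
      filter_upwards [MeasureTheory.ae_restrict_mem measurableSet_uIoc] with t ht
      rw [uIoc_of_le h] at ht
      have h1 : |f'' t| ≤ K := hK t ⟨hm.1.trans ht.1.le, ht.2.trans hx.2⟩
      have h2 : 0 ≤ x - t := by linarith [ht.2]
      calc ‖f'' t * (x - t)‖ = |f'' t| * (x - t) := by
            rw [norm_mul]; simp [abs_of_nonneg h2, Real.norm_eq_abs]
        _ ≤ K * (x - t) := by nlinarith
    have := my_norm_integral_le_of_norm_le hb
      ((continuous_const.mul (by fun_prop)).intervalIntegrable m x)
    have hcomp : (∫ t in m..x, K * (x - t)) = K * (x - m) ^ 2 / 2 := by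
      rw [intervalIntegral.integral_const_mul]
      rw [intervalIntegral.integral_sub (intervalIntegrable_const) (intervalIntegrable_id)]
      simp [integral_id]
      ring
    rw [hcomp] at this
    calc |∫ u in m..x, f'' u * (x - u)| ≤ |K * (x - m) ^ 2 / 2| := this
      _ = K * (x - m) ^ 2 / 2 := by
          rw [abs_of_nonneg]
          have hK0 : 0 ≤ K := (abs_nonneg _).trans (hK m hm)
          positivity
  · have hb : ∀ᵐ t ∂(volume.restrict (Ι m x)), ‖f'' t * (x - t)‖ ≤ K * (t - x) := by
      filter_upwards [MeasureTheory.ae_restrict_mem measurableSet_uIoc] with t ht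
      rw [uIoc_of_ge h] at ht
      have h1 : |f'' t| ≤ K := hK t ⟨hx.1.trans ht.1.le, ht.2.trans hm.2⟩
      have h2 : 0 ≤ t - x := by linarith [ht.1]
      calc ‖f'' t * (x - t)‖ = |f'' t| * (t - x) := by
            rw [norm_mul, Real.norm_eq_abs, Real.norm_eq_abs, abs_sub_comm, abs_of_nonneg h2]
        _ ≤ K * (t - x) := by nlinarith
    have := my_norm_integral_le_of_norm_le hb
      ((continuous_const.mul (by fun_prop)).intervalIntegrable m x)
    have hcomp : (∫ t in m..x, K * (t - x)) = -(K * (x - m) ^ 2 / 2) := by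
      rw [intervalIntegral.integral_const_mul]
      rw [intervalIntegral.integral_sub (intervalIntegrable_id) (intervalIntegrable_const)]
      simp [integral_id]
      ring
    rw [hcomp, abs_neg] at this
    calc |∫ u in m..x, f'' u * (x - u)| ≤ |K * (x - m) ^ 2 / 2| := this
      _ = K * (x - m) ^ 2 / 2 := by
          rw [abs_of_nonneg]
          have hK0 : 0 ≤ K := (abs_nonneg _).trans (hK m hm)
          positivity

lemma my_midpoint_est {f f' f'' : ℝ → ℝ} {a b K : ℝ} (hab : a < b)
    (hf : ∀ x ∈ Icc a b, HasDerivAt f (f' x) x)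
    (hf' : ∀ x ∈ Icc a b, HasDerivAt f' (f'' x) x)
    (hf''c : ContinuousOn f'' (Icc a b))
    (hK : ∀ x ∈ Icc a b, |f'' x| ≤ K) :
    |(∫ x in a..b, f x) - (b - a) * f ((a + b) / 2)| ≤ K * (b - a) ^ 3 / 24 := by
  set m := (a + b) / 2 with hmdef
  have hm : m ∈ Icc a b := by constructor <;> (simp only [hmdef]; linarith)
  have hfc : ContinuousOn f (Icc a b) := fun x hx => (hf x hx).continuousAt.continuousWithinAt
  have hRint : IntervalIntegrable (fun x => f x - f m - f' m * (x - m)) volume a b := by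
    apply ContinuousOn.intervalIntegrable
    rw [uIcc_of_le hab.le]
    exact (hfc.sub continuousOn_const).sub (continuousOn_const.mul (by fun_prop))
  have hfint : IntervalIntegrable f volume a b := by
    apply ContinuousOn.intervalIntegrable; rwa [uIcc_of_le hab.le]
  have hlin : (∫ x in a..b, f' m * (x - m)) = 0 := by
    rw [intervalIntegral.integral_const_mul,
      intervalIntegral.integral_sub intervalIntegrable_id intervalIntegrable_const]
    simp only [integral_id, intervalIntegral.integral_const, smul_eq_mul]
    have : (b ^ 2 - a ^ 2) / 2 - (b - a) * m = 0 := by rw [hmdef]; ring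
    rw [this, mul_zero]
  have hsplit : (∫ x in a..b, f x - f m - f' m * (x - m))
      = (∫ x in a..b, f x) - (b - a) * f m := by
    rw [intervalIntegral.integral_sub (hfint.sub intervalIntegrable_const)
      ((by fun_prop : ContinuousOn (fun x : ℝ => x - m) (uIcc a b)).intervalIntegrable.const_mul (f' m)),
      intervalIntegral.integral_sub hfint intervalIntegrable_const, hlin]
    simp [mul_comm]
  rw [← hsplit]
  have hb : ∀ᵐ t ∂(volume.restrict (Ι a b)), ‖f t - f m - f' m * (t - m)‖ ≤ K * (t - m) ^ 2 / 2 := by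
    filter_upwards [MeasureTheory.ae_restrict_mem measurableSet_uIoc] with t ht
    rw [uIoc_of_le hab.le] at ht
    exact my_taylor_bound hf hf' hf''c hK hm ⟨ht.1.le, ht.2⟩
  have hKint : IntervalIntegrable (fun t => K * (t - m) ^ 2 / 2) volume a b :=
    (Continuous.intervalIntegrable (by continuity) a b)
  have := my_norm_integral_le_of_norm_le hb hKint
  have hcomp : (∫ t in a..b, K * (t - m) ^ 2 / 2) = K * (b - a) ^ 3 / 24 := by
    have h1 : (∫ t in a..b, K * (t - m) ^ 2 / 2) = K / 2 * ∫ t in a..b, (t - m) ^ 2 := by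
      rw [← intervalIntegral.integral_const_mul]
      congr 1; ext t; ring
    have h2 : (∫ t in a..b, (t - m) ^ 2) = ∫ t in a - m..b - m, t ^ 2 :=
      intervalIntegral.integral_comp_sub_right (fun t => t ^ 2) m
    rw [h1, h2, integral_pow]
    have ha' : a - m = -((b - a) / 2) := by rw [hmdef]; ring
    have hb' : b - m = (b - a) / 2 := by rw [hmdef]; ring
    rw [ha', hb']
    ring
  rw [hcomp] at this
  have hK0 : 0 ≤ K := (abs_nonneg _).trans (hK m hm)
  calc |(∫ x in a..b, f x - f m - f' m * (x - m))| ≤ |K * (b - a) ^ 3 / 24| := this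
    _ = K * (b - a) ^ 3 / 24 := by
        rw [abs_of_nonneg]
        exact div_nonneg (mul_nonneg hK0 (pow_nonneg (by linarith) 3)) (by norm_num)

theorem p_logarithmic_mean_arithmetic_mean_quasiconvex_holder_estimate
    (a b : ℝ) (ha : 0 < a) (hab : a < b) (n : ℤ) (hn : 3 ≤ |n * (n - 1)|)
    (p q : ℝ) (hp : 1 < p) (hq : 1 < q) (hpq : 1 / p + 1 / q = 1) :
    |(b ^ (n + 1) - a ^ (n + 1)) / ((n + 1) * (b - a)) - ((a + b) / 2) ^ n| ≤
      (|n * (n - 1)| : ℤ) * ((b - a) ^ 2 / (8 * (2 * p + 1) ^ (1 / p))) *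
        (max (a ^ (q * ((n : ℝ) - 2))) (b ^ (q * ((n : ℝ) - 2)))) ^ (1 / q) := by
  have hb0 : 0 < b := ha.trans hab
  have hba : 0 < b - a := sub_pos.mpr hab
  have hp0 : 0 < p := lt_trans one_pos hp
  have hq0 : 0 < q := lt_trans one_pos hq
  have hn1 : n ≠ -1 := by rintro rfl; norm_num at hn
  have hxpos : ∀ x ∈ Icc a b, (0 : ℝ) < x := fun x hx => lt_of_lt_of_le ha hx.1
  set c : ℝ := (n : ℝ) - 2 with hc
  set C : ℝ := |(n : ℝ) * ((n : ℝ) - 1)| with hC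
  set Mx : ℝ := max (a ^ c) (b ^ c) with hMx
  set K : ℝ := C * Mx with hKdef
  -- derivative chain for f x = x ^ n
  have hf : ∀ x ∈ Icc a b, HasDerivAt (fun x : ℝ => x ^ n) ((n : ℝ) * x ^ (n - 1)) x :=
    fun x hx => hasDerivAt_zpow n x (Or.inl (hxpos x hx).ne')
  have hf' : ∀ x ∈ Icc a b, HasDerivAt (fun x : ℝ => (n : ℝ) * x ^ (n - 1))
      (((n : ℝ) * ((n : ℝ) - 1)) * x ^ (n - 2)) x := by
    intro x hx
    have h := (hasDerivAt_zpow (n - 1) x (Or.inl (hxpos x hx).ne')).const_mul (n : ℝ)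
    convert h using 1
    any_goals rfl
    have h2 : n - 1 - 1 = n - 2 := by ring
    rw [h2]
    push_cast
    ring
  have hf''c : ContinuousOn (fun x : ℝ => ((n : ℝ) * ((n : ℝ) - 1)) * x ^ (n - 2)) (Icc a b) := by
    apply ContinuousOn.mul continuousOn_const
    intro x hx
    exact ((continuousAt_zpow₀ x (n - 2) (Or.inl (hxpos x hx).ne'))).continuousWithinAt
  -- bound on the second derivative
  have hK : ∀ x ∈ Icc a b, |((n : ℝ) * ((n : ℝ) - 1)) * x ^ (n - 2)| ≤ K := by
    intro x hx
    have hx0 := hxpos x hx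
    rw [abs_mul, hKdef]
    apply mul_le_mul_of_nonneg_left _ (abs_nonneg _)
    rw [abs_of_pos (zpow_pos hx0 _)]
    have hxr : x ^ (n - 2) = x ^ c := by
      rw [hc, show (n : ℝ) - 2 = ((n - 2 : ℤ) : ℝ) by push_cast; ring, Real.rpow_intCast]
    rw [hxr]
    rcases le_or_gt 0 c with h | h
    · exact le_max_of_le_right (Real.rpow_le_rpow hx0.le hx.2 h)
    · exact le_max_of_le_left (Real.rpow_le_rpow_of_nonpos ha hx.1 h.le)
  have hmain := my_midpoint_est hab hf hf' hf''c hK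
  -- rewrite the integral
  have hzero : (0 : ℝ) ∉ uIcc a b := by
    rw [uIcc_of_le hab.le]; intro h; exact absurd h.1 (not_le.mpr ha)
  have hint : (∫ x in a..b, x ^ n) = (b ^ (n + 1) - a ^ (n + 1)) / ((n : ℝ) + 1) :=
    integral_zpow (Or.inr ⟨hn1, hzero⟩)
  rw [hint] at hmain
  have hn1' : (n : ℝ) + 1 ≠ 0 := by
    intro h
    apply hn1
    have : (n : ℝ) = ((-1 : ℤ) : ℝ) := by push_cast; linarith
    exact_mod_cast this
  have hLHS : (b ^ (n + 1) - a ^ (n + 1)) / (((n : ℝ) + 1) * (b - a)) - ((a + b) / 2) ^ n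
      = ((b ^ (n + 1) - a ^ (n + 1)) / ((n : ℝ) + 1) - (b - a) * ((a + b) / 2) ^ n) / (b - a) := by
    field_simp
  rw [hLHS, abs_div, abs_of_pos hba, div_le_iff₀ hba]
  calc |(b ^ (n + 1) - a ^ (n + 1)) / ((n : ℝ) + 1) - (b - a) * ((a + b) / 2) ^ n|
      ≤ K * (b - a) ^ 3 / 24 := hmain
    _ ≤ ((|n * (n - 1)| : ℤ) * ((b - a) ^ 2 / (8 * (2 * p + 1) ^ (1 / p))) *
        (max (a ^ (q * c)) (b ^ (q * c))) ^ (1 / q)) * (b - a) := by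
        -- constants comparison
        set T : ℝ := (2 * p + 1) ^ (1 / p) with hT
        set D : ℝ := (max (a ^ (q * c)) (b ^ (q * c))) ^ (1 / q) with hD
        have hT0 : 0 < T := Real.rpow_pos_of_pos (by linarith) _
        have hT3 : T ≤ 3 := by
          have hber : 2 * p + 1 ≤ 3 ^ p := by
            have := one_add_mul_self_le_rpow_one_add (by norm_num : (-1 : ℝ) ≤ 2) hp.le
            norm_num at this
            linarith
          calc T ≤ ((3 : ℝ) ^ p) ^ (1 / p) :=
                Real.rpow_le_rpow (by linarith) hber (by positivity)
            _ = 3 := by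
                rw [← Real.rpow_mul (by norm_num), mul_one_div_cancel hp0.ne', Real.rpow_one]
        have hMxD : Mx ≤ D := by
          have key : ∀ x : ℝ, 0 < x → x ^ c = (x ^ (q * c)) ^ (1 / q) := by
            intro x hx0
            rw [← Real.rpow_mul hx0.le]
            congr 1
            field_simp
          apply max_le
          · rw [key a ha, hD]
            exact Real.rpow_le_rpow (Real.rpow_nonneg ha.le _) (le_max_left _ _) (by positivity)
          · rw [key b hb0, hD]
            exact Real.rpow_le_rpow (Real.rpow_nonneg hb0.le _) (le_max_right _ _) (by positivity)
        have hMx0 : 0 ≤ Mx := le_trans (Real.rpow_nonneg ha.le _) (le_max_left _ _)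
        have hD0 : 0 ≤ D := hMx0.trans hMxD
        have hCcast : ((|n * (n - 1)| : ℤ) : ℝ) = C := by
          rw [hC, Int.cast_abs]
          push_cast
          ring_nf
        rw [hCcast]
        have hfrac : Mx / 24 ≤ D / (8 * T) := by
          calc Mx / 24 ≤ D / 24 := by gcongr
            _ ≤ D / (8 * T) := by
                apply div_le_div_of_nonneg_left hD0 (by positivity) (by linarith)
        have hC0 : 0 ≤ C := abs_nonneg _
        calc K * (b - a) ^ 3 / 24 = (C * (b - a) ^ 2 * (b - a)) * (Mx / 24) := by
              rw [hKdef]; ring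
          _ ≤ (C * (b - a) ^ 2 * (b - a)) * (D / (8 * T)) := by
              apply mul_le_mul_of_nonneg_left hfrac (by positivity)
          _ = C * ((b - a) ^ 2 / (8 * T)) * D * (b - a) := by ring
end

section
/- Let f : I° ⊆ ℝ → ℝ be a differentiable mapping on I°, the interior of an interval I, with a, b ∈ I°, a < b, and f' Lebesgue integrable on [a,b]. Then (1/(b−a)) ∫_a^b f(x) dx − f((a+b)/2) = (b−a) · [∫_0^{1/2} t·f'(t·a + (1−t)·b) dt + ∫_{1/2}^1 (t−1)·f'(t·a + (1−t)·b) dt]. -/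
open MeasureTheory intervalIntegral

theorem hermite_hadamard_first_deriv_identity
    (I : Set ℝ) (hI : I.OrdConnected) (f f' : ℝ → ℝ) (a b : ℝ)
    (ha : a ∈ interior I) (hb : b ∈ interior I) (hab : a < b)
    (hderiv : ∀ x ∈ interior I, HasDerivAt f (f' x) x)
    (hint : IntervalIntegrable f' volume a b) :
    (1 / (b - a)) * (∫ x in a..b, f x) - f ((a + b) / 2) =
      (b - a) *
        ((∫ t in (0:ℝ)..(1 / 2), t * f' (t * a + (1 - t) * b)) +
          ∫ t in (1 / 2 : ℝ)..1, (t - 1) * f' (t * a + (1 - t) * b)) := by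
  have hba : b - a ≠ 0 := sub_ne_zero.mpr hab.ne'
  have hab' : a - b ≠ 0 := sub_ne_zero.mpr hab.ne
  set g : ℝ → ℝ := fun t => f ((a - b) * t + b) with hgdef
  have hsub : Set.uIcc a b ⊆ interior I := hI.interior.uIcc_subset ha hb
  have hmem : ∀ t ∈ Set.uIcc (0:ℝ) 1, (a - b) * t + b ∈ interior I := by
    intro t ht
    rw [Set.uIcc_of_le (by norm_num : (0:ℝ) ≤ 1)] at ht
    apply hsub
    rw [Set.uIcc_of_le hab.le]
    constructor <;> nlinarith [ht.1, ht.2]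
  have hgderiv : ∀ t ∈ Set.uIcc (0:ℝ) 1,
      HasDerivAt g ((a - b) * f' ((a - b) * t + b)) t := by
    intro t ht
    have h2 := (hderiv _ (hmem t ht)).comp t
      (((hasDerivAt_id t).const_mul (a - b)).add_const b)
    simp only [Function.comp, id_eq, mul_one] at h2
    rw [mul_comm]
    exact h2
  have hsub1 : Set.uIcc (0:ℝ) (1/2) ⊆ Set.uIcc (0:ℝ) 1 := by
    rw [Set.uIcc_of_le (by norm_num : (0:ℝ) ≤ 1/2),
      Set.uIcc_of_le (by norm_num : (0:ℝ) ≤ 1)]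
    exact Set.Icc_subset_Icc le_rfl (by norm_num)
  have hsub2 : Set.uIcc (1/2:ℝ) 1 ⊆ Set.uIcc (0:ℝ) 1 := by
    rw [Set.uIcc_of_le (by norm_num : (1/2:ℝ) ≤ 1),
      Set.uIcc_of_le (by norm_num : (0:ℝ) ≤ 1)]
    exact Set.Icc_subset_Icc (by norm_num) le_rfl
  have hint' : IntervalIntegrable (fun t => f' ((a - b) * t + b)) volume 0 1 := by
    have h1 : IntervalIntegrable (fun x => f' (x + b)) volume (a - b) 0 := by
      simpa using hint.comp_add_right b
    have h2 := h1.comp_mul_left (c := a - b)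
    simpa [div_self hab'] using h2.symm
  have hgc : ContinuousOn g (Set.uIcc (0:ℝ) 1) :=
    fun x hx => (hgderiv x hx).continuousAt.continuousWithinAt
  have hgint1 : IntervalIntegrable g volume 0 (1/2) :=
    (hgc.mono hsub1).intervalIntegrable
  have hgint2 : IntervalIntegrable g volume (1/2) 1 :=
    (hgc.mono hsub2).intervalIntegrable
  -- integration by parts on [0, 1/2]
  have I1 : ∫ t in (0:ℝ)..(1/2), t * ((a - b) * f' ((a - b) * t + b)) =
      (1/2) * g (1/2) - 0 * g 0 - ∫ t in (0:ℝ)..(1/2), 1 * g t :=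
    integral_mul_deriv_eq_deriv_mul
      (fun x _ => hasDerivAt_id x)
      (fun x hx => hgderiv x (hsub1 hx))
      intervalIntegrable_const
      ((hint'.mono_set hsub1).const_mul (a - b))
  -- integration by parts on [1/2, 1]
  have I2 : ∫ t in (1/2:ℝ)..1, (t - 1) * ((a - b) * f' ((a - b) * t + b)) =
      (1 - 1) * g 1 - (1/2 - 1) * g (1/2) - ∫ t in (1/2:ℝ)..1, 1 * g t :=
    integral_mul_deriv_eq_deriv_mul
      (fun x _ => (hasDerivAt_id x).sub_const 1)
      (fun x hx => hgderiv x (hsub2 hx))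
      intervalIntegrable_const
      ((hint'.mono_set hsub2).const_mul (a - b))
  have key1 : (a - b) * ∫ t in (0:ℝ)..(1/2), t * f' ((a - b) * t + b) =
      (1/2) * g (1/2) - ∫ t in (0:ℝ)..(1/2), g t := by
    rw [← intervalIntegral.integral_const_mul]
    simp only [one_mul, zero_mul, sub_zero] at I1 ⊢
    rw [← I1]
    congr 1
    ext t
    ring
  have key2 : (a - b) * ∫ t in (1/2:ℝ)..1, (t - 1) * f' ((a - b) * t + b) =
      (1/2) * g (1/2) - ∫ t in (1/2:ℝ)..1, g t := by
    rw [← intervalIntegral.integral_const_mul]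
    simp only [one_mul] at I2 ⊢
    have : ∫ t in (1/2:ℝ)..1, (a - b) * ((t - 1) * f' ((a - b) * t + b)) =
        ∫ t in (1/2:ℝ)..1, (t - 1) * ((a - b) * f' ((a - b) * t + b)) := by
      congr 1; ext t; ring
    rw [this, I2]
    ring
  -- substitution
  have hsubst : ∫ t in (0:ℝ)..1, g t = (1 / (b - a)) * ∫ x in a..b, f x := by
    have h := intervalIntegral.integral_comp_mul_add f hab' b
      (a := (0:ℝ)) (b := (1:ℝ))
    simp only [mul_zero, zero_add, mul_one, smul_eq_mul] at h
    rw [show a - b + b = a from by ring] at h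
    simp only [hgdef]
    rw [h, integral_symm b a]
    field_simp
    ring
  have htotal : (∫ t in (0:ℝ)..(1/2), g t) + ∫ t in (1/2:ℝ)..1, g t =
      ∫ t in (0:ℝ)..1, g t :=
    integral_add_adjacent_intervals hgint1 hgint2
  have hhalf : g (1/2) = f ((a + b) / 2) := by
    rw [hgdef]; norm_num; ring_nf
  have hrw : ∀ t : ℝ, t * a + (1 - t) * b = (a - b) * t + b := fun t => by ring
  simp only [hrw]
  have hsum : (a - b) *
      ((∫ t in (0:ℝ)..(1/2), t * f' ((a - b) * t + b)) +
        ∫ t in (1/2:ℝ)..1, (t - 1) * f' ((a - b) * t + b)) =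
      g (1/2) - ∫ t in (0:ℝ)..1, g t := by
    rw [mul_add, key1, key2, ← htotal]; ring
  have hBA : (b - a) *
      ((∫ t in (0:ℝ)..(1/2), t * f' ((a - b) * t + b)) +
        ∫ t in (1/2:ℝ)..1, (t - 1) * f' ((a - b) * t + b)) =
      (∫ t in (0:ℝ)..1, g t) - g (1/2) := by
    have : (b - a) = -(a - b) := by ring
    rw [this, neg_mul, hsum]; ring
  rw [hBA, hsubst, hhalf]
end
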